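/- arXiv:0909.3491 — 13 statements merged into one kernel-verified Lean document; each statement's English description precedes it below -/
import Mathlib

section
/- Let X be a Banach space, Y a subspace, C a collection of bounded operators on X, and G a finite-dimensional subspace of minimal dimension with TY ⊆ Y + G for all T ∈ C. If P : Y ⊕ G → G is the projection along Y, then the linear span of the union over T ∈ C of PT(Y) equals G. -/
theorem span_union_proj_images_eq_min_error
    {X : Type*} [NormedAddCommGroup X] [NormedSpace ℂ X] [CompleteSpace X]
    (Y : Submodule ℂ X) (hYc : IsClosed (Y : Set X))
    (C : Set (X →L[ℂ] X)) (G : Submodule ℂ X) [FiniteDimensional ℂ G]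
    (hG : ∀ T ∈ C, Y.map (T : X →ₗ[ℂ] X) ≤ Y ⊔ G)
    (hmin : ∀ F : Submodule ℂ X, FiniteDimensional ℂ F →
      (∀ T ∈ C, Y.map (T : X →ₗ[ℂ] X) ≤ Y ⊔ F) → Module.finrank ℂ G ≤ Module.finrank ℂ F)
    (P : X →ₗ[ℂ] X) (hPY : ∀ y ∈ Y, P y = 0) (hPG : ∀ g ∈ G, P g = g) :
    Submodule.span ℂ (⋃ T ∈ C, P '' (T '' (Y : Set X))) = G := by
  set S := Submodule.span ℂ (⋃ T ∈ C, P '' (T '' (Y : Set X))) with hS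
  -- First: S ≤ G
  have hSG : S ≤ G := by
    rw [hS, Submodule.span_le]
    rintro x hx
    simp only [Set.mem_iUnion] at hx
    obtain ⟨T, hT, hx⟩ := hx
    obtain ⟨z, ⟨y, hy, rfl⟩, rfl⟩ := hx
    have hz : T y ∈ Y ⊔ G := hG T hT (Submodule.mem_map_of_mem hy)
    obtain ⟨a, ha, b, hb, hab⟩ := Submodule.mem_sup.mp hz
    have : P (T y) = b := by
      rw [← hab, map_add, hPY a ha, hPG b hb, zero_add]
    rw [this]; exact hb
  haveI : FiniteDimensional ℂ S := Submodule.finiteDimensional_of_le hSG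
  -- TY ≤ Y ⊔ S for all T ∈ C
  have hmap : ∀ T ∈ C, Y.map (T : X →ₗ[ℂ] X) ≤ Y ⊔ S := by
    intro T hT x hx
    obtain ⟨y, hy, rfl⟩ := hx
    have hz : (T : X →ₗ[ℂ] X) y ∈ Y ⊔ G := hG T hT (Submodule.mem_map_of_mem hy)
    obtain ⟨a, ha, b, hb, hab⟩ := Submodule.mem_sup.mp hz
    have hPb : P ((T : X →ₗ[ℂ] X) y) = b := by
      rw [← hab, map_add, hPY a ha, hPG b hb, zero_add]
    have hPS : P ((T : X →ₗ[ℂ] X) y) ∈ S := by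
      apply Submodule.subset_span
      simp only [Set.mem_iUnion]
      exact ⟨T, hT, ⟨T y, ⟨y, hy, rfl⟩, rfl⟩⟩
    have heq : T y = a + P ((T : X →ₗ[ℂ] X) y) := by rw [hPb]; exact hab.symm
    rw [ContinuousLinearMap.coe_coe, heq]
    exact Submodule.add_mem_sup ha hPS
  have hrank : Module.finrank ℂ G ≤ Module.finrank ℂ S := hmin S ‹_› hmap
  exact Submodule.eq_of_le_of_finrank_le hSG hrank
end

section
/- Let X be a Banach space, T a bounded operator on X, Y a subspace with TY ⊆ Y + G where G is finite-dimensional of minimal dimension. If P : Y ⊕ G → G is the projection along Y, then PT(Y) = G. Moreover, G can be chosen so that G ⊆ TY. -/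
theorem proj_image_eq_min_error_single_operator
    {X : Type*} [NormedAddCommGroup X] [NormedSpace ℂ X] [CompleteSpace X]
    (Y : Submodule ℂ X) (hYc : IsClosed (Y : Set X))
    (T : X →L[ℂ] X) (G : Submodule ℂ X) [FiniteDimensional ℂ G]
    (hG : Y.map (T : X →ₗ[ℂ] X) ≤ Y ⊔ G)
    (hmin : ∀ F : Submodule ℂ X, FiniteDimensional ℂ F →
      Y.map (T : X →ₗ[ℂ] X) ≤ Y ⊔ F → Module.finrank ℂ G ≤ Module.finrank ℂ F)
    (P : X →ₗ[ℂ] X) (hPY : ∀ y ∈ Y, P y = 0) (hPG : ∀ g ∈ G, P g = g) :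
    (Y.map (T : X →ₗ[ℂ] X)).map P = G ∧
      ∃ G' : Submodule ℂ X, FiniteDimensional ℂ G' ∧
        Module.finrank ℂ G' = Module.finrank ℂ G ∧
        G' ≤ Y.map (T : X →ₗ[ℂ] X) ∧ Y.map (T : X →ₗ[ℂ] X) ≤ Y ⊔ G' := by
  classical
  have hPle : (Y.map (T : X →ₗ[ℂ] X)).map P ≤ G := by
    rintro x ⟨t, ht, rfl⟩
    obtain ⟨y, hy, g, hg, rfl⟩ := Submodule.mem_sup.mp (hG ht)
    have : P (y + g) = g := by rw [map_add, hPY y hy, hPG g hg, zero_add]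
    rw [this]; exact hg
  have hYpart : ∀ t ∈ Y.map (T : X →ₗ[ℂ] X), t - P t ∈ Y := by
    intro t ht
    obtain ⟨y, hy, g, hg, rfl⟩ := Submodule.mem_sup.mp (hG ht)
    have : P (y + g) = g := by rw [map_add, hPY y hy, hPG g hg, zero_add]
    rw [this]; simpa using hy
  have hfd : FiniteDimensional ℂ ((Y.map (T : X →ₗ[ℂ] X)).map P) :=
    Submodule.finiteDimensional_of_le hPle
  have hTle' : Y.map (T : X →ₗ[ℂ] X) ≤ Y ⊔ (Y.map (T : X →ₗ[ℂ] X)).map P := by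
    intro t ht
    have h1 : t - P t ∈ Y := hYpart t ht
    have h2 : P t ∈ (Y.map (T : X →ₗ[ℂ] X)).map P := ⟨t, ht, rfl⟩
    have h3 : t = (t - P t) + P t := by abel
    rw [h3]
    exact Submodule.add_mem _ (Submodule.mem_sup_left h1) (Submodule.mem_sup_right h2)
  have heq : (Y.map (T : X →ₗ[ℂ] X)).map P = G :=
    Submodule.eq_of_le_of_finrank_le hPle (hmin _ hfd hTle')
  refine ⟨heq, ?_⟩
  set n := Module.finrank ℂ G with hn
  let b := Module.finBasis ℂ G
  have hmem : ∀ i, ∃ t ∈ Y.map (T : X →ₗ[ℂ] X), P t = ((b i : X)) := by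
    intro i
    have : ((b i : X)) ∈ (Y.map (T : X →ₗ[ℂ] X)).map P := heq ▸ (b i).2
    exact Submodule.mem_map.mp this
  choose t ht hPt using hmem
  set G' : Submodule ℂ X := Submodule.span ℂ (Set.range t) with hG'
  have hG'fd : FiniteDimensional ℂ G' :=
    FiniteDimensional.span_of_finite ℂ (Set.finite_range t)
  have hG'le : G' ≤ Y.map (T : X →ₗ[ℂ] X) := by
    rw [hG', Submodule.span_le]
    rintro _ ⟨i, rfl⟩
    exact ht i
  have hbmem : ∀ i, ((b i : X)) ∈ Y ⊔ G' := by
    intro i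
    have h1 : t i - (b i : X) ∈ Y := by
      have := hYpart (t i) (ht i)
      rwa [hPt i] at this
    have h2 : (t i : X) ∈ G' := Submodule.subset_span ⟨i, rfl⟩
    have h3 : ((b i : X)) = -(t i - (b i : X)) + t i := by abel
    rw [h3]
    exact Submodule.add_mem _ (Submodule.mem_sup_left (neg_mem h1))
      (Submodule.mem_sup_right h2)
  have hGle : G ≤ Y ⊔ G' := by
    intro x hx
    have hsum : (∑ i, b.repr ⟨x, hx⟩ i • b i : G) = ⟨x, hx⟩ := b.sum_repr ⟨x, hx⟩
    have hx' : x = ∑ i, b.repr ⟨x, hx⟩ i • (b i : X) := by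
      have := congrArg (Submodule.subtype G) hsum
      simp only [map_sum, map_smul, Submodule.subtype_apply] at this
      exact this.symm
    rw [hx']
    exact Submodule.sum_mem _ fun i _ =>
      Submodule.smul_mem _ _ (hbmem i)
  have hTleG' : Y.map (T : X →ₗ[ℂ] X) ≤ Y ⊔ G' := le_trans hG (sup_le le_sup_left hGle)
  have hle1 : Module.finrank ℂ G' ≤ n := by
    have := finrank_range_le_card (R := ℂ) t
    simpa [Set.finrank, hG'] using this
  refine ⟨G', hG'fd, le_antisymm hle1 (hmin _ hG'fd hTleG'), hG'le, hTleG'⟩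
end

section
/- There exist two bounded operators T and S on ℓ²(ℤ) with T² = S² = TS = ST = 0 and a subspace Y such that, with G the minimal finite-dimensional subspace satisfying RY ⊆ Y + G for all R in the algebra generated by T and S, and P the projection of Y ⊕ G onto G along Y, the set ∪_{R ∈ A} PR(Y) is not a linear subspace. -/
noncomputable section ProofAux

abbrev H := lp (fun _ : ℤ => ℂ) 2

noncomputable def coordL (i : ℤ) : H →L[ℂ] ℂ :=
  LinearMap.mkContinuous
    { toFun := fun x => x i
      map_add' := fun x y => by simp [lp.coeFn_add]
      map_smul' := fun c x => by simp [lp.coeFn_smul] }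
    1 (fun x => by show ‖x i‖ ≤ 1 * ‖x‖; simpa using lp.norm_apply_le_norm (by norm_num) x i)

@[simp] lemma coordL_apply (i : ℤ) (x : H) : coordL i x = x i := rfl

noncomputable def ee (i : ℤ) : H := lp.single 2 i 1

@[simp] lemma ee_apply_self (i : ℤ) : (ee i) i = 1 := lp.single_apply_self 2 i 1

lemma ee_apply_ne {i j : ℤ} (h : j ≠ i) : (ee i) j = 0 := lp.single_apply_ne 2 i 1 h

noncomputable def Tee : H →L[ℂ] H :=
  (coordL 0).smulRight (ee 1) + (coordL (-1)).smulRight (ee 2)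

noncomputable def Sop : H →L[ℂ] H := (coordL 0).smulRight (ee 3)

lemma Tee_apply (x : H) : Tee x = x 0 • ee 1 + x (-1) • ee 2 := rfl
lemma Sop_apply (x : H) : Sop x = x 0 • ee 3 := rfl

lemma apply_coord (c d f : ℂ) (j : ℤ) :
    (c • ee 1 + d • ee 2 + f • ee 3) j = c * (ee 1) j + d * (ee 2) j + f * (ee 3) j := by
  simp [lp.coeFn_add, lp.coeFn_smul, Pi.add_apply, Pi.smul_apply, smul_eq_mul]; rfl

lemma TS_apply (a b : ℂ) (x : H) :
    (a • Tee + b • Sop) x = (a * x 0) • ee 1 + (a * x (-1)) • ee 2 + (b * x 0) • ee 3 := by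
  simp only [ContinuousLinearMap.add_apply, ContinuousLinearMap.smul_apply, Tee_apply, Sop_apply,
    smul_add, smul_smul]

lemma comb_coord (c d f : ℂ) {j : ℤ} (h1 : j ≠ 1) (h2 : j ≠ 2) (h3 : j ≠ 3) :
    (c • ee 1 + d • ee 2 + f • ee 3) j = 0 := by
  rw [apply_coord, ee_apply_ne h1, ee_apply_ne h2, ee_apply_ne h3]; ring

lemma pair_coord (c d : ℂ) {j : ℤ} (h1 : j ≠ 1) (h2 : j ≠ 2) :
    (c • ee 1 + d • ee 2) j = 0 := by
  simp [lp.coeFn_add, lp.coeFn_smul, Pi.add_apply, Pi.smul_apply, smul_eq_mul,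
    ee_apply_ne h1, ee_apply_ne h2]
  change c * (ee 1) j + d * (ee 2) j = 0; simp [ee_apply_ne h1, ee_apply_ne h2]

lemma smul3_coord (f : ℂ) {j : ℤ} (h3 : j ≠ 3) : (f • ee 3) j = 0 := by
  simp [lp.coeFn_smul, Pi.smul_apply, smul_eq_mul, ee_apply_ne h3]

lemma Tee_coord (x : H) {j : ℤ} (h1 : j ≠ 1) (h2 : j ≠ 2) : (Tee x) j = 0 := by
  rw [Tee_apply]; exact pair_coord _ _ h1 h2

lemma Sop_coord (x : H) {j : ℤ} (h3 : j ≠ 3) : (Sop x) j = 0 := by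
  rw [Sop_apply]; exact smul3_coord _ h3

lemma nilpotency :
    Tee * Tee = 0 ∧ Sop * Sop = 0 ∧ Tee * Sop = 0 ∧ Sop * Tee = 0 := by
  have hT0 : ∀ x : H, (Tee x) 0 = 0 := fun x => Tee_coord x (by decide) (by decide)
  have hTm : ∀ x : H, (Tee x) (-1) = 0 := fun x => Tee_coord x (by decide) (by decide)
  have hS0 : ∀ x : H, (Sop x) 0 = 0 := fun x => Sop_coord x (by decide)
  have hSm : ∀ x : H, (Sop x) (-1) = 0 := fun x => Sop_coord x (by decide)
  refine ⟨?_, ?_, ?_, ?_⟩ <;>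
    refine ContinuousLinearMap.ext fun x => ?_ <;>
    rw [ContinuousLinearMap.mul_apply, ContinuousLinearMap.zero_apply]
  · show Tee (Tee x) = 0
    rw [Tee_apply (Tee x), hT0, hTm]; simp
  · show Sop (Sop x) = 0
    rw [Sop_apply (Sop x), hS0]; simp
  · show Tee (Sop x) = 0
    rw [Tee_apply (Sop x), hS0, hSm]; simp
  · show Sop (Tee x) = 0
    rw [Sop_apply (Tee x), hT0]; simp

end ProofAux

noncomputable section Part2

noncomputable def Ysub : Submodule ℂ H :=
  LinearMap.ker (coordL 1 : H →ₗ[ℂ] ℂ) ⊓ LinearMap.ker (coordL 2 : H →ₗ[ℂ] ℂ) ⊓ LinearMap.ker (coordL 3 : H →ₗ[ℂ] ℂ)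

lemma mem_Ysub {x : H} : x ∈ Ysub ↔ x 1 = 0 ∧ x 2 = 0 ∧ x 3 = 0 := by
  simp [Ysub, LinearMap.mem_ker, and_assoc]

lemma Ysub_closed : IsClosed (Ysub : Set H) := by
  have h1 := ContinuousLinearMap.isClosed_ker (coordL 1)
  have h2 := ContinuousLinearMap.isClosed_ker (coordL 2)
  have h3 := ContinuousLinearMap.isClosed_ker (coordL 3)
  have : (Ysub : Set H) = (LinearMap.ker (coordL 1 : H →ₗ[ℂ] ℂ) : Set H) ∩
      (LinearMap.ker (coordL 2 : H →ₗ[ℂ] ℂ) : Set H) ∩ (LinearMap.ker (coordL 3 : H →ₗ[ℂ] ℂ) : Set H) := by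
    ext x; simp [Ysub]
  rw [this]
  exact ((h1.inter h2).inter h3)

noncomputable def eev : Fin 3 → H := ![ee 1, ee 2, ee 3]

noncomputable def Gsub : Submodule ℂ H := Submodule.span ℂ (Set.range eev)

lemma ee_mem_Gsub (i : Fin 3) : eev i ∈ Gsub := Submodule.subset_span ⟨i, rfl⟩

lemma comb_mem_Gsub (c d f : ℂ) : c • ee 1 + d • ee 2 + f • ee 3 ∈ Gsub := by
  exact add_mem (add_mem (Gsub.smul_mem c (ee_mem_Gsub 0)) (Gsub.smul_mem d (ee_mem_Gsub 1)))
    (Gsub.smul_mem f (ee_mem_Gsub 2))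

noncomputable def Lmap : H →ₗ[ℂ] (Fin 3 → ℂ) :=
  LinearMap.pi ![(coordL 1).toLinearMap, (coordL 2).toLinearMap, (coordL 3).toLinearMap]

lemma Lmap_apply (x : H) : Lmap x = ![x 1, x 2, x 3] := by
  funext i
  fin_cases i <;> simp [Lmap, LinearMap.pi_apply]

lemma Lmap_eev : ∀ i : Fin 3, Lmap (eev i) = Pi.single i 1 := by
  intro i
  fin_cases i <;>
  · funext j
    fin_cases j <;>
      simp [Lmap_apply, eev, ee_apply_ne, ee_apply_self, Pi.single_eq_same,
        Pi.single_eq_of_ne, show (2:ℤ) ≠ 1 by decide, show (3:ℤ) ≠ 1 by decide,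
        show (1:ℤ) ≠ 2 by decide, show (3:ℤ) ≠ 2 by decide,
        show (1:ℤ) ≠ 3 by decide, show (2:ℤ) ≠ 3 by decide]

lemma Ysub_map_Lmap : Ysub.map Lmap = ⊥ := by
  rw [eq_bot_iff]
  rintro _ ⟨y, hy, rfl⟩
  obtain ⟨h1, h2, h3⟩ := mem_Ysub.mp hy
  simp only [Submodule.mem_bot, Lmap_apply, h1, h2, h3]
  funext j; fin_cases j <;> simp

lemma key_rank (F : Submodule ℂ H) (hF : FiniteDimensional ℂ F)
    (h1 : ee 1 ∈ Ysub ⊔ F) (h2 : ee 2 ∈ Ysub ⊔ F) (h3 : ee 3 ∈ Ysub ⊔ F) :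
    3 ≤ Module.finrank ℂ F := by
  have hmap : (Ysub ⊔ F).map Lmap = F.map Lmap := by
    rw [Submodule.map_sup, Ysub_map_Lmap, bot_sup_eq]
  have htop : F.map Lmap = ⊤ := by
    refine top_unique ?_
    rw [← (Pi.basisFun ℂ (Fin 3)).span_eq]
    refine Submodule.span_le.mpr ?_
    rintro _ ⟨i, rfl⟩
    rw [Pi.basisFun_apply, ← Lmap_eev i, ← hmap]
    refine Submodule.mem_map_of_mem ?_
    fin_cases i <;> [exact h1; exact h2; exact h3]
  have hfin : Module.finrank ℂ (F.map Lmap) = 3 := by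
    rw [htop, finrank_top, Module.finrank_fin_fun]
  calc 3 = Module.finrank ℂ (F.map Lmap) := hfin.symm
    _ ≤ Module.finrank ℂ F := Submodule.finrank_map_le Lmap F

lemma eev_li : LinearIndependent ℂ eev := by
  have h : LinearIndependent ℂ (Lmap ∘ eev) := by
    have : Lmap ∘ eev = fun i : Fin 3 => (Pi.single i 1 : Fin 3 → ℂ) := by
      funext i; simp [Function.comp, Lmap_eev]
    rw [this]
    have he : ⇑(Pi.basisFun ℂ (Fin 3)) = fun i => (Pi.single i 1 : Fin 3 → ℂ) :=
      funext fun i => Pi.basisFun_apply ℂ (Fin 3) i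
    rw [← he]
    exact (Pi.basisFun ℂ (Fin 3)).linearIndependent
  exact h.of_comp Lmap

lemma finrank_Gsub : Module.finrank ℂ Gsub = 3 := by
  have := finrank_span_eq_card eev_li
  exact this.trans (by simp)

instance : FiniteDimensional ℂ Gsub :=
  FiniteDimensional.span_of_finite ℂ (Set.finite_range eev)

end Part2

noncomputable section Part3

lemma comb_coord1 (c d f : ℂ) : (c • ee 1 + d • ee 2 + f • ee 3) 1 = c := by
  rw [apply_coord, ee_apply_self, ee_apply_ne (show (1:ℤ) ≠ 2 by decide),
    ee_apply_ne (show (1:ℤ) ≠ 3 by decide)]; ring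

lemma comb_coord2 (c d f : ℂ) : (c • ee 1 + d • ee 2 + f • ee 3) 2 = d := by
  rw [apply_coord, ee_apply_self, ee_apply_ne (show (2:ℤ) ≠ 1 by decide),
    ee_apply_ne (show (2:ℤ) ≠ 3 by decide)]; ring

lemma comb_coord3 (c d f : ℂ) : (c • ee 1 + d • ee 2 + f • ee 3) 3 = f := by
  rw [apply_coord, ee_apply_self, ee_apply_ne (show (3:ℤ) ≠ 1 by decide),
    ee_apply_ne (show (3:ℤ) ≠ 2 by decide)]; ring

lemma ee0_mem_Ysub : ee 0 ∈ Ysub := by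
  rw [mem_Ysub]
  exact ⟨ee_apply_ne (by decide), ee_apply_ne (by decide), ee_apply_ne (by decide)⟩

lemma eeneg_mem_Ysub : ee (-1) ∈ Ysub := by
  rw [mem_Ysub]
  exact ⟨ee_apply_ne (by decide), ee_apply_ne (by decide), ee_apply_ne (by decide)⟩

lemma TS_ee0_T : ((1:ℂ) • Tee + (0:ℂ) • Sop) (ee 0) = ee 1 := by
  rw [TS_apply, ee_apply_self, ee_apply_ne (show (-1:ℤ) ≠ 0 by decide)]
  simp

lemma TS_eeneg_T : ((1:ℂ) • Tee + (0:ℂ) • Sop) (ee (-1)) = ee 2 := by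
  rw [TS_apply, ee_apply_self, ee_apply_ne (show (0:ℤ) ≠ -1 by decide)]
  simp

lemma TS_ee0_S : ((0:ℂ) • Tee + (1:ℂ) • Sop) (ee 0) = ee 3 := by
  rw [TS_apply, ee_apply_self]
  simp

lemma ee1_mem_Gsub : ee 1 ∈ Gsub := Submodule.subset_span ⟨0, by simp [eev]⟩
lemma ee2_mem_Gsub : ee 2 ∈ Gsub := Submodule.subset_span ⟨1, by simp [eev]⟩
lemma ee3_mem_Gsub : ee 3 ∈ Gsub := Submodule.subset_span ⟨2, by simp [eev]⟩

end Part3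

theorem exists_algebra_proj_union_not_linear :
    ∃ (T S : lp (fun _ : ℤ => ℂ) 2 →L[ℂ] lp (fun _ : ℤ => ℂ) 2),
      T * T = 0 ∧ S * S = 0 ∧ T * S = 0 ∧ S * T = 0 ∧
      ∃ (Y G : Submodule ℂ (lp (fun _ : ℤ => ℂ) 2)),
        IsClosed (Y : Set (lp (fun _ : ℤ => ℂ) 2)) ∧
        FiniteDimensional ℂ G ∧
        (∀ a b : ℂ, Y.map ((a • T + b • S : lp (fun _ : ℤ => ℂ) 2 →L[ℂ] lp (fun _ : ℤ => ℂ) 2) : lp (fun _ : ℤ => ℂ) 2 →ₗ[ℂ] lp (fun _ : ℤ => ℂ) 2) ≤ Y ⊔ G) ∧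
        (∀ F : Submodule ℂ (lp (fun _ : ℤ => ℂ) 2), FiniteDimensional ℂ F →
          (∀ a b : ℂ, Y.map ((a • T + b • S : lp (fun _ : ℤ => ℂ) 2 →L[ℂ] lp (fun _ : ℤ => ℂ) 2) : lp (fun _ : ℤ => ℂ) 2 →ₗ[ℂ] lp (fun _ : ℤ => ℂ) 2) ≤ Y ⊔ F) →
          Module.finrank ℂ G ≤ Module.finrank ℂ F) ∧
        ∀ P : lp (fun _ : ℤ => ℂ) 2 →ₗ[ℂ] lp (fun _ : ℤ => ℂ) 2,
          (∀ y ∈ Y, P y = 0) → (∀ g ∈ G, P g = g) →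
          ¬ ∃ W : Submodule ℂ (lp (fun _ : ℤ => ℂ) 2),
            (W : Set (lp (fun _ : ℤ => ℂ) 2)) =
              ⋃ (a : ℂ), ⋃ (b : ℂ), P '' ((a • T + b • S) '' (Y : Set (lp (fun _ : ℤ => ℂ) 2))) := by
  obtain ⟨hTT, hSS, hTS, hST⟩ := nilpotency
  refine ⟨Tee, Sop, hTT, hSS, hTS, hST, Ysub, Gsub, Ysub_closed, inferInstance, ?_, ?_, ?_⟩
  · -- invariance
    intro a b
    rintro x ⟨y, hy, rfl⟩
    refine Submodule.mem_sup_right ?_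
    rw [ContinuousLinearMap.coe_coe, TS_apply]
    exact comb_mem_Gsub _ _ _
  · -- minimality
    intro F hF hmap
    rw [finrank_Gsub]
    refine key_rank F hF ?_ ?_ ?_
    · exact hmap 1 0 ⟨ee 0, ee0_mem_Ysub, TS_ee0_T⟩
    · exact hmap 1 0 ⟨ee (-1), eeneg_mem_Ysub, TS_eeneg_T⟩
    · exact hmap 0 1 ⟨ee 0, ee0_mem_Ysub, TS_ee0_S⟩
  · -- non-linearity of the union
    rintro P hPY hPG ⟨W, hW⟩
    have hU : ∀ x : H, x ∈ W ↔ ∃ a b : ℂ, ∃ y ∈ Ysub, P ((a • Tee + b • Sop) y) = x := by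
      intro x
      rw [← SetLike.mem_coe, hW]
      simp only [Set.mem_iUnion, Set.mem_image, SetLike.mem_coe]
      constructor
      · rintro ⟨a, b, _, ⟨y, hy, rfl⟩, rfl⟩
        exact ⟨a, b, y, hy, rfl⟩
      · rintro ⟨a, b, y, hy, rfl⟩
        exact ⟨a, b, _, ⟨y, hy, rfl⟩, rfl⟩
    have h2 : ee 2 ∈ W :=
      (hU _).mpr ⟨1, 0, ee (-1), eeneg_mem_Ysub,
        by rw [TS_eeneg_T]; exact hPG _ ee2_mem_Gsub⟩
    have h3 : ee 3 ∈ W :=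
      (hU _).mpr ⟨0, 1, ee 0, ee0_mem_Ysub,
        by rw [TS_ee0_S]; exact hPG _ ee3_mem_Gsub⟩
    obtain ⟨a, b, y, hy, heq⟩ := (hU _).mp (W.add_mem h2 h3)
    rw [TS_apply, hPG _ (comb_mem_Gsub _ _ _)] at heq
    have c1 := congrArg (fun z : H => z 1) heq
    have c2 := congrArg (fun z : H => z 2) heq
    have c3 := congrArg (fun z : H => z 3) heq
    simp only [comb_coord1, comb_coord2, comb_coord3] at c1 c2 c3
    rw [show ((ee 2 + ee 3 : H) : ∀ _ : ℤ, ℂ) 1 = 0 by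
        rw [lp.coeFn_add, Pi.add_apply, ee_apply_ne (show (1:ℤ) ≠ 2 by decide),
          ee_apply_ne (show (1:ℤ) ≠ 3 by decide), add_zero]] at c1
    rw [show ((ee 2 + ee 3 : H) : ∀ _ : ℤ, ℂ) 2 = 1 by
        rw [lp.coeFn_add, Pi.add_apply, ee_apply_self,
          ee_apply_ne (show (2:ℤ) ≠ 3 by decide), add_zero]] at c2
    rw [show ((ee 2 + ee 3 : H) : ∀ _ : ℤ, ℂ) 3 = 1 by
        rw [lp.coeFn_add, Pi.add_apply, ee_apply_self,
          ee_apply_ne (show (3:ℤ) ≠ 2 by decide), zero_add]] at c3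
    rcases mul_eq_zero.mp c1 with h | h
    · rw [h, zero_mul] at c2; exact zero_ne_one c2
    · rw [h, mul_zero] at c3; exact zero_ne_one c3
end

section
/- Let Y be a half-space in a Banach space X and A an algebra of bounded operators on X. If there exists a single finite-dimensional subspace F such that TY ⊆ Y + F for every T ∈ A, then A has an invariant half-space. In fact, if G is of minimal dimension with TY ⊆ Y + G for all T ∈ A, then Y ⊕ G is invariant under A. -/
/-- A half-space: a closed subspace with infinite dimension and infinite codimension. -/
def IsHalfSpace {X : Type*} [NormedAddCommGroup X] [NormedSpace ℂ X]
    (Y : Submodule ℂ X) : Prop :=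
  IsClosed (Y : Set X) ∧ ¬ FiniteDimensional ℂ Y ∧ ¬ FiniteDimensional ℂ (X ⧸ Y)

theorem common_error_implies_invariant_halfspace
    {X : Type*} [NormedAddCommGroup X] [NormedSpace ℂ X] [CompleteSpace X]
    (Y : Submodule ℂ X) (hY : IsHalfSpace Y)
    (A : NonUnitalSubalgebra ℂ (X →L[ℂ] X))
    (F : Submodule ℂ X) (hF : FiniteDimensional ℂ F)
    (hAF : ∀ T ∈ A, Y.map (T : X →ₗ[ℂ] X) ≤ Y ⊔ F) :
    (∃ Z : Submodule ℂ X, IsHalfSpace Z ∧ ∀ T ∈ A, Z.map (T : X →ₗ[ℂ] X) ≤ Z) ∧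
      ∀ G : Submodule ℂ X, FiniteDimensional ℂ G →
        (∀ T ∈ A, Y.map (T : X →ₗ[ℂ] X) ≤ Y ⊔ G) →
        (∀ F' : Submodule ℂ X, FiniteDimensional ℂ F' →
          (∀ T ∈ A, Y.map (T : X →ₗ[ℂ] X) ≤ Y ⊔ F') → Module.finrank ℂ G ≤ Module.finrank ℂ F') →
        ∀ T ∈ A, (Y ⊔ G).map (T : X →ₗ[ℂ] X) ≤ Y ⊔ G := by
  classical
  -- Key lemma: minimal G yields invariance of Y ⊔ G.
  have key : ∀ G : Submodule ℂ X, FiniteDimensional ℂ G →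
      (∀ T ∈ A, Y.map (T : X →ₗ[ℂ] X) ≤ Y ⊔ G) →
      (∀ F' : Submodule ℂ X, FiniteDimensional ℂ F' →
        (∀ T ∈ A, Y.map (T : X →ₗ[ℂ] X) ≤ Y ⊔ F') → Module.finrank ℂ G ≤ Module.finrank ℂ F') →
      ∀ T ∈ A, (Y ⊔ G).map (T : X →ₗ[ℂ] X) ≤ Y ⊔ G := by
    intro G hGfd hAG hmin T hT
    haveI := hGfd
    set W : Submodule ℂ X := Y ⊔ ⨆ S ∈ (A : Set (X →L[ℂ] X)), Y.map (S : X →ₗ[ℂ] X) with hW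
    have hYW : Y ≤ W := le_sup_left
    have hmapW : ∀ S ∈ A, Y.map (S : X →ₗ[ℂ] X) ≤ W := by
      intro S hS
      exact le_sup_of_le_right (le_iSup₂ (f := fun S (_ : S ∈ (A : Set (X →L[ℂ] X))) => Y.map (S : X →ₗ[ℂ] X)) S hS)
    have hWle : W ≤ Y ⊔ G := sup_le le_sup_left (iSup₂_le fun S hS => hAG S hS)
    have hG1 : Y ⊔ (G ⊓ W) = W := by
      have h := sup_inf_assoc_of_le (x := Y) (z := W) G hYW
      rw [← h, inf_eq_right.mpr hWle]
    have hGW : G ≤ W := by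
      haveI : FiniteDimensional ℂ (G ⊓ W : Submodule ℂ X) :=
        Submodule.finiteDimensional_of_le (inf_le_left (b := W))
      have hle : Module.finrank ℂ G ≤ Module.finrank ℂ (G ⊓ W : Submodule ℂ X) := by
        refine hmin _ this ?_
        intro S hS
        rw [hG1]
        exact hmapW S hS
      have heq : G ⊓ W = G := Submodule.eq_of_le_of_finrank_le inf_le_left hle
      rw [← heq]
      exact inf_le_right
    have h1 : Y ⊔ G ≤ W := sup_le hYW hGW
    refine le_trans (Submodule.map_mono h1) ?_
    rw [Submodule.map_le_iff_le_comap, hW]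
    refine sup_le ?_ (iSup₂_le fun S hS => ?_)
    · exact Submodule.map_le_iff_le_comap.mp (hAG T hT)
    · rw [← Submodule.map_le_iff_le_comap]
      intro x hx
      simp only [Submodule.mem_map] at hx
      obtain ⟨y, ⟨z, hz, rfl⟩, rfl⟩ := hx
      have hTz : (T : X →ₗ[ℂ] X) ((S : X →ₗ[ℂ] X) z) = (T * S) z := rfl
      rw [hTz]
      exact hAG (T * S) (mul_mem hT hS) ⟨z, hz, rfl⟩
  -- Choose a minimal G
  have hP : ∃ n : ℕ, ∃ G : Submodule ℂ X, FiniteDimensional ℂ G ∧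
      Module.finrank ℂ G = n ∧ ∀ T ∈ A, Y.map (T : X →ₗ[ℂ] X) ≤ Y ⊔ G :=
    ⟨Module.finrank ℂ F, F, hF, rfl, hAF⟩
  obtain ⟨G, hGfd, hGrank, hGprop⟩ := Nat.find_spec hP
  have hGmin : ∀ F' : Submodule ℂ X, FiniteDimensional ℂ F' →
      (∀ T ∈ A, Y.map (T : X →ₗ[ℂ] X) ≤ Y ⊔ F') → Module.finrank ℂ G ≤ Module.finrank ℂ F' := by
    intro F' hF' hprop
    rw [hGrank]
    exact Nat.find_le ⟨F', hF', rfl, hprop⟩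
  haveI := hGfd
  haveI : IsClosed (Y : Set X) := hY.1
  have hcont : Continuous Y.mkQ :=
    AddMonoidHomClass.continuous_of_bound Y.mkQ 1 fun x => by
      simpa using Submodule.Quotient.norm_mk_le Y x
  constructor
  · refine ⟨Y ⊔ G, ⟨?_, ?_, ?_⟩, key G hGfd hGprop hGmin⟩
    · -- closedness of Y ⊔ G
      have h1 : IsClosed ((G.map Y.mkQ : Submodule ℂ (X ⧸ Y)) : Set (X ⧸ Y)) :=
        Submodule.closed_of_finiteDimensional _
      have h2 : ((Y ⊔ G : Submodule ℂ X) : Set X) = Y.mkQ ⁻¹' (G.map Y.mkQ) := by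
        rw [← Submodule.comap_map_mkQ]
        rfl
      rw [h2]
      exact h1.preimage hcont
    · intro h
      exact hY.2.1 (Submodule.finiteDimensional_of_le (le_sup_left (b := G)))
    · intro h
      apply hY.2.2
      haveI := h
      have e := Submodule.quotientQuotientEquivQuotient Y (Y ⊔ G) le_sup_left
      haveI h3 : FiniteDimensional ℂ ((X ⧸ Y) ⧸ (Y ⊔ G).map Y.mkQ) :=
        e.symm.finiteDimensional
      haveI h4 : FiniteDimensional ℂ ((Y ⊔ G).map Y.mkQ : Submodule ℂ (X ⧸ Y)) := by
        have : (Y ⊔ G).map Y.mkQ = G.map Y.mkQ := by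
          rw [Submodule.map_sup]
          have hbot : Y.map Y.mkQ = ⊥ := by
            apply le_bot_iff.mp
            rintro x ⟨y, hy, rfl⟩
            simpa [Submodule.Quotient.mk_eq_zero] using hy
          rw [hbot, bot_sup_eq]
        rw [this]
        infer_instance
      have hrank := Submodule.rank_quotient_add_rank ((Y ⊔ G).map Y.mkQ)
      have hlt : Module.rank ℂ (X ⧸ Y) < Cardinal.aleph0 := by
        rw [← hrank]
        exact Cardinal.add_lt_aleph0 (Module.rank_lt_aleph0 _ _) (Module.rank_lt_aleph0 _ _)
      exact Module.rank_lt_aleph0_iff.mp hlt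
  · exact key
end

section
/- Let Y be a linear subspace of a vector space X, let u₁,…,u_N be linearly independent vectors with span{u_i} ∩ Y = {0}, and let v₁,…,v_N ∈ X be arbitrary. Then for all but finitely many scalars α, the vectors v₁ + αu₁, …, v_N + αu_N are linearly independent and their span intersects Y trivially. -/
open Polynomial Matrix

lemma eval_charpoly_aux {N : ℕ} (M : Matrix (Fin N) (Fin N) ℂ) (α : ℂ) :
    M.charpoly.eval α = ((Matrix.diagonal fun _ => α) - M).det := by
  rw [Matrix.charpoly, ← Polynomial.coe_evalRingHom, RingHom.map_det]
  congr 1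
  ext i j
  by_cases h : i = j <;>
    simp [Matrix.charmatrix_apply, Matrix.diagonal, h]

theorem perturbation_linear_independent_cofinite
    {X : Type*} [AddCommGroup X] [Module ℂ X]
    (Y : Submodule ℂ X) (N : ℕ) (u v : Fin N → X)
    (hu : LinearIndependent ℂ u)
    (huY : Submodule.span ℂ (Set.range u) ⊓ Y = ⊥) :
    {α : ℂ | ¬ (LinearIndependent ℂ (fun i => v i + α • u i) ∧
      Submodule.span ℂ (Set.range fun i => v i + α • u i) ⊓ Y = ⊥)}.Finite := by
  classical
  -- the images of u in X ⧸ Y are linearly independent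
  have hqu : LinearIndependent ℂ (fun i => Y.mkQ (u i)) := by
    have := hu.map (f := Y.mkQ) (by rw [Submodule.ker_mkQ, disjoint_iff]; exact huY)
    exact this
  -- a left inverse π of the linear combination map
  have hker : LinearMap.ker (Fintype.linearCombination ℂ fun i => Y.mkQ (u i)) = ⊥ := by
    rw [LinearMap.ker_eq_bot']
    intro g hg
    rw [Fintype.linearCombination_apply] at hg
    exact funext (Fintype.linearIndependent_iff.mp hqu g hg)
  obtain ⟨π, hπ⟩ := LinearMap.exists_leftInverse_of_injective _ hker
  have hπu : ∀ i, π (Y.mkQ (u i)) = Pi.single i 1 := by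
    intro i
    have h1 := LinearMap.congr_fun hπ (Pi.single i (1 : ℂ))
    have h2 : (Fintype.linearCombination ℂ fun j => Y.mkQ (u j)) (Pi.single i 1)
        = Y.mkQ (u i) := by
      rw [Fintype.linearCombination_apply]
      simp [Pi.single_apply, ite_smul]
    rw [LinearMap.comp_apply, h2] at h1
    simpa using h1
  set T : X →ₗ[ℂ] (Fin N → ℂ) := π ∘ₗ Y.mkQ with hT
  set C : Matrix (Fin N) (Fin N) ℂ := Matrix.of fun i j => T (v i) j with hC
  have hmono := Matrix.charpoly_monic (-C)
  apply Set.Finite.subset (Polynomial.finite_setOf_isRoot hmono.ne_zero)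
  intro α hα
  simp only [Set.mem_setOf_eq] at hα ⊢
  by_contra hroot
  apply hα
  -- the matrix with rows T (v i + α • u i)
  have hdet : ((Matrix.diagonal fun _ => α) - (-C)).det ≠ 0 := by
    rw [← eval_charpoly_aux]
    exact hroot
  set A : Matrix (Fin N) (Fin N) ℂ := (Matrix.diagonal fun _ => α) - (-C) with hA
  have hrows : LinearIndependent ℂ (fun i => A i) :=
    Matrix.linearIndependent_rows_iff_isUnit.mpr ((Matrix.isUnit_iff_isUnit_det A).mpr hdet.isUnit)
  have hrow_eq : (fun i => A i)
      = fun i => T (v i + α • u i) := by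
    funext i
    funext j
    have hti : T (u i) = Pi.single i 1 := hπu i
    simp only [hA, Matrix.sub_apply, Matrix.diagonal_apply, Matrix.neg_apply, Matrix.of_apply,
      hC, map_add, _root_.map_smul, hti, Pi.add_apply, Pi.smul_apply, Pi.single_apply,
      smul_eq_mul, sub_neg_eq_add]
    by_cases h : i = j <;> simp [h, eq_comm, add_comm]
  rw [hrow_eq] at hrows
  have hTw : LinearIndependent ℂ (T ∘ fun i => v i + α • u i) := hrows
  have hqw : LinearIndependent ℂ (Y.mkQ ∘ fun i => v i + α • u i) :=
    LinearIndependent.of_comp π hTw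
  constructor
  · exact LinearIndependent.of_comp T hTw
  · have := Submodule.range_ker_disjoint hqw
    rw [Submodule.ker_mkQ] at this
    rw [← disjoint_iff]
    exact this
end

section
/- Let A be an algebra of bounded operators on a Banach space X, Y a closed subspace, and N ∈ ℕ such that d_{Y,T} ≤ N for all T ∈ A. Then d_{Y,T} ≤ N for every T in the weak operator topology closure of A. -/
open ContinuousLinearMapWOT Module

set_option maxHeartbeats 1000000 in
theorem error_dim_bound_of_WOT_closure
    {X : Type*} [NormedAddCommGroup X] [NormedSpace ℂ X] [CompleteSpace X]
    (A : NonUnitalSubalgebra ℂ (X →L[ℂ] X))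
    (Y : Submodule ℂ X) (hYc : IsClosed (Y : Set X)) (N : ℕ)
    (hA : ∀ S ∈ A, ∃ F : Submodule ℂ X, FiniteDimensional ℂ F ∧
      Module.finrank ℂ F ≤ N ∧ Y.map (S : X →ₗ[ℂ] X) ≤ Y ⊔ F)
    (T : X →L[ℂ] X)
    (hT : ContinuousLinearMapWOT.ofCLM T ∈
      closure (ContinuousLinearMapWOT.ofCLM '' (A : Set (X →L[ℂ] X)))) :
    ∃ F : Submodule ℂ X, FiniteDimensional ℂ F ∧
      Module.finrank ℂ F ≤ N ∧ Y.map (T : X →ₗ[ℂ] X) ≤ Y ⊔ F := by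
  classical
  set C : Set ((X →WOT[ℂ] X)) :=
    {S | ∀ (y : Fin (N+1) → Y) (f : Fin (N+1) → (X →L[ℂ] ℂ)),
      (∀ j, ∀ x ∈ Y, f j x = 0) →
      Matrix.det (Matrix.of fun i j => f j (S (y i))) = 0} with hC
  -- the defining condition is WOT-closed
  have hCclosed : IsClosed C := by
    have : C = ⋂ (y : Fin (N+1) → Y), ⋂ (f : Fin (N+1) → (X →L[ℂ] ℂ)),
        ⋂ (_ : ∀ j, ∀ x ∈ Y, f j x = 0),
        {S : (X →WOT[ℂ] X) |
          Matrix.det (Matrix.of fun i j => f j (S (y i))) = 0} := by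
      ext S; simp [hC, Set.mem_iInter]
    rw [this]
    refine isClosed_iInter fun y => isClosed_iInter fun f => isClosed_iInter fun _ => ?_
    have hcont : Continuous fun S : (X →WOT[ℂ] X) =>
        Matrix.det (Matrix.of fun i j => f j (S (y i))) := by
      apply Continuous.matrix_det
      exact continuous_matrix fun i j => ContinuousLinearMapWOT.continuous_dual_apply (E := X) (F := X) ((y i : X)) (f j)
    exact isClosed_eq hcont continuous_const
  -- members of A satisfy the condition
  have hAC : (ContinuousLinearMapWOT.ofCLM '' (A : Set (X →L[ℂ] X))) ⊆ C := by
    rintro _ ⟨S, hS, rfl⟩ y f hf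
    obtain ⟨F, hFfd, hFrk, hFle⟩ := hA S hS
    have h1 : ∀ i, S (y i : X) ∈ Y ⊔ F := fun i =>
      hFle ⟨(y i : X), (y i).2, rfl⟩
    choose u hu w hw huw using fun i => Submodule.mem_sup.mp (h1 i)
    haveI := hFfd
    have hdep : ¬ LinearIndependent ℂ (fun i : Fin (N+1) => (⟨w i, hw i⟩ : F)) := by
      intro h
      have := h.fintype_card_le_finrank
      simp [Fintype.card_fin] at this
      omega
    obtain ⟨g, hg0, i0, hgi⟩ := Fintype.not_linearIndependent_iff.mp hdep
    have hgw : (∑ i, g i • w i) = 0 := by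
      have := congrArg (Submodule.subtype F) hg0
      simpa using this
    refine Matrix.exists_vecMul_eq_zero_iff.mp ⟨g, ?_, ?_⟩
    · intro h; exact hgi (by simp [h])
    · funext j
      simp only [Matrix.vecMul, dotProduct, Matrix.of_apply, Pi.zero_apply]
      have : ∀ i, f j ((ContinuousLinearMapWOT.ofCLM S) (y i : X)) = f j (w i) := by
        intro i
        rw [ContinuousLinearMapWOT.ofCLM_apply, ← huw i]
        rw [map_add, hf j (u i) (hu i), zero_add]
      simp_rw [this]
      calc (∑ i, g i * f j (w i)) = f j (∑ i, g i • w i) := by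
            rw [map_sum]; congr 1; funext i; rw [map_smul]; rfl
        _ = 0 := by rw [hgw, map_zero]
  have hTC : ContinuousLinearMapWOT.ofCLM T ∈ C :=
    closure_minimal hAC hCclosed hT
  have PT : ∀ (y : Fin (N+1) → Y) (f : Fin (N+1) → (X →L[ℂ] ℂ)),
      (∀ j, ∀ x ∈ Y, f j x = 0) →
      Matrix.det (Matrix.of fun i j => f j (T (y i : X))) = 0 := by
    intro y f hf
    have := hTC y f hf
    simpa [ContinuousLinearMapWOT.ofCLM_apply] using this
  -- now work in the quotient
  haveI : IsClosed (Y : Set X) := hYc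
  set W : Submodule ℂ (X ⧸ Y) := (Y.map (T : X →ₗ[ℂ] X)).map Y.mkQ with hW
  -- the continuous quotient map
  have mkQcont : Continuous (Y.mkQ : X → X ⧸ Y) := continuous_quot_mk
  -- every N+1 elements of W are linearly dependent
  have hdepW : ∀ z : Fin (N+1) → W, ¬ LinearIndependent ℂ (fun i => ((z i : X ⧸ Y))) := by
    intro z hli
    -- each z i = mkQ (T y i) for some y i ∈ Y
    have hz : ∀ i, ∃ y : Y, Y.mkQ (T (y : X)) = (z i : X ⧸ Y) := by
      intro i
      obtain ⟨x, hx, hxz⟩ := (z i).2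
      obtain ⟨y, hy, rfl⟩ := hx
      exact ⟨⟨y, hy⟩, hxz⟩
    choose y hy using hz
    -- span of the z's
    set Z : Submodule ℂ (X ⧸ Y) := Submodule.span ℂ (Set.range fun i => (z i : X ⧸ Y)) with hZ
    haveI : FiniteDimensional ℂ Z := FiniteDimensional.span_of_finite ℂ (Set.finite_range _)
    let b : Basis (Fin (N+1)) ℂ Z := Basis.span hli
    have hgs : ∀ j : Fin (N+1), ∃ g : (X ⧸ Y) →L[ℂ] ℂ,
        ∀ v : Z, g v = (b.coord j).toContinuousLinearMap v := by
      intro j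
      obtain ⟨g, hg, -⟩ := exists_extension_norm_eq Z (b.coord j).toContinuousLinearMap
      exact ⟨g, hg⟩
    choose g hg using hgs
    set f : Fin (N+1) → (X →L[ℂ] ℂ) := fun j =>
      (g j).comp ⟨Y.mkQ, mkQcont⟩ with hf
    have hfY : ∀ j, ∀ x ∈ Y, f j x = 0 := by
      intro j x hx
      have : Y.mkQ x = 0 := (Submodule.Quotient.mk_eq_zero Y).mpr hx
      simp [hf, ContinuousLinearMap.comp_apply, this]
    have hMat : ∀ i j, f j (T (y i : X)) = if i = j then (1:ℂ) else 0 := by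
      intro i j
      have hzi : (z i : X ⧸ Y) ∈ Z := Submodule.subset_span ⟨i, rfl⟩
      have hb : b i = (⟨(z i : X ⧸ Y), hzi⟩ : Z) := by
        apply Subtype.ext
        exact congrArg Subtype.val (Basis.span_apply hli i)
      have : f j (T (y i : X)) = g j (z i : X ⧸ Y) := by
        simp only [hf, ContinuousLinearMap.comp_apply, ContinuousLinearMap.coe_mk']
        rw [hy i]
      rw [this]
      have := hg j ⟨(z i : X ⧸ Y), hzi⟩
      rw [this]
      rw [← hb]
      simp [Basis.coord_apply, Basis.repr_self, Finsupp.single_apply]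
    have := PT y f hfY
    have hdet : Matrix.det (Matrix.of fun i j => f j (T (y i : X))) = 1 := by
      have : (Matrix.of fun i j => f j (T (y i : X))) = (1 : Matrix (Fin (N+1)) (Fin (N+1)) ℂ) := by
        ext i j
        rw [Matrix.of_apply, hMat i j, Matrix.one_apply]
      rw [this, Matrix.det_one]
    rw [hdet] at this
    exact one_ne_zero this
  -- rank bound on W
  have hrank : Module.rank ℂ W ≤ (N : Cardinal) := by
    apply rank_le
    intro s hs
    by_contra hcard
    push_neg at hcard
    have : N + 1 ≤ Fintype.card s := by
      simpa [Fintype.card_coe] using hcard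
    obtain ⟨e⟩ := Function.Embedding.nonempty_of_card_le (by simpa using this :
      Fintype.card (Fin (N+1)) ≤ Fintype.card s)
    have hli : LinearIndependent ℂ (fun i : Fin (N+1) => ((e i : W) : W)) :=
      hs.comp (fun i => e i) (fun a b hab => e.injective (Subtype.ext_iff.mpr (by
        exact congrArg Subtype.val hab)))
    have hli' : LinearIndependent ℂ (fun i : Fin (N+1) => (((e i : W) : W) : X ⧸ Y)) := by
      have := hli.map' W.subtype (Submodule.ker_subtype W)
      exact this
    exact hdepW (fun i => (e i : W)) hli'
  haveI hWfd : FiniteDimensional ℂ W :=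
    IsNoetherian.iff_fg.1 <| IsNoetherian.iff_rank_lt_aleph0.2 <|
      lt_of_le_of_lt hrank (Cardinal.nat_lt_aleph0 N)
  have hWrk : finrank ℂ W ≤ N := finrank_le_of_rank_le hrank
  -- choose lifts of a basis of W
  let bW := finBasis ℂ W
  have hlift : ∀ k, ∃ x : X, x ∈ Y.map (T : X →ₗ[ℂ] X) ∧ Y.mkQ x = (bW k : X ⧸ Y) := by
    intro k
    obtain ⟨x, hx, hxk⟩ := (bW k).2
    exact ⟨x, hx, hxk⟩
  choose x hxmem hxk using hlift
  refine ⟨Submodule.span ℂ (Set.range x), FiniteDimensional.span_of_finite ℂ (Set.finite_range x),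
    le_trans (finrank_range_le_card x) (by simpa using hWrk), ?_⟩
  rintro v ⟨yv, hyv, rfl⟩
  have hmem : Y.mkQ (T yv) ∈ W := ⟨T yv, ⟨yv, hyv, rfl⟩, rfl⟩
  set wv : W := ⟨Y.mkQ (T yv), hmem⟩ with hwv
  have hsum : Y.mkQ (T yv) = Y.mkQ (∑ k, bW.repr wv k • x k) := by
    have h0 := congrArg (W.subtype) (bW.sum_repr wv)
    simp only [map_sum, map_smul, Submodule.coe_subtype] at h0
    calc Y.mkQ (T yv) = (wv : X ⧸ Y) := rfl
      _ = ∑ k, bW.repr wv k • ((bW k : X ⧸ Y)) := h0.symm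
      _ = ∑ k, bW.repr wv k • Y.mkQ (x k) := by simp_rw [hxk]
      _ = Y.mkQ (∑ k, bW.repr wv k • x k) := by rw [map_sum]; simp_rw [map_smul]
  have hYmem : T yv - (∑ k, bW.repr wv k • x k) ∈ Y := by
    rw [← Submodule.Quotient.mk_eq_zero Y]
    have h3 : Y.mkQ (T yv - ∑ k, bW.repr wv k • x k) = 0 := by
      rw [map_sub, hsum, sub_self]
    exact h3
  have hFmem : (∑ k, bW.repr wv k • x k) ∈ Submodule.span ℂ (Set.range x) :=
    Submodule.sum_mem _ fun k _ => Submodule.smul_mem _ _ (Submodule.subset_span ⟨k, rfl⟩)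
  rw [Submodule.mem_sup]
  exact ⟨T yv - ∑ k, bW.repr wv k • x k, hYmem, ∑ k, bW.repr wv k • x k, hFmem, by abel⟩
end

section
/- Let A be an algebra of bounded operators on a Banach space X, Y a closed subspace, and N ∈ ℕ such that d_{Y,T} ≤ N for all T ∈ A. Then d_{Y,T} ≤ N for every T in the strong operator topology closure of A. -/
/-- In any module, `N+1` vectors lying in a submodule of finrank `≤ N` admit a
nontrivial linear relation. -/
lemma aux_dep_of_mem_small {K M : Type*} [Field K] [AddCommGroup M] [Module K M]
    {N : ℕ} (W : Submodule K M) [FiniteDimensional K W]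
    (hW : Module.finrank K W ≤ N) (w : Fin (N + 1) → M) (hmem : ∀ i, w i ∈ W) :
    ∃ c : Fin (N + 1) → K, (∃ i, c i ≠ 0) ∧ ∑ i, c i • w i = 0 := by
  have hnotind : ¬ LinearIndependent K (fun i => (⟨w i, hmem i⟩ : W)) := by
    intro hind
    have := hind.fintype_card_le_finrank
    simp only [Fintype.card_fin] at this
    omega
  rw [Fintype.not_linearIndependent_iff] at hnotind
  obtain ⟨g, hg, i, hi⟩ := hnotind
  refine ⟨g, ⟨i, hi⟩, ?_⟩
  have h2 : ((∑ i, g i • (⟨w i, hmem i⟩ : W) : W) : M) = 0 := by rw [hg]; rfl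
  simpa [Submodule.coe_sum] using h2

theorem error_dim_bound_of_SOT_closure
    {X : Type*} [NormedAddCommGroup X] [NormedSpace ℂ X] [CompleteSpace X]
    (A : NonUnitalSubalgebra ℂ (X →L[ℂ] X))
    (Y : Submodule ℂ X) (hYc : IsClosed (Y : Set X)) (N : ℕ)
    (hA : ∀ S ∈ A, ∃ F : Submodule ℂ X, FiniteDimensional ℂ F ∧
      Module.finrank ℂ F ≤ N ∧ Y.map (S : X →ₗ[ℂ] X) ≤ Y ⊔ F)
    (T : X →L[ℂ] X)
    -- `T` lies in the closure of `A` in the strong operator topology: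
    (hT : ∀ ε > (0 : ℝ), ∀ s : Finset X, ∃ S ∈ A, ∀ x ∈ s, ‖S x - T x‖ < ε) :
    ∃ F : Submodule ℂ X, FiniteDimensional ℂ F ∧
      Module.finrank ℂ F ≤ N ∧ Y.map (T : X →ₗ[ℂ] X) ≤ Y ⊔ F := by
  classical
  haveI : IsClosed (Y : Set X) := hYc
  -- the quotient map
  set q : X →ₗ[ℂ] X ⧸ Y := Y.mkQ with hq
  have hqnorm : ∀ x : X, ‖q x‖ ≤ ‖x‖ := fun x => Submodule.Quotient.norm_mk_le Y x
  -- Key step: any `N+1` vectors of the form `q (T y)`, `y ∈ Y`, are linearly dependent.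
  have key : ∀ v : Fin (N + 1) → X, (∀ i, v i ∈ Y) →
      ¬ LinearIndependent ℂ (fun i => q (T (v i))) := by
    intro v hv hind
    -- choose approximants
    have hsel : ∀ n : ℕ, ∃ c : Fin (N + 1) → ℂ, (∃ i, c i ≠ 0) ∧
        (∑ i, c i • q (T (v i)) = 0 ∨
          ∃ S : X →L[ℂ] X, (∀ i, ‖S (v i) - T (v i)‖ < 1 / (n + 1)) ∧
            ∑ i, c i • q (S (v i)) = 0) := by
      intro n
      have hpos : (0 : ℝ) < 1 / (n + 1) := by positivity
      obtain ⟨S, hSA, hSx⟩ := hT (1 / (n + 1)) hpos (Finset.image v Finset.univ)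
      have hS : ∀ i, ‖S (v i) - T (v i)‖ < 1 / (n + 1) := fun i =>
        hSx (v i) (Finset.mem_image_of_mem v (Finset.mem_univ i))
      obtain ⟨F, hFfin, hFrk, hFmap⟩ := hA S hSA
      -- the vectors `q (S (v i))` lie in `F.map q`, of finrank ≤ N
      haveI : Module.Finite ℂ (F.map q) := Module.Finite.map F q
      have hmem : ∀ i, q (S (v i)) ∈ F.map q := by
        intro i
        have h1 : S (v i) ∈ Y ⊔ F := hFmap ⟨v i, hv i, rfl⟩
        rw [Submodule.mem_sup] at h1
        obtain ⟨y, hy, f, hf, hyf⟩ := h1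
        have : q (S (v i)) = q f := by
          rw [← hyf]
          simp [hq, Submodule.Quotient.mk_add, (Submodule.Quotient.mk_eq_zero Y).2 hy]
        rw [this]
        exact ⟨f, hf, rfl⟩
      obtain ⟨c, hc0, hcs⟩ := aux_dep_of_mem_small (F.map q)
        (le_trans (Submodule.finrank_map_le q F) hFrk) (fun i => q (S (v i))) hmem
      exact ⟨c, hc0, Or.inr ⟨S, hS, hcs⟩⟩
    choose c hc0 hcrel using hsel
    -- normalize the coefficients to the unit sphere of `Fin (N+1) → ℂ`
    have hcne : ∀ n, c n ≠ 0 := by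
      intro n h
      obtain ⟨i, hi⟩ := hc0 n
      exact hi (by rw [h]; rfl)
    set d : ℕ → (Fin (N + 1) → ℂ) := fun n => ((‖c n‖ : ℂ))⁻¹ • c n with hd
    have hnpos : ∀ n, (0 : ℝ) < ‖c n‖ := fun n => norm_pos_iff.2 (hcne n)
    have hdsphere : ∀ n, d n ∈ Metric.sphere (0 : Fin (N + 1) → ℂ) 1 := by
      intro n
      simp only [hd, Metric.mem_sphere, dist_zero_right, norm_smul, norm_inv,
        Complex.norm_real, Real.norm_eq_abs, abs_of_pos (hnpos n)]
      exact inv_mul_cancel₀ (ne_of_gt (hnpos n))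
    -- extract a convergent subsequence
    obtain ⟨e, hesp, φ, hφ, hlim⟩ :=
      (isCompact_sphere (0 : Fin (N + 1) → ℂ) 1).tendsto_subseq hdsphere
    -- the two candidate limits
    have hrel : ∀ n, ∑ i, d n i • q (T (v i)) = 0 ∨
        ∃ S : X →L[ℂ] X, (∀ i, ‖S (v i) - T (v i)‖ < 1 / (n + 1)) ∧
          ∑ i, d n i • q (S (v i)) = 0 := by
      intro n
      rcases hcrel n with h | ⟨S, hS, h⟩
      · left
        have : ∑ i, d n i • q (T (v i)) = ((‖c n‖ : ℂ))⁻¹ • ∑ i, c n i • q (T (v i)) := by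
          rw [Finset.smul_sum]
          refine Finset.sum_congr rfl fun i _ => ?_
          simp [hd, smul_smul]
        rw [this, h, smul_zero]
      · right
        refine ⟨S, hS, ?_⟩
        have : ∑ i, d n i • q (S (v i)) = ((‖c n‖ : ℂ))⁻¹ • ∑ i, c n i • q (S (v i)) := by
          rw [Finset.smul_sum]
          refine Finset.sum_congr rfl fun i _ => ?_
          simp [hd, smul_smul]
        rw [this, h, smul_zero]
    -- limit of the relations: `∑ e i • q (T (v i)) = 0`.
    have heq : ∑ i, e i • q (T (v i)) = 0 := by
      -- the sequence `u k := ∑ i, d (φ k) i • (approx at φ k)` is identically 0 and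
      -- converges to `∑ i, e i • q (T (v i))`.
      -- choose, for each n, a vector family `w n : Fin (N+1) → X ⧸ Y` used in the relation
      have hw : ∀ n : ℕ, ∃ w : Fin (N + 1) → X ⧸ Y,
          (∀ i, ‖w i - q (T (v i))‖ < 1 / ((n : ℝ) + 1)) ∧ ∑ i, d n i • w i = 0 := by
        intro n
        rcases hrel n with h | ⟨S, hS, h⟩
        · exact ⟨fun i => q (T (v i)), fun i => by
            simpa using (by positivity : (0:ℝ) < 1 / (n + 1)), h⟩
        · refine ⟨fun i => q (S (v i)), fun i => ?_, h⟩
          calc ‖q (S (v i)) - q (T (v i))‖ = ‖q (S (v i) - T (v i))‖ := by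
                rw [map_sub]
            _ ≤ ‖S (v i) - T (v i)‖ := hqnorm _
            _ < 1 / (n + 1) := hS i
      choose w hwlt hwsum using hw
      have hwtend : ∀ i, Filter.Tendsto (fun k => w (φ k) i) Filter.atTop
          (nhds (q (T (v i)))) := by
        intro i
        rw [tendsto_iff_norm_sub_tendsto_zero]
        have hb : ∀ k : ℕ, ‖w (φ k) i - q (T (v i))‖ ≤ 1 / ((k : ℝ) + 1) := by
          intro k
          refine (hwlt (φ k) i).le.trans ?_
          have h0 : k ≤ φ k := hφ.le_apply
          have h1 : (k : ℝ) + 1 ≤ (φ k : ℝ) + 1 := by exact_mod_cast by omega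
          exact one_div_le_one_div_of_le (by positivity) h1
        exact squeeze_zero (fun k => norm_nonneg _) hb
          tendsto_one_div_add_atTop_nhds_zero_nat
      have hdtend : ∀ i, Filter.Tendsto (fun k => d (φ k) i) Filter.atTop (nhds (e i)) := by
        intro i
        have := hlim
        rw [tendsto_pi_nhds] at this
        exact this i
      have hsumtend : Filter.Tendsto (fun k => ∑ i, d (φ k) i • w (φ k) i) Filter.atTop
          (nhds (∑ i, e i • q (T (v i)))) := by
        apply tendsto_finset_sum
        intro i _
        exact (hdtend i).smul (hwtend i)
      have hzero : Filter.Tendsto (fun k => ∑ i, d (φ k) i • w (φ k) i) Filter.atTop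
          (nhds (0 : X ⧸ Y)) := by
        have hzf : (fun k => ∑ i, d (φ k) i • w (φ k) i) = fun _ => (0 : X ⧸ Y) :=
          funext fun k => hwsum (φ k)
        rw [hzf]
        exact tendsto_const_nhds
      exact tendsto_nhds_unique hsumtend hzero
    -- contradiction with linear independence, since `e ≠ 0`
    have hene : e ≠ 0 := by
      intro h
      rw [h] at hesp
      simp at hesp
    obtain ⟨i, hi⟩ := Function.ne_iff.1 hene
    exact hi ((Fintype.linearIndependent_iff.1 hind) e heq i)
  -- Now transfer: the image of `T(Y)` in the quotient has rank ≤ N.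
  set R : Submodule ℂ (X ⧸ Y) := (Y.map (T : X →ₗ[ℂ] X)).map q with hR
  have hrank : Module.rank ℂ R ≤ N := by
    apply rank_le
    intro s hs
    by_contra hcard
    push_neg at hcard
    -- extract N+1 independent elements
    have hle : N + 1 ≤ s.card := hcard
    -- embedding Fin (N+1) into s
    have : ∃ f : Fin (N + 1) → s, Function.Injective f := by
      have : N + 1 ≤ Fintype.card s := by simpa using hle
      obtain ⟨f⟩ := Function.Embedding.nonempty_of_card_le (α := Fin (N + 1)) (β := s)
        (by simpa using this)
      exact ⟨f, f.injective⟩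
    obtain ⟨f, hf⟩ := this
    have hind : LinearIndependent ℂ (fun i : Fin (N + 1) => ((f i : R) : X ⧸ Y)) := by
      have h1 : LinearIndependent ℂ (fun i : s => ((i : R) : X ⧸ Y)) := by
        have := hs.map' R.subtype (Submodule.ker_subtype R)
        exact this
      exact h1.comp f hf
    -- each element of R is q (T y) for some y ∈ Y
    have hform : ∀ i : Fin (N + 1), ∃ y : X, y ∈ Y ∧ q (T y) = ((f i : R) : X ⧸ Y) := by
      intro i
      have hmem2 : ((f i : R) : X ⧸ Y) ∈ Submodule.map q (Submodule.map (T : X →ₗ[ℂ] X) Y) :=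
        (f i : R).2
      obtain ⟨x, hx, hqx⟩ := hmem2
      obtain ⟨y, hy, hTy⟩ := hx
      exact ⟨y, hy, by subst hTy; exact hqx⟩
    choose y hyY hyq using hform
    have := key y hyY
    apply this
    have : (fun i => q (T (y i))) = fun i : Fin (N + 1) => ((f i : R) : X ⧸ Y) := by
      funext i; exact hyq i
    rw [this]
    exact hind
  haveI hRfin : FiniteDimensional ℂ R := IsNoetherian.iff_fg.1
    (IsNoetherian.iff_rank_lt_aleph0.2 (lt_of_le_of_lt hrank (Cardinal.nat_lt_aleph0 N)))
  have hRrk : Module.finrank ℂ R ≤ N := Module.finrank_le_of_rank_le hrank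
  -- choose a basis of R and lift it to X
  let b := Module.finBasis ℂ R
  have hbcard : Module.finrank ℂ R = Module.finrank ℂ R := rfl
  -- lift basis vectors
  have hsurj : Function.Surjective q := Submodule.mkQ_surjective Y
  have hlift : ∀ j : Fin (Module.finrank ℂ R), ∃ x : X, q x = (b j : X ⧸ Y) := fun j =>
    hsurj (b j : X ⧸ Y)
  choose x hx using hlift
  refine ⟨Submodule.span ℂ (Set.range x), ?_, ?_, ?_⟩
  · exact FiniteDimensional.span_of_finite ℂ (Set.finite_range x)
  · calc Module.finrank ℂ (Submodule.span ℂ (Set.range x)) ≤ (Set.range x).toFinset.card :=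
        finrank_span_le_card _
      _ ≤ Fintype.card (Fin (Module.finrank ℂ R)) := by
          rw [Set.toFinset_range]
          exact Finset.card_image_le.trans (by simp)
      _ ≤ N := by simpa using hRrk
  · -- Y.map T ≤ Y ⊔ span (range x)
    intro z hz
    obtain ⟨yy, hyy, rfl⟩ := hz
    -- q (T yy) ∈ R = span of the b j = image of span (range x)
    have hmemR : q (T yy) ∈ R := ⟨T yy, ⟨yy, hyy, rfl⟩, rfl⟩
    have hRspan : R ≤ Submodule.map q (Submodule.span ℂ (Set.range x)) := by
      intro u hu
      have h1 : u ∈ Submodule.map R.subtype (Submodule.span ℂ (Set.range b)) := by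
        rw [b.span_eq, Submodule.map_subtype_top]
        exact hu
      rw [Submodule.map_span] at h1
      have h2 : R.subtype '' Set.range b = q '' Set.range x := by
        rw [← Set.range_comp, ← Set.range_comp]
        refine congrArg Set.range (funext fun j => ?_)
        simp only [Function.comp_apply, Submodule.coe_subtype]
        exact (hx j).symm
      rw [h2, ← Submodule.map_span] at h1
      exact h1
    have := hRspan hmemR
    obtain ⟨ff, hff, hffq⟩ := this
    -- T yy - ff ∈ Y
    have hker : T yy - ff ∈ Y := by
      rw [← Submodule.Quotient.mk_eq_zero Y]
      have : q (T yy - ff) = 0 := by rw [map_sub, hffq, sub_self]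
      exact this
    have : (T yy : X) = (T yy - ff) + ff := by abel
    change T yy ∈ Y ⊔ Submodule.span ℂ (Set.range x)
    rw [this]
    exact Submodule.add_mem_sup hker hff
end

section
/- Let A be a norm-closed algebra of bounded operators on a Banach space X and Y a half-space. Then Y is almost invariant under A if and only if Y is almost invariant under the WOT-closure of A. -/
open Submodule Set Module

section AuxLemmas

variable {X : Type*} [NormedAddCommGroup X] [NormedSpace ℂ X]

/-- All `n × n` "determinants" of `T` restricted to `Y`, modulo `Y`, vanish. This is a
closed condition (in norm and in WOT) expressing that the rank of `T` modulo `Y` on `Y`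
is less than `n`. -/
def DetZero (Y : Submodule ℂ X) (n : ℕ) (T : X →L[ℂ] X) : Prop :=
  ∀ (y : Fin n → Y) (f : Fin n → (X →L[ℂ] ℂ)), (∀ j, ∀ x ∈ Y, f j x = 0) →
    (Matrix.of fun i j => f j (T (y i))).det = 0

lemma detZero_of_le {Y F : Submodule ℂ X} (hF : FiniteDimensional ℂ F) {T : X →L[ℂ] X}
    {n : ℕ} (hn : finrank ℂ F < n) (hT : Y.map (T : X →ₗ[ℂ] X) ≤ Y ⊔ F) : DetZero Y n T := by
  intro y f hf
  have h : ∀ i : Fin n, ∃ v : F, T (y i) - (v : X) ∈ Y := by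
    intro i
    have : (T (y i) : X) ∈ Y ⊔ F := hT ⟨y i, (y i).2, rfl⟩
    obtain ⟨u, hu, v, hv, huv⟩ := Submodule.mem_sup.mp this
    exact ⟨⟨v, hv⟩, by simpa [← huv] using hu⟩
  choose v hv using h
  have hentry : ∀ i j, f j (T (y i)) = f j (v i : X) := by
    intro i j
    have h1 := hf j _ (hv i)
    have h2 := map_sub (f j) (T (y i)) (v i : X)
    rw [h1] at h2
    have := h2.symm
    linear_combination this
  -- the v i are linearly dependent
  have hdep : ¬ LinearIndependent ℂ v := by
    intro hind
    have := hind.fintype_card_le_finrank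
    simp [Fintype.card_fin] at this
    omega
  obtain ⟨g, hg, i₀, hi₀⟩ := Fintype.not_linearIndependent_iff.mp hdep
  rw [← Matrix.exists_vecMul_eq_zero_iff]
  refine ⟨g, fun hg0 => hi₀ (congrFun hg0 i₀), ?_⟩
  funext j
  have : ((∑ i, g i • v i : F) : X) = 0 := by rw [hg]; rfl
  have hsum : (∑ i, g i • (v i : X)) = 0 := by
    simpa using this
  simp only [Matrix.vecMul, dotProduct, Matrix.of_apply, Pi.zero_apply]
  calc (∑ i, g i * f j (T (y i))) = ∑ i, g i * f j (v i : X) := by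
        simp_rw [hentry]
    _ = f j (∑ i, g i • (v i : X)) := by rw [map_sum]; simp_rw [map_smul, smul_eq_mul]
    _ = 0 := by rw [hsum, map_zero]

/-- continuous quotient map -/
noncomputable def mkQc (Y : Submodule ℂ X) : X →L[ℂ] X ⧸ Y :=
  Y.mkQ.mkContinuous 1 fun x => by
    simpa [one_mul] using Submodule.Quotient.norm_mk_le Y x

@[simp] lemma mkQc_apply (Y : Submodule ℂ X) (x : X) : mkQc Y x = Y.mkQ x := rfl

lemma le_of_detZero {Y : Submodule ℂ X} (hYc : IsClosed (Y : Set X)) {n : ℕ} {T : X →L[ℂ] X}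
    (h : DetZero Y n T) :
    ∃ F : Submodule ℂ X, FiniteDimensional ℂ F ∧ finrank ℂ F < n ∧ Y.map (T : X →ₗ[ℂ] X) ≤ Y ⊔ F := by
  haveI := hYc
  classical
  set W : Submodule ℂ (X ⧸ Y) := (Y.map (T : X →ₗ[ℂ] X)).map Y.mkQ with hW
  obtain ⟨b, hbS, hbspan, hbli⟩ := exists_linearIndependent ℂ (W : Set (X ⧸ Y))
  -- no n distinct elements of b
  have claim : ∀ t : Finset (X ⧸ Y), ↑t ⊆ b → t.card ≠ n := by
    intro t ht hcard
    have e : Fin n ≃ t := (Fintype.equivFinOfCardEq (by simpa using hcard)).symm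
    set v : Fin n → X ⧸ Y := fun i => (e i : X ⧸ Y) with hvdef
    have hvW : ∀ i, v i ∈ W := fun i => hbS (ht (e i).2)
    have hvind : LinearIndependent ℂ v := by
      have : v = (fun x : b => (x : X ⧸ Y)) ∘ (fun i => (⟨(e i : X ⧸ Y), ht (e i).2⟩ : b)) := rfl
      rw [this]
      refine hbli.comp _ fun i j hij => ?_
      exact e.injective (Subtype.ext (by simpa [Subtype.ext_iff] using hij))
    -- choose preimages in Y
    have hpre : ∀ i, ∃ u : Y, Y.mkQ (T u) = v i := by
      intro i
      obtain ⟨z, hz, hz2⟩ := (Submodule.mem_map).mp (hvW i)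
      obtain ⟨u, hu, rfl⟩ := (Submodule.mem_map).mp hz
      exact ⟨⟨u, hu⟩, hz2⟩
    choose u hu using hpre
    -- dual functionals
    set p : Submodule ℂ (X ⧸ Y) := span ℂ (Set.range v) with hp
    haveI : FiniteDimensional ℂ p := FiniteDimensional.span_of_finite ℂ (Set.finite_range v)
    set B : Basis (Fin n) ℂ p := Basis.span hvind with hB
    have hgex : ∀ j : Fin n, ∃ g : (X ⧸ Y) →L[ℂ] ℂ, ∀ x : p, g x = B.coord j x := by
      intro j
      obtain ⟨g, hg, -⟩ :=
        exists_extension_norm_eq p (LinearMap.toContinuousLinearMap (B.coord j))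
      exact ⟨g, fun x => by simpa using hg x⟩
    choose g hg using hgex
    have hdet := h u (fun j => (g j).comp (mkQc Y)) (by
      intro j x hx
      have : Y.mkQ x = 0 := (Submodule.Quotient.mk_eq_zero Y).mpr hx
      simp [this])
    have hentry : ∀ i j, ((g j).comp (mkQc Y)) (T (u i)) = if j = i then 1 else 0 := by
      intro i j
      have hv : v i ∈ p := subset_span (Set.mem_range_self i)
      have hBi : (⟨v i, hv⟩ : p) = B i := by
        apply Subtype.ext
        show v i = (B i : X ⧸ Y)
        rw [hB]
        exact congrArg Subtype.val (Basis.span_apply hvind i).symm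
      calc ((g j).comp (mkQc Y)) (T (u i)) = g j (v i) := by simp [hu i]
        _ = B.coord j ⟨v i, hv⟩ := hg j ⟨v i, hv⟩
        _ = B.coord j (B i) := by rw [hBi]
        _ = if j = i then 1 else 0 := by
            rw [Basis.coord_apply, Basis.repr_self, Finsupp.single_apply]
            simp [eq_comm]
    have : (Matrix.of fun i j => ((g j).comp (mkQc Y)) (T (u i))).det = 1 := by
      have : (Matrix.of fun i j => ((g j).comp (mkQc Y)) (T (u i))) = (1 : Matrix (Fin n) (Fin n) ℂ) := by
        ext i j
        rw [Matrix.of_apply, hentry i j, Matrix.one_apply]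
        simp [eq_comm]
      rw [this, Matrix.det_one]
    rw [hdet] at this
    exact zero_ne_one this
  -- b is finite with fewer than n elements
  have hbfin : b.Finite := by
    by_contra hinf
    obtain ⟨t, htb, htc⟩ := Set.Infinite.exists_subset_card_eq hinf n
    exact claim t htb htc
  have hcard : hbfin.toFinset.card < n := by
    by_contra hge
    push_neg at hge
    obtain ⟨t, htb, htc⟩ := Finset.exists_subset_card_eq hge
    exact claim t (fun x hx => by simpa using hbfin.mem_toFinset.mp (htb hx)) htc
  -- build F from preimages of b
  have hpre : ∀ x : b, ∃ w : X, w ∈ Y.map (T : X →ₗ[ℂ] X) ∧ Y.mkQ w = (x : X ⧸ Y) := by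
    intro x
    obtain ⟨z, hz, hz2⟩ := (Submodule.mem_map).mp (hbS x.2)
    exact ⟨z, hz, hz2⟩
  choose z hz hz2 using hpre
  haveI : Finite b := hbfin
  haveI : Fintype b := hbfin.fintype
  refine ⟨span ℂ (Set.range z), FiniteDimensional.span_of_finite ℂ (Set.finite_range z), ?_, ?_⟩
  · -- finrank bound
    have h1 : finrank ℂ (span ℂ (Set.range z)) ≤ Fintype.card b := finrank_range_le_card z
    have h2 : Fintype.card b = hbfin.toFinset.card := by
      simp [Set.Finite.card_toFinset]
    omega
  · -- Y.map T ≤ Y ⊔ F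
    rintro x hx
    have hmk : Y.mkQ x ∈ W := Submodule.mem_map_of_mem hx
    have hspan : (W : Set (X ⧸ Y)) ⊆ ↑(span ℂ b) := by
      rw [hbspan]; exact Submodule.subset_span
    have hble : span ℂ b ≤ (span ℂ (Set.range z)).map Y.mkQ := by
      rw [Submodule.span_le]
      intro w hw
      exact ⟨z ⟨w, hw⟩, Submodule.subset_span (Set.mem_range_self _), hz2 ⟨w, hw⟩⟩
    have : Y.mkQ x ∈ (span ℂ (Set.range z)).map Y.mkQ := hble (hspan hmk)
    obtain ⟨w, hw, hweq⟩ := (Submodule.mem_map).mp this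
    have : x - w ∈ Y := by
      rw [← Submodule.ker_mkQ Y, LinearMap.mem_ker, map_sub, hweq, sub_self]
    have := Submodule.add_mem_sup this hw
    simpa using this

lemma isClosed_detZero (Y : Submodule ℂ X) (n : ℕ) :
    IsClosed {T : X →L[ℂ] X | DetZero Y n T} := by
  have : {T : X →L[ℂ] X | DetZero Y n T} =
      ⋂ (y : Fin n → Y) (f : Fin n → (X →L[ℂ] ℂ)) (_ : ∀ j, ∀ x ∈ Y, f j x = 0),
        {T : X →L[ℂ] X | (Matrix.of fun i j => f j (T (y i))).det = 0} := by
    ext T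
    simp only [Set.mem_setOf_eq, Set.mem_iInter, DetZero]
  rw [this]
  refine isClosed_iInter fun y => isClosed_iInter fun f => isClosed_iInter fun _ => ?_
  refine isClosed_eq ?_ continuous_const
  refine Continuous.matrix_det (continuous_matrix fun i j => ?_)
  exact (f j).continuous.comp (ContinuousLinearMap.apply ℂ X ((y i) : X)).continuous

lemma detZero_of_wotClosure {Y : Submodule ℂ X} {s : Set (X →L[ℂ] X)} {n : ℕ}
    (hA : ∀ S ∈ s, DetZero Y n S) {T : X →L[ℂ] X}
    (hT : ContinuousLinearMapWOT.ofCLM T ∈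
      closure (ContinuousLinearMapWOT.ofCLM '' s)) :
    DetZero Y n T := by
  intro y f hf
  set G : (X →WOT[ℂ] X) → ℂ :=
    fun B => (Matrix.of fun i j => f j (B ((y i) : X))).det with hG
  have hGc : Continuous G := by
    refine Continuous.matrix_det (continuous_matrix fun i j => ?_)
    exact ContinuousLinearMapWOT.continuous_dual_apply ((y i) : X) (f j)
  have hclosed : IsClosed {B : X →WOT[ℂ] X | G B = 0} := isClosed_eq hGc continuous_const
  have hsub : ContinuousLinearMapWOT.ofCLM '' s ⊆ {B | G B = 0} := by
    rintro - ⟨S, hS, rfl⟩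
    show G (ContinuousLinearMapWOT.ofCLM S) = 0
    have : ∀ x : X, (ContinuousLinearMapWOT.ofCLM S) x = S x := fun x => rfl
    simpa [hG, this] using hA S hS y f hf
  have := hclosed.closure_subset_iff.mpr hsub hT
  simpa [hG] using this

end AuxLemmas

theorem almost_invariant_iff_WOT_closure_almost_invariant
    {X : Type*} [NormedAddCommGroup X] [NormedSpace ℂ X] [CompleteSpace X]
    (A : NonUnitalSubalgebra ℂ (X →L[ℂ] X))
    (hAc : IsClosed (A : Set (X →L[ℂ] X)))
    (Y : Submodule ℂ X) (hY : IsHalfSpace Y) :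
    (∀ T ∈ A, ∃ F : Submodule ℂ X, FiniteDimensional ℂ F ∧ Y.map (T : X →ₗ[ℂ] X) ≤ Y ⊔ F) ↔
    (∀ T : X →L[ℂ] X,
      ContinuousLinearMapWOT.ofCLM T ∈
        closure (ContinuousLinearMapWOT.ofCLM '' (A : Set (X →L[ℂ] X))) →
      ∃ F : Submodule ℂ X, FiniteDimensional ℂ F ∧ Y.map (T : X →ₗ[ℂ] X) ≤ Y ⊔ F) := by
  obtain ⟨hYc, -, -⟩ := hY
  constructor
  · intro hA T hT
    -- Baire category: uniform bound on the rank of the defect on A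
    haveI : CompleteSpace (A : Set (X →L[ℂ] X)) := hAc.completeSpace_coe
    haveI : Nonempty (A : Set (X →L[ℂ] X)) := ⟨⟨0, zero_mem A⟩⟩
    haveI : BaireSpace (A : Set (X →L[ℂ] X)) :=
      by
        haveI : TopologicalSpace.IsCompletelyPseudoMetrizableSpace (A : Set (X →L[ℂ] X)) :=
          TopologicalSpace.IsCompletelyPseudoMetrizableSpace.of_completeSpace_pseudometrizable
        exact BaireSpace.of_completelyPseudoMetrizable
    set g : ℕ → Set (A : Set (X →L[ℂ] X)) :=
      fun m => {S | DetZero Y (m + 1) (S : X →L[ℂ] X)} with hgdef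
    have hgclosed : ∀ m, IsClosed (g m) :=
      fun m => (isClosed_detZero Y (m + 1)).preimage continuous_subtype_val
    have hgcover : ⋃ m, g m = Set.univ := by
      ext S
      simp only [Set.mem_iUnion, Set.mem_univ, iff_true]
      obtain ⟨F, hF, hFle⟩ := hA (S : X →L[ℂ] X) S.2
      exact ⟨finrank ℂ F, detZero_of_le hF (Nat.lt_succ_self _) hFle⟩
    obtain ⟨m, hm⟩ := nonempty_interior_of_iUnion_of_closed hgclosed hgcover
    obtain ⟨T₀, hT₀⟩ := hm
    obtain ⟨ε, hε, hball⟩ := Metric.isOpen_iff.mp isOpen_interior T₀ hT₀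
    have hball' : ∀ S : (A : Set (X →L[ℂ] X)), dist S T₀ < ε → DetZero Y (m + 1) (S : X →L[ℂ] X) :=
      fun S hS => interior_subset (hball hS)
    -- uniform bound: every S ∈ A has defect of rank ≤ 2 m
    have huniform : ∀ S ∈ A, DetZero Y (2 * m + 1) S := by
      intro S hS
      set δ : ℝ := ε / (2 * (‖S‖ + 1)) with hδdef
      have hnorm : (0:ℝ) < ‖S‖ + 1 := by positivity
      have hδ : 0 < δ := by positivity
      have hδS : δ * ‖S‖ < ε := by
        rw [hδdef, div_mul_eq_mul_div, div_lt_iff₀ (by positivity)]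
        have h1 : ‖S‖ < 2 * (‖S‖ + 1) := by linarith [norm_nonneg S]
        calc ε * ‖S‖ ≤ ε * ‖S‖ := le_refl _
          _ < ε * (2 * (‖S‖ + 1)) := by
              apply mul_lt_mul_of_pos_left _ hε
              linarith [norm_nonneg S]
      set Sc : X →L[ℂ] X := (T₀ : X →L[ℂ] X) + (δ : ℂ) • S with hScdef
      have hS' : Sc ∈ A := add_mem T₀.2 (SMulMemClass.smul_mem ((δ : ℂ)) hS)
      have hdist : dist (⟨Sc, hS'⟩ : (A : Set (X →L[ℂ] X))) T₀ < ε := by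
        rw [Subtype.dist_eq, dist_eq_norm]
        have h4 : Sc - (T₀ : X →L[ℂ] X) = (δ : ℂ) • S := by rw [hScdef]; abel
        rw [h4]
        have h5 : ‖(δ : ℂ) • S‖ = δ * ‖S‖ := by
          rw [norm_smul ((δ : ℂ)) S, Complex.norm_real, Real.norm_eq_abs, abs_of_pos hδ]
        rw [h5]
        exact hδS
      have h1 : DetZero Y (m + 1) Sc := hball' ⟨Sc, hS'⟩ hdist
      have h0 : DetZero Y (m + 1) (T₀ : X →L[ℂ] X) := by
        refine hball' T₀ ?_
        rw [dist_self]; exact hε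
      obtain ⟨F₁, hF₁, hr₁, hle₁⟩ := le_of_detZero hYc h0
      obtain ⟨F₂, hF₂, hr₂, hle₂⟩ := le_of_detZero hYc h1
      haveI := hF₁
      haveI := hF₂
      have hfr : finrank ℂ ((F₁ ⊔ F₂ : Submodule ℂ X)) < 2 * m + 1 := by
        have := Submodule.finrank_add_le_finrank_add_finrank F₁ F₂
        omega
      refine detZero_of_le inferInstance hfr ?_
      rintro - ⟨x, hx, rfl⟩
      have hδne : ((δ : ℂ)) ≠ 0 := by
        simpa using hδ.ne'
      have heq : S x = ((δ : ℂ))⁻¹ • (Sc x - (T₀ : X →L[ℂ] X) x) := by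
        have h4 : Sc x - (T₀ : X →L[ℂ] X) x = (δ : ℂ) • S x := by
          rw [hScdef, ContinuousLinearMap.add_apply, ContinuousLinearMap.smul_apply,
            add_sub_cancel_left]
        rw [h4, smul_smul, inv_mul_cancel₀ hδne, one_smul]
      have h2 : Sc x ∈ Y ⊔ (F₁ ⊔ F₂) := by
        refine SetLike.le_def.mp (sup_le_sup_left le_sup_right Y) ?_
        exact hle₂ ⟨x, hx, rfl⟩
      have h3 : (T₀ : X →L[ℂ] X) x ∈ Y ⊔ (F₁ ⊔ F₂) := by
        refine SetLike.le_def.mp (sup_le_sup_left le_sup_left Y) ?_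
        exact hle₁ ⟨x, hx, rfl⟩
      rw [ContinuousLinearMap.coe_coe, heq]
      exact Submodule.smul_mem _ _ (sub_mem h2 h3)
    have hTdet : DetZero Y (2 * m + 1) T := detZero_of_wotClosure huniform hT
    obtain ⟨F, hF, -, hFle⟩ := le_of_detZero hYc hTdet
    exact ⟨F, hF, hFle⟩
  · intro h T hTA
    exact h T (subset_closure (Set.mem_image_of_mem _ hTA))
end

section
/- Let Y be a half-space in a Banach space X almost invariant under T ∈ L(X). Then D_T(Y) = {y ∈ Y : Ty ∈ Y} is a half-space, and the codimension of D_T(Y) in Y equals d_{Y,T}. -/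
/-- `errDim Y T` is the minimal dimension of a finite-dimensional subspace `F`
with `T Y ⊆ Y + F` (and `⊤` if no such `F` exists). -/
noncomputable def errDim {X : Type*} [NormedAddCommGroup X] [NormedSpace ℂ X]
    (Y : Submodule ℂ X) (T : X →L[ℂ] X) : ℕ∞ :=
  sInf {n : ℕ∞ | ∃ F : Submodule ℂ X, FiniteDimensional ℂ F ∧
    (Module.finrank ℂ F : ℕ∞) = n ∧ Y.map (T : X →ₗ[ℂ] X) ≤ Y ⊔ F}

open Submodule Module

theorem going_downwards_halfspace
    {X : Type*} [NormedAddCommGroup X] [NormedSpace ℂ X] [CompleteSpace X]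
    (Y : Submodule ℂ X) (hY : IsHalfSpace Y) (T : X →L[ℂ] X)
    (hai : ∃ F : Submodule ℂ X, FiniteDimensional ℂ F ∧ Y.map (T : X →ₗ[ℂ] X) ≤ Y ⊔ F) :
    IsHalfSpace (Y ⊓ Y.comap (T : X →ₗ[ℂ] X)) ∧
      (Module.finrank ℂ (↥Y ⧸ (Y ⊓ Y.comap (T : X →ₗ[ℂ] X)).comap Y.subtype) : ℕ∞) =
        errDim Y T := by
  obtain ⟨hclosed, hinf, hcoinf⟩ := hY
  set D' : Submodule ℂ Y := (Y ⊓ Y.comap (T : X →ₗ[ℂ] X)).comap Y.subtype with hD'def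
  -- the key linear map Y → X ⧸ Y
  set φ : Y →ₗ[ℂ] X ⧸ Y := Y.mkQ ∘ₗ (T : X →ₗ[ℂ] X) ∘ₗ Y.subtype with hφdef
  have hker : LinearMap.ker φ = D' := by
    ext y
    simp [hφdef, hD'def, Submodule.Quotient.mk_eq_zero, y.2]
  set G : Submodule ℂ (X ⧸ Y) := (Y.map (T : X →ₗ[ℂ] X)).map Y.mkQ with hGdef
  have hrange : LinearMap.range φ = G := by
    rw [hφdef, hGdef, LinearMap.range_comp, LinearMap.range_comp,
      Submodule.range_subtype]
  -- mapping under mkQ kills Y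
  have hmapY : Y.map Y.mkQ = ⊥ := by
    rw [eq_bot_iff]
    rintro x ⟨y, hy, rfl⟩
    simpa [Submodule.Quotient.mk_eq_zero] using hy
  have hGle : ∀ F : Submodule ℂ X, Y.map (T : X →ₗ[ℂ] X) ≤ Y ⊔ F → G ≤ F.map Y.mkQ := by
    intro F hle
    calc G ≤ (Y ⊔ F).map Y.mkQ := Submodule.map_mono hle
      _ = Y.map Y.mkQ ⊔ F.map Y.mkQ := Submodule.map_sup _ _ _
      _ = F.map Y.mkQ := by rw [hmapY, bot_sup_eq]
  -- G is finite dimensional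
  obtain ⟨F₁, hF₁fd, hF₁le⟩ := hai
  have hGfd : FiniteDimensional ℂ G := by
    haveI := hF₁fd
    haveI : FiniteDimensional ℂ (F₁.map Y.mkQ) := Module.Finite.map F₁ Y.mkQ
    exact Submodule.finiteDimensional_of_le (hGle F₁ hF₁le)
  -- Y ⧸ D' ≃ G
  have e : (↥Y ⧸ D') ≃ₗ[ℂ] G :=
    (Submodule.quotEquivOfEq _ _ hker.symm).trans
      ((φ.quotKerEquivRange).trans (LinearEquiv.ofEq _ _ hrange))
  have hQfd : FiniteDimensional ℂ (↥Y ⧸ D') := e.symm.finiteDimensional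
  have hfr : finrank ℂ (↥Y ⧸ D') = finrank ℂ G := e.finrank_eq
  set k : ℕ := finrank ℂ G with hk
  -- construct a minimal F₀ realizing k
  obtain ⟨F₀, hF₀fd, hF₀rank, hF₀le⟩ :
      ∃ F₀ : Submodule ℂ X, FiniteDimensional ℂ F₀ ∧ finrank ℂ F₀ = k ∧
        Y.map (T : X →ₗ[ℂ] X) ≤ Y ⊔ F₀ := by
    obtain b := finBasis ℂ G
    choose g hg using fun i => Y.mkQ_surjective (b i : X ⧸ Y)
    have hF₀fd : FiniteDimensional ℂ (span ℂ (Set.range g)) :=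
      FiniteDimensional.span_of_finite ℂ (Set.finite_range g)
    have hmap : (span ℂ (Set.range g)).map Y.mkQ = G := by
      rw [Submodule.map_span, ← Set.range_comp]
      have h1 : (⇑Y.mkQ ∘ g) = fun i => ((b i : X ⧸ Y)) := by
        funext i; exact hg i
      rw [h1]
      have h2 : (Set.range fun i => ((b i : X ⧸ Y))) = G.subtype '' Set.range b := by
        rw [← Set.range_comp]; rfl
      rw [h2, ← Submodule.map_span, b.span_eq, Submodule.map_top,
        Submodule.range_subtype]
    refine ⟨span ℂ (Set.range g), hF₀fd, le_antisymm ?_ ?_, ?_⟩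
    · calc finrank ℂ (span ℂ (Set.range g)) ≤ Fintype.card (Fin k) :=
            finrank_range_le_card g
        _ = k := Fintype.card_fin k
    · calc k = finrank ℂ ((span ℂ (Set.range g)).map Y.mkQ) := by rw [hmap]
        _ ≤ finrank ℂ (span ℂ (Set.range g)) := Submodule.finrank_map_le _ _
    · rintro x hx
      have hxG : Y.mkQ x ∈ G := ⟨x, hx, rfl⟩
      rw [← hmap] at hxG
      obtain ⟨f, hf, hfx⟩ := hxG
      have : x - f ∈ Y := by
        have h := (Submodule.Quotient.eq Y).mp hfx
        simpa [neg_sub] using Y.neg_mem h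
      rw [show x = (x - f) + f by abel]
      exact Submodule.add_mem _ (Submodule.mem_sup_left ‹x - f ∈ Y›)
        (Submodule.mem_sup_right hf)
  -- errDim Y T = k
  have herr : errDim Y T = (k : ℕ∞) := by
    apply le_antisymm
    · exact sInf_le ⟨F₀, hF₀fd, by rw [hF₀rank], hF₀le⟩
    · refine le_sInf ?_
      rintro n ⟨F, hFfd, rfl, hFle⟩
      haveI := hFfd
      haveI : FiniteDimensional ℂ (F.map Y.mkQ) := Module.Finite.map F Y.mkQ
      have h1 : k ≤ finrank ℂ (F.map Y.mkQ) := Submodule.finrank_mono (hGle F hFle)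
      have h2 : finrank ℂ (F.map Y.mkQ) ≤ finrank ℂ F := Submodule.finrank_map_le _ _
      exact_mod_cast h1.trans h2
  -- half-space properties
  have hDclosed : IsClosed ((Y ⊓ Y.comap (T : X →ₗ[ℂ] X) : Submodule ℂ X) : Set X) := by
    have : ((Y ⊓ Y.comap (T : X →ₗ[ℂ] X) : Submodule ℂ X) : Set X) = (Y : Set X) ∩ T ⁻¹' (Y : Set X) :=
      rfl
    rw [this]
    exact hclosed.inter (hclosed.preimage T.continuous)
  have hDinf : ¬ FiniteDimensional ℂ (Y ⊓ Y.comap (T : X →ₗ[ℂ] X) : Submodule ℂ X) := by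
    intro hfd
    apply hinf
    have eD : D' ≃ₗ[ℂ] (Y ⊓ Y.comap (T : X →ₗ[ℂ] X) : Submodule ℂ X) :=
      Submodule.comapSubtypeEquivOfLe inf_le_left
    haveI : FiniteDimensional ℂ D' := eD.symm.finiteDimensional
    have eP : ((↥Y ⧸ D') × D') ≃ₗ[ℂ] Y :=
      Classical.choice (quotient_prod_linearEquiv D')
    exact eP.finiteDimensional
  have hDcoinf : ¬ FiniteDimensional ℂ (X ⧸ (Y ⊓ Y.comap (T : X →ₗ[ℂ] X) : Submodule ℂ X)) := by
    intro hfd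
    apply hcoinf
    have hsurj : Function.Surjective
        (Submodule.mapQ (Y ⊓ Y.comap (T : X →ₗ[ℂ] X)) Y LinearMap.id inf_le_left) := by
      intro x
      obtain ⟨y, rfl⟩ := Y.mkQ_surjective x
      exact ⟨Submodule.Quotient.mk y, rfl⟩
    exact Module.Finite.of_surjective _ hsurj
  exact ⟨⟨hDclosed, hDinf, hDcoinf⟩, by rw [herr]; exact_mod_cast hfr⟩
end

section
/- Let Y be a half-space in a Banach space X almost invariant under T ∈ L(X). Then U_T(Y) = Y + TY is a half-space (after taking closure if needed the sum Y + F is already closed), and the codimension of Y in U_T(Y) equals d_{Y,T}. -/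
open Submodule Module

theorem going_upwards_halfspace
    {X : Type*} [NormedAddCommGroup X] [NormedSpace ℂ X] [CompleteSpace X]
    (Y : Submodule ℂ X) (hY : IsHalfSpace Y) (T : X →L[ℂ] X)
    (hai : ∃ F : Submodule ℂ X, FiniteDimensional ℂ F ∧ Y.map (T : X →ₗ[ℂ] X) ≤ Y ⊔ F) :
    IsHalfSpace (Y ⊔ Y.map (T : X →ₗ[ℂ] X)) ∧
      (Module.finrank ℂ (↥(Y ⊔ Y.map (T : X →ₗ[ℂ] X)) ⧸ Y.comap (Y ⊔ Y.map (T : X →ₗ[ℂ] X)).subtype) : ℕ∞) =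
        errDim Y T := by
  classical
  obtain ⟨F, hF, hTF⟩ := hai
  obtain ⟨hYclosed, hYinf, hYcoinf⟩ := hY
  haveI : IsClosed (Y : Set X) := hYclosed
  set U : Submodule ℂ X := Y ⊔ Y.map (T : X →ₗ[ℂ] X) with hUdef
  have hYU : Y ≤ U := le_sup_left
  have hUF : U ≤ Y ⊔ F := sup_le le_sup_left hTF
  set Q : Submodule ℂ (X ⧸ Y) := U.map Y.mkQ with hQdef
  have hQF : Q ≤ F.map Y.mkQ := by
    refine (Submodule.map_mono hUF).trans ?_
    rw [Submodule.map_sup, Submodule.mkQ_map_self, bot_sup_eq]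
  haveI hQfin : FiniteDimensional ℂ Q := Submodule.finiteDimensional_of_le hQF
  -- the equivalence between U / Y and Q
  set f : U →ₗ[ℂ] X ⧸ Y := Y.mkQ ∘ₗ U.subtype with hfdef
  have hker : LinearMap.ker f = Y.comap U.subtype := by
    rw [hfdef, LinearMap.ker_comp, Submodule.ker_mkQ]
  have hrange : LinearMap.range f = Q := by
    rw [hfdef, LinearMap.range_comp, Submodule.range_subtype]
  let e : (↥U ⧸ Y.comap U.subtype) ≃ₗ[ℂ] Q :=
    (Submodule.quotEquivOfEq _ _ hker.symm) ≪≫ₗ f.quotKerEquivRange ≪≫ₗ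
      LinearEquiv.ofEq _ _ hrange
  haveI : FiniteDimensional ℂ (↥U ⧸ Y.comap U.subtype) := Module.Finite.equiv e.symm
  have hd : finrank ℂ (↥U ⧸ Y.comap U.subtype) = finrank ℂ Q := e.finrank_eq
  -- closedness of U
  have hUcomap : U = Q.comap Y.mkQ := by
    rw [hQdef, Submodule.comap_map_mkQ, sup_eq_right.2 hYU]
  have hUclosed : IsClosed (U : Set X) := by
    rw [hUcomap]
    exact (Q.closed_of_finiteDimensional).preimage (Submodule.isOpenQuotientMap_mkQ Y).continuous
  -- infinite dimension
  have hUinf : ¬ FiniteDimensional ℂ U := fun h => hYinf (Submodule.finiteDimensional_of_le hYU)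
  -- infinite codimension
  have hUcoinf : ¬ FiniteDimensional ℂ (X ⧸ U) := by
    intro h
    apply hYcoinf
    haveI : FiniteDimensional ℂ ((X ⧸ Y) ⧸ Q) :=
      Module.Finite.equiv (Submodule.quotientQuotientEquivQuotient Y U hYU).symm
    have hlt : Module.rank ℂ (X ⧸ Y) < Cardinal.aleph0 := by
      rw [← Submodule.rank_quotient_add_rank Q]
      exact Cardinal.add_lt_aleph0 (rank_lt_aleph0 _ _) (rank_lt_aleph0 _ _)
    exact Module.rank_lt_aleph0_iff.mp hlt
  -- construction of F₀ with Y ⊔ F₀ = U and finrank F₀ ≤ finrank Q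
  let b := Module.finBasis ℂ Q
  have hb : ∀ i, ∃ x, x ∈ U ∧ Y.mkQ x = ((b i : Q) : X ⧸ Y) := fun i => (b i).2
  choose g hgU hgQ using hb
  set s : Finset X := Finset.univ.image g with hsdef
  set F₀ : Submodule ℂ X := span ℂ (s : Set X) with hF₀def
  haveI hF₀fin : FiniteDimensional ℂ F₀ := inferInstance
  have hF₀rank : finrank ℂ F₀ ≤ finrank ℂ Q := by
    calc finrank ℂ F₀ ≤ s.card := finrank_span_finset_le_card s
      _ ≤ Finset.univ.card := Finset.card_image_le
      _ = finrank ℂ Q := by simp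
  have hsrange : (s : Set X) = Set.range g := by
    rw [hsdef, Finset.coe_image, Finset.coe_univ, Set.image_univ]
  have hF₀map : F₀.map Y.mkQ = Q := by
    rw [hF₀def, Submodule.map_span, hsrange, ← Set.range_comp]
    have h1 : (Y.mkQ ∘ g) = (Q.subtype ∘ b) := by
      funext i; exact hgQ i
    rw [h1, Set.range_comp, Submodule.span_image, Basis.span_eq, Submodule.map_top,
      Submodule.range_subtype]
  have hU0 : Y ⊔ F₀ = U := by
    calc Y ⊔ F₀ = (F₀.map Y.mkQ).comap Y.mkQ := (Submodule.comap_map_mkQ Y F₀).symm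
      _ = Q.comap Y.mkQ := by rw [hF₀map]
      _ = U := hUcomap.symm
  refine ⟨⟨hUclosed, hUinf, hUcoinf⟩, le_antisymm ?_ ?_⟩
  · -- lower bound: finrank (U/Y) ≤ every element of the set
    refine le_sInf ?_
    rintro n ⟨F', hF', rfl, hTF'⟩
    haveI := hF'
    have hUF' : U ≤ Y ⊔ F' := sup_le le_sup_left hTF'
    have hQF' : Q ≤ F'.map Y.mkQ := by
      refine (Submodule.map_mono hUF').trans ?_
      rw [Submodule.map_sup, Submodule.mkQ_map_self, bot_sup_eq]
    have h1 : finrank ℂ Q ≤ finrank ℂ (F'.map Y.mkQ) := Submodule.finrank_mono hQF'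
    have h2 : finrank ℂ (F'.map Y.mkQ) ≤ finrank ℂ F' := Submodule.finrank_map_le _ _
    exact_mod_cast hd.le.trans (h1.trans h2)
  · -- upper bound: errDim ≤ finrank F₀ ≤ finrank (U/Y)
    have hmem : ((finrank ℂ F₀ : ℕ∞)) ∈ {n : ℕ∞ | ∃ F : Submodule ℂ X,
        FiniteDimensional ℂ F ∧ (Module.finrank ℂ F : ℕ∞) = n ∧ Y.map (T : X →ₗ[ℂ] X) ≤ Y ⊔ F} :=
      ⟨F₀, hF₀fin, rfl, le_sup_right.trans hU0.ge⟩
    refine (sInf_le hmem).trans ?_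
    exact_mod_cast hF₀rank.trans hd.ge
end

section
/- Let Y be a half-space in a Banach space X almost invariant under T ∈ L(X) with d_{Y,T} > 0. If d_{D_T^k(Y),T} ≥ d_{Y,T} and d_{U_T^k(Y),T} ≥ d_{Y,T} for all k ∈ ℕ, then d_{Y,T^m} ≥ m for all m ∈ ℕ. -/
open Module Submodule

section KeyAux

variable {X : Type*} [NormedAddCommGroup X] [NormedSpace ℂ X]

/-- Lifting a finite-dimensional image through a linear map. -/
lemma exists_lift_of_fd_image {P : Type*} [AddCommGroup P] [Module ℂ P]
    (φ : X →ₗ[ℂ] P) (V : Submodule ℂ X) [FiniteDimensional ℂ (V.map φ)] :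
    ∃ G : Submodule ℂ X, FiniteDimensional ℂ G ∧
      finrank ℂ G ≤ finrank ℂ (V.map φ) ∧ G ≤ V ∧ V.map φ ≤ G.map φ := by
  classical
  set W := V.map φ with hW
  let b := Module.finBasis ℂ W
  have hb : ∀ i, ∃ v, v ∈ V ∧ φ v = (b i : P) := by
    intro i
    have : (b i : P) ∈ W := (b i).2
    obtain ⟨v, hv, hv'⟩ := this
    exact ⟨v, hv, hv'⟩
  choose v hvV hvφ using hb
  refine ⟨Submodule.span ℂ (Set.range v),
    FiniteDimensional.span_of_finite ℂ (Set.finite_range v), ?_, ?_, ?_⟩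
  · calc finrank ℂ (Submodule.span ℂ (Set.range v)) ≤ (Set.range v).toFinset.card :=
          finrank_span_le_card _
      _ ≤ Fintype.card (Fin (finrank ℂ W)) := by
          rw [Set.toFinset_range]
          exact (Finset.card_image_le).trans (by simp)
      _ = finrank ℂ W := by simp
  · rw [Submodule.span_le]
    rintro _ ⟨i, rfl⟩
    exact hvV i
  · have h1 : Submodule.span ℂ (Set.range fun i => ((b i : P))) = W := by
      have h2 := congrArg (Submodule.map W.subtype) b.span_eq
      rwa [Submodule.map_span, Submodule.map_top, Submodule.range_subtype,
        ← Set.range_comp] at h2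
    have h3 : (Submodule.span ℂ (Set.range v)).map φ
        = Submodule.span ℂ (Set.range fun i => ((b i : P))) := by
      rw [Submodule.map_span, ← Set.range_comp]
      congr 1
      ext p
      constructor
      · rintro ⟨i, rfl⟩; exact ⟨i, (hvφ i).symm⟩
      · rintro ⟨i, rfl⟩; exact ⟨i, hvφ i⟩
    rw [h3, h1]

end KeyAux

theorem key_lemma_error_dims_of_powers_grow
    {X : Type*} [NormedAddCommGroup X] [NormedSpace ℂ X] [CompleteSpace X]
    (Y : Submodule ℂ X) (hY : IsHalfSpace Y) (T : X →L[ℂ] X)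
    (hai : ∃ F : Submodule ℂ X, FiniteDimensional ℂ F ∧ Y.map (T : X →ₗ[ℂ] X) ≤ Y ⊔ F)
    (hpos : 0 < errDim Y T)
    (hD : ∀ k : ℕ, errDim Y T ≤ errDim ((fun Z : Submodule ℂ X => Z ⊓ Z.comap (T : X →ₗ[ℂ] X))^[k] Y) T)
    (hU : ∀ k : ℕ, errDim Y T ≤ errDim ((fun Z : Submodule ℂ X => Z ⊔ Z.map (T : X →ₗ[ℂ] X))^[k] Y) T) :
    ∀ m : ℕ, (m : ℕ∞) ≤ errDim Y (T ^ m) := by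
  classical
  set L : X →ₗ[ℂ] X := (T : X →ₗ[ℂ] X) with hL
  have hLT : ∀ x : X, L x = T x := fun x => rfl
  -- the D and U chains
  set D : ℕ → Submodule ℂ X := fun k => (fun Z : Submodule ℂ X => Z ⊓ Z.comap (T : X →ₗ[ℂ] X))^[k] Y
    with hDdef
  set U : ℕ → Submodule ℂ X := fun k => (fun Z : Submodule ℂ X => Z ⊔ Z.map (T : X →ₗ[ℂ] X))^[k] Y
    with hUdef
  have hD0 : D 0 = Y := rfl
  have hU0 : U 0 = Y := rfl
  have hDsucc : ∀ k, D (k + 1) = D k ⊓ (D k).comap (T : X →ₗ[ℂ] X) := fun k => by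
    simp only [hDdef]; rw [Function.iterate_succ_apply']
  have hUsucc : ∀ k, U (k + 1) = U k ⊔ (U k).map (T : X →ₗ[ℂ] X) := fun k => by
    simp only [hUdef]; rw [Function.iterate_succ_apply']
  have hDhyp : ∀ k, errDim Y T ≤ errDim (D k) T := hD
  have hUhyp : ∀ k, errDim Y T ≤ errDim (U k) T := hU
  -- membership characterization of D
  have mem_D : ∀ k z, z ∈ D k ↔ ∀ i ≤ k, (L ^ i) z ∈ Y := by
    intro k
    induction k with
    | zero =>
      intro z
      simp only [hD0]
      constructor
      · intro hz i hi
        interval_cases i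
        simpa using hz
      · intro h; simpa using h 0 le_rfl
    | succ k ih =>
      intro z
      rw [hDsucc k, Submodule.mem_inf, Submodule.mem_comap, ih, ih]
      constructor
      · rintro ⟨h1, h2⟩ i hi
        rcases i with _ | i
        · exact h1 0 (Nat.zero_le _)
        · have : (L ^ (i + 1)) z = (L ^ i) (T z) := by
            rw [pow_succ, Module.End.mul_apply, hLT]
          rw [this]
          exact h2 i (by omega)
      · intro h
        refine ⟨fun i hi => h i (by omega), fun i hi => ?_⟩
        have : (L ^ i) (T z) = (L ^ (i + 1)) z := by
          rw [pow_succ, Module.End.mul_apply, hLT]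
        show (L ^ i) (T z) ∈ Y
        rw [this]
        exact h (i + 1) (by omega)
  have hD_le_Y : ∀ k, D k ≤ Y := fun k z hz => by
    have := (mem_D k z).1 hz 0 (Nat.zero_le _)
    simpa using this
  have hD_anti : ∀ {j k : ℕ}, j ≤ k → D k ≤ D j := by
    intro j k hjk z hz
    exact (mem_D j z).2 fun i hi => (mem_D k z).1 hz i (hi.trans hjk)
  have hmapL_D : ∀ k, (D (k + 1)).map L ≤ D k := by
    rintro k _ ⟨z, hz, rfl⟩
    refine (mem_D k _).2 fun i hi => ?_
    have h := (mem_D (k + 1) z).1 hz (i + 1) (by omega)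
    rwa [pow_succ, Module.End.mul_apply] at h
  have hmapLpow_D : ∀ k i, i ≤ k → (D k).map (L ^ i) ≤ Y := by
    rintro k i hik _ ⟨z, hz, rfl⟩
    exact (mem_D k z).1 hz i hik
  -- conversion of CLM maps to linear maps
  have map_coe : ∀ Z : Submodule ℂ X, Z.map (T : X →ₗ[ℂ] X) = Z.map L := fun Z => rfl
  have map_pow_coe : ∀ (Z : Submodule ℂ X) (n : ℕ), Z.map ((T ^ n : X →L[ℂ] X) : X →ₗ[ℂ] X) = Z.map (L ^ n) := by
    intro Z n
    ext x
    simp [Submodule.mem_map, ContinuousLinearMap.coe_pow, Module.End.coe_pow, hL]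
  -- the minimal defect d, attained by F₀
  set A : Set ℕ := {n | ∃ F : Submodule ℂ X, FiniteDimensional ℂ F ∧
    finrank ℂ F = n ∧ Y.map (T : X →ₗ[ℂ] X) ≤ Y ⊔ F} with hA
  have hAne : A.Nonempty := by
    obtain ⟨F, hF, hle⟩ := hai
    exact ⟨finrank ℂ F, F, hF, rfl, hle⟩
  set d : ℕ := sInf A with hd
  obtain ⟨F₀, hF₀fd, hF₀rank, hF₀le⟩ : d ∈ A := Nat.sInf_mem hAne
  have herr_eq : errDim Y T = (d : ℕ∞) := by
    refine le_antisymm (sInf_le ⟨F₀, hF₀fd, by rw [hF₀rank], hF₀le⟩) (le_sInf ?_)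
    rintro b ⟨F, hF, rfl, hle⟩
    exact_mod_cast Nat.sInf_le (show finrank ℂ F ∈ A from ⟨F, hF, rfl, hle⟩)
  -- from the hypotheses: any valid F for D k or U k has finrank ≥ d
  have hd_le : ∀ Z : Submodule ℂ X, errDim Y T ≤ errDim Z T →
      ∀ F : Submodule ℂ X, FiniteDimensional ℂ F → Z.map (T : X →ₗ[ℂ] X) ≤ Z ⊔ F →
      d ≤ finrank ℂ F := by
    intro Z hZ F hF hle
    have h1 : errDim Z T ≤ (finrank ℂ F : ℕ∞) := sInf_le ⟨F, hF, rfl, hle⟩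
    have h2 : (d : ℕ∞) ≤ (finrank ℂ F : ℕ∞) := herr_eq ▸ (hZ.trans h1)
    exact_mod_cast h2
  -- The heart: D k = D (k+1) + T (D (k+1))
  have E1 : ∀ k, D k ≤ D (k + 1) ⊔ (D (k + 1)).map L := by
    intro k
    set ψ : X →ₗ[ℂ] X ⧸ Y := Y.mkQ ∘ₗ (L ^ (k + 1)) with hψ
    have hψ0 : ∀ z, ψ z = 0 ↔ (L ^ (k + 1)) z ∈ Y := by
      intro z
      simp [hψ, Submodule.Quotient.mk_eq_zero]
    set V : Submodule ℂ X := D (k + 1) ⊔ (D (k + 1)).map L with hV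
    have hVD : V ≤ D k := sup_le (hD_anti (Nat.le_succ k)) (hmapL_D k)
    have hDk1_eq : ∀ z, z ∈ D (k + 1) ↔ z ∈ D k ∧ ψ z = 0 := by
      intro z
      rw [mem_D, mem_D, hψ0]
      constructor
      · intro h
        exact ⟨fun i hi => h i (by omega), h (k + 1) le_rfl⟩
      · rintro ⟨h1, h2⟩ i hi
        rcases Nat.lt_or_ge i (k + 1) with hi' | hi'
        · exact h1 i (by omega)
        · have : i = k + 1 := by omega
          rw [this]; exact h2
    have hWle : (D k).map ψ ≤ F₀.map Y.mkQ := by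
      rintro _ ⟨z, hz, rfl⟩
      have h1 : (L ^ k) z ∈ Y := (mem_D k z).1 hz k le_rfl
      have h2 : (L ^ (k + 1)) z ∈ Y.map (T : X →ₗ[ℂ] X) := by
        refine ⟨(L ^ k) z, h1, ?_⟩
        rw [pow_succ', Module.End.mul_apply, hLT]
      have h3 : (L ^ (k + 1)) z ∈ Y ⊔ F₀ := hF₀le h2
      obtain ⟨y, hy, f, hf, hyf⟩ := Submodule.mem_sup.1 h3
      refine ⟨f, hf, ?_⟩
      have : ψ z = Y.mkQ ((L ^ (k + 1)) z) := rfl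
      rw [this, ← hyf]
      simp [Submodule.Quotient.mk_eq_zero, hy, Submodule.mkQ_apply,
        Submodule.Quotient.mk_add, (Submodule.Quotient.mk_eq_zero Y).2 hy]
    haveI : FiniteDimensional ℂ (F₀.map Y.mkQ) := Module.Finite.map _ _
    haveI fdW' : FiniteDimensional ℂ ((D k).map ψ) := Submodule.finiteDimensional_of_le hWle
    haveI fdW : FiniteDimensional ℂ (V.map ψ) :=
      Submodule.finiteDimensional_of_le (Submodule.map_mono hVD)
    obtain ⟨G, hGfd, hGrank, hGle, hGmap⟩ := exists_lift_of_fd_image ψ V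
    have hVle : V ≤ D (k + 1) ⊔ G := by
      intro v hv
      have h1 : ψ v ∈ G.map ψ := hGmap ⟨v, hv, rfl⟩
      obtain ⟨g, hg, hgv⟩ := h1
      have hvg : v - g ∈ D (k + 1) := by
        refine (hDk1_eq _).2 ⟨hVD (sub_mem hv (hGle hg)), ?_⟩
        rw [map_sub, hgv, sub_self]
      have : v = (v - g) + g := by abel
      rw [this]
      exact add_mem (Submodule.mem_sup_left hvg) (Submodule.mem_sup_right hg)
    have hdG : d ≤ finrank ℂ G := by
      refine hd_le (D (k + 1)) (hDhyp (k + 1)) G hGfd ?_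
      rw [map_coe]
      exact le_trans (le_trans le_sup_right hVle) le_rfl
    have hW'd : finrank ℂ ((D k).map ψ) ≤ d :=
      le_trans (Submodule.finrank_mono hWle)
        (le_trans (Submodule.finrank_map_le _ _) hF₀rank.le)
    have hWW' : V.map ψ = (D k).map ψ := by
      refine Submodule.eq_of_le_of_finrank_le (Submodule.map_mono hVD) ?_
      exact le_trans hW'd (le_trans hdG hGrank)
    intro z hz
    have h1 : ψ z ∈ V.map ψ := hWW' ▸ ⟨z, hz, rfl⟩
    obtain ⟨v, hv, hvz⟩ := h1
    have hzv : z - v ∈ D (k + 1) := by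
      refine (hDk1_eq _).2 ⟨sub_mem hz (hVD hv), ?_⟩
      rw [map_sub, hvz, sub_self]
    have : z = (z - v) + v := by abel
    rw [this]
    exact add_mem (Submodule.mem_sup_left hzv) hv
  -- Q: T Y ≤ Y + T^{j+1} D j
  have Q : ∀ j, Y.map L ≤ Y ⊔ (D j).map (L ^ (j + 1)) := by
    intro j
    induction j with
    | zero =>
      rw [hD0, pow_one]
      exact le_sup_right
    | succ j ih =>
      refine ih.trans ?_
      refine sup_le le_sup_left ?_
      refine le_trans (Submodule.map_mono (E1 j)) ?_
      rw [Submodule.map_sup, ← Submodule.map_comp, ← Module.End.mul_eq_comp, ← pow_succ]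
      exact sup_le ((hmapLpow_D (j + 1) (j + 1) le_rfl).trans le_sup_left) le_sup_right
  -- main induction
  intro m
  rcases Nat.eq_zero_or_pos m with rfl | hm
  · simp
  -- R : the U-chain is controlled by Y + T^m (D (m-k))
  have R : ∀ k, k ≤ m → U k ≤ Y ⊔ (D (m - k)).map (L ^ m) := by
    intro k
    induction k with
    | zero => intro _; rw [hU0]; exact le_sup_left
    | succ k ih =>
      intro hk1
      have ihk := ih (by omega)
      rw [hUsucc]
      refine sup_le
        (ihk.trans (sup_le_sup_left (Submodule.map_mono (hD_anti (by omega))) Y)) ?_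
      rw [map_coe]
      refine le_trans (Submodule.map_mono ihk) ?_
      rw [Submodule.map_sup]
      refine sup_le ?_ ?_
      · have hq := Q (m - 1)
        have hm1 : m - 1 + 1 = m := by omega
        rw [hm1] at hq
        exact hq.trans (sup_le_sup_left (Submodule.map_mono (hD_anti (by omega))) Y)
      · have h1 : ((D (m - k)).map (L ^ m)).map L = ((D (m - k)).map L).map (L ^ m) := by
          rw [← Submodule.map_comp, ← Submodule.map_comp, ← Module.End.mul_eq_comp,
            ← Module.End.mul_eq_comp, ← pow_succ', ← pow_succ]
        rw [h1]
        have h2 : (D (m - k)).map L ≤ D (m - (k + 1)) := by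
          have hmk : m - k = (m - (k + 1)) + 1 := by omega
          rw [hmk]
          exact hmapL_D _
        exact (Submodule.map_mono h2).trans le_sup_right
  -- monotonicity and strictness of the U-chain
  have hUmono : Monotone U := monotone_nat_of_le_succ fun k => by
    rw [hUsucc]; exact le_sup_left
  have hYU : ∀ k, Y ≤ U k := fun k => hU0 ▸ hUmono (Nat.zero_le k)
  have hUlt : ∀ k, U k < U (k + 1) := by
    intro k
    rw [hUsucc]
    refine lt_of_le_of_ne le_sup_left fun h => ?_
    have hmap : (U k).map (T : X →ₗ[ℂ] X) ≤ U k := by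
      conv_rhs => rw [h]
      exact le_sup_right
    have h0 : errDim (U k) T ≤ 0 := by
      refine sInf_le ⟨⊥, inferInstance, ?_, ?_⟩
      · simp
      · simpa using hmap
    have h1 : (0 : ℕ∞) < errDim (U k) T := lt_of_lt_of_le hpos (hUhyp k)
    exact absurd (le_antisymm h0 zero_le) h1.ne'
  -- conclude
  refine le_sInf ?_
  rintro b ⟨F, hFfd, rfl, hFle⟩
  rw [map_pow_coe] at hFle
  have hUmF : U m ≤ Y ⊔ F := by
    refine (R m le_rfl).trans ?_
    rw [Nat.sub_self, hD0]
    exact sup_le le_sup_left hFle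
  have hqY : Y.map Y.mkQ ≤ ⊥ := by
    rintro _ ⟨y, hy, rfl⟩
    simp only [Submodule.mem_bot, Submodule.mkQ_apply, Submodule.Quotient.mk_eq_zero]
    exact hy
  have hVle : ∀ k, k ≤ m → (U k).map Y.mkQ ≤ F.map Y.mkQ := by
    intro k hk
    refine le_trans (Submodule.map_mono ((hUmono hk).trans hUmF)) ?_
    rw [Submodule.map_sup]
    exact sup_le (hqY.trans bot_le) le_rfl
  haveI : FiniteDimensional ℂ (F.map Y.mkQ) := Module.Finite.map _ _
  have hfr : ∀ k, k ≤ m → k ≤ finrank ℂ ((U k).map Y.mkQ) := by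
    intro k
    induction k with
    | zero => intro _; exact Nat.zero_le _
    | succ k ih =>
      intro hk1
      haveI : FiniteDimensional ℂ ((U (k + 1)).map Y.mkQ) :=
        Submodule.finiteDimensional_of_le (hVle (k + 1) hk1)
      have hlt : (U k).map Y.mkQ < (U (k + 1)).map Y.mkQ := by
        refine lt_of_le_of_ne (Submodule.map_mono (hUlt k).le) fun h => ?_
        have hle : U (k + 1) ≤ U k := by
          intro x hx
          have hx' : Y.mkQ x ∈ (U k).map Y.mkQ := h ▸ ⟨x, hx, rfl⟩
          obtain ⟨u, hu, huq⟩ := hx'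
          have hxu : u - x ∈ Y := (Submodule.Quotient.eq Y).1 huq
          have : x = u - (u - x) := by abel
          rw [this]
          exact sub_mem hu (hYU k hxu)
        exact absurd hle (hUlt k).not_ge
      exact lt_of_le_of_lt (ih (by omega)) (Submodule.finrank_lt_finrank_of_lt hlt)
  have hfin : m ≤ finrank ℂ F :=
    le_trans (hfr m le_rfl)
      (le_trans (Submodule.finrank_mono (hVle m le_rfl)) (Submodule.finrank_map_le _ _))
  exact_mod_cast hfin
end

section
/- Let T ∈ L(X), Y a half-space almost invariant under the norm-closed algebra generated by T, and suppose d_{Y,T} > 0. Then there exists k ∈ ℕ such that either d_{D_T^k(Y),T} < d_{Y,T} or d_{U_T^k(Y),T} < d_{Y,T}. -/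
/-- The norm-closed algebra generated by `T`: the closure of the polynomials in `T`
without constant term. -/
def closedAlgGen {X : Type*} [NormedAddCommGroup X] [NormedSpace ℂ X]
    (T : X →L[ℂ] X) : Set (X →L[ℂ] X) :=
  closure {S | ∃ p : Polynomial ℂ, p.coeff 0 = 0 ∧ S = Polynomial.aeval T p}

open Module Submodule LinearMap

namespace AIHS

variable {X : Type*} [NormedAddCommGroup X] [NormedSpace ℂ X]

/-- The image of `T Z` in `X ⧸ Z`. -/
noncomputable def errN (T : X →L[ℂ] X) (Z : Submodule ℂ X) : Submodule ℂ (X ⧸ Z) :=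
  (Z.map (T : X →ₗ[ℂ] X)).map Z.mkQ

variable (T : X →L[ℂ] X)

lemma exists_lift (Z : Submodule ℂ X) (W : Submodule ℂ (X ⧸ Z)) [FiniteDimensional ℂ W]
    (P : Submodule ℂ X) (hP : W ≤ P.map Z.mkQ) :
    ∃ F : Submodule ℂ X, FiniteDimensional ℂ F ∧ finrank ℂ F ≤ finrank ℂ W ∧
      F ≤ P ∧ W ≤ F.map Z.mkQ := by
  classical
  set n := finrank ℂ W
  let b := finBasis ℂ W
  have hmem : ∀ i : Fin n, ∃ x : X, x ∈ P ∧ Z.mkQ x = (b i : X ⧸ Z) := by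
    intro i
    have := hP (b i).2
    rcases Submodule.mem_map.1 this with ⟨x, hx, hxe⟩
    exact ⟨x, hx, hxe⟩
  choose p hpP hpe using hmem
  refine ⟨span ℂ (Set.range p), ?_, ?_, ?_, ?_⟩
  · exact FiniteDimensional.span_of_finite _ (Set.finite_range p)
  · have h1 : finrank ℂ (span ℂ (Set.range p)) ≤ (Set.range p).toFinset.card :=
      finrank_span_le_card _
    refine h1.trans ?_
    rw [Set.toFinset_range]
    simpa using Finset.card_image_le (s := Finset.univ) (f := p)
  · exact span_le.2 (Set.range_subset_iff.2 hpP)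
  · have hW : W = span ℂ (Set.range fun i => ((b i : W) : X ⧸ Z)) := by
      conv_lhs => rw [← Submodule.map_subtype_top W]
      rw [← b.span_eq, Submodule.map_span, ← Set.range_comp]
      rfl
    rw [hW, span_le]
    rintro _ ⟨i, rfl⟩
    exact ⟨p i, subset_span ⟨i, rfl⟩, hpe i⟩

lemma finrank_range_eq_of_ker_eq {M N N' : Type*} [AddCommGroup M] [Module ℂ M]
    [AddCommGroup N] [Module ℂ N] [AddCommGroup N'] [Module ℂ N']
    (f : M →ₗ[ℂ] N) (g : M →ₗ[ℂ] N') (h : LinearMap.ker f = LinearMap.ker g) :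
    finrank ℂ (LinearMap.range f) = finrank ℂ (LinearMap.range g) ∧
      (FiniteDimensional ℂ (LinearMap.range f) → FiniteDimensional ℂ (LinearMap.range g)) := by
  have e1 := (f.quotKerEquivRange).symm
  have e2 := (g.quotKerEquivRange)
  rw [h] at e1
  exact ⟨(e1.trans e2).finrank_eq, fun _ => Module.Finite.equiv (e1.trans e2)⟩

/-- If the image of `A` in `X ⧸ Z` is inside the image of `F`, then `A ≤ Z ⊔ F`. -/
lemma le_sup_of_map_mkQ_le {Z A F : Submodule ℂ X} (h : A.map Z.mkQ ≤ F.map Z.mkQ) :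
    A ≤ Z ⊔ F := by
  intro x hx
  have : Z.mkQ x ∈ F.map Z.mkQ := h ⟨x, hx, rfl⟩
  rcases this with ⟨f, hf, hfe⟩
  have hxf : x - f ∈ Z := (Submodule.Quotient.eq Z).1 hfe.symm
  have hx2 : x = (x - f) + f := by abel
  rw [hx2]
  exact Submodule.add_mem_sup hxf hf

lemma map_mkQ_self (Z : Submodule ℂ X) : Z.map Z.mkQ = ⊥ := by
  rw [eq_bot_iff, Submodule.map_le_iff_le_comap, Submodule.comap_bot, Submodule.ker_mkQ]

lemma errN_le_map_mkQ {Z F : Submodule ℂ X} (h : Z.map (T : X →ₗ[ℂ] X) ≤ Z ⊔ F) :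
    errN T Z ≤ F.map Z.mkQ := by
  calc errN T Z = (Z.map (T : X →ₗ[ℂ] X)).map Z.mkQ := rfl
    _ ≤ (Z ⊔ F).map Z.mkQ := Submodule.map_mono h
    _ = Z.map Z.mkQ ⊔ F.map Z.mkQ := Submodule.map_sup _ _ _
    _ = F.map Z.mkQ := by rw [map_mkQ_self, bot_sup_eq]

instance fd_map {M N : Type*} [AddCommGroup M] [Module ℂ M] [AddCommGroup N] [Module ℂ N]
    (F : Submodule ℂ M) [FiniteDimensional ℂ F] (f : M →ₗ[ℂ] N) :
    FiniteDimensional ℂ (F.map f) := by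
  infer_instance

lemma good_of_exists {Z : Submodule ℂ X}
    (h : ∃ F : Submodule ℂ X, FiniteDimensional ℂ F ∧ Z.map (T : X →ₗ[ℂ] X) ≤ Z ⊔ F) :
    FiniteDimensional ℂ (errN T Z) := by
  obtain ⟨F, hF, hle⟩ := h
  haveI := hF
  exact Submodule.finiteDimensional_of_le (errN_le_map_mkQ T hle)

lemma errDim_eq (Z : Submodule ℂ X) (h : FiniteDimensional ℂ (errN T Z)) :
    errDim Z T = (finrank ℂ (errN T Z) : ℕ∞) := by
  apply le_antisymm
  · obtain ⟨F, hFfd, hFr, hFP, hFW⟩ :=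
      exists_lift (Z := Z) (W := errN T Z) (P := Z.map (T : X →ₗ[ℂ] X)) le_rfl
    have hle : Z.map (T : X →ₗ[ℂ] X) ≤ Z ⊔ F := le_sup_of_map_mkQ_le hFW
    have : errDim Z T ≤ (finrank ℂ F : ℕ∞) := sInf_le ⟨F, hFfd, rfl, hle⟩
    exact this.trans (by exact_mod_cast hFr)
  · refine le_sInf ?_
    rintro n ⟨F, hFfd, rfl, hle⟩
    haveI := hFfd
    have h1 : finrank ℂ (errN T Z) ≤ finrank ℂ (F.map Z.mkQ) :=
      Submodule.finrank_mono (errN_le_map_mkQ T hle)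
    exact_mod_cast h1.trans (Submodule.finrank_map_le _ _)

/-- The map `z ↦ [T z] : B → X ⧸ Z`. -/
noncomputable def tmap (B Z : Submodule ℂ X) : B →ₗ[ℂ] X ⧸ Z :=
  Z.mkQ ∘ₗ (T : X →ₗ[ℂ] X) ∘ₗ B.subtype

/-- The map `z ↦ [z] : B → X ⧸ A`. -/
noncomputable def qmap (B A : Submodule ℂ X) : B →ₗ[ℂ] X ⧸ A :=
  A.mkQ ∘ₗ B.subtype

lemma tmap_range (B Z : Submodule ℂ X) :
    LinearMap.range (tmap T B Z) = (B.map (T : X →ₗ[ℂ] X)).map Z.mkQ := by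
  rw [tmap, LinearMap.range_comp, LinearMap.range_comp, Submodule.range_subtype]

lemma tmap_ker (B Z : Submodule ℂ X) :
    LinearMap.ker (tmap T B Z) = (Z.comap (T : X →ₗ[ℂ] X)).comap B.subtype := by
  rw [tmap, LinearMap.ker_comp, Submodule.ker_mkQ, Submodule.comap_comp]

lemma qmap_range (B A : Submodule ℂ X) :
    LinearMap.range (qmap B A) = B.map A.mkQ := by
  rw [qmap, LinearMap.range_comp, Submodule.range_subtype]

lemma qmap_ker (B A : Submodule ℂ X) :
    LinearMap.ker (qmap B A) = A.comap B.subtype := by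
  rw [qmap, LinearMap.ker_comp, Submodule.ker_mkQ]

lemma ker_qmap_eq_ker_tmap (Z : Submodule ℂ X) :
    LinearMap.ker (qmap Z (Z ⊓ Z.comap (T : X →ₗ[ℂ] X))) = LinearMap.ker (tmap T Z Z) := by
  rw [qmap_ker, tmap_ker, Submodule.comap_inf, Submodule.comap_subtype_self, top_inf_eq]

/-- the codimension of `D Z` in `Z` equals the error dimension of `Z`. -/
lemma codim_D (Z : Submodule ℂ X) :
    finrank ℂ (Z.map (Z ⊓ Z.comap (T : X →ₗ[ℂ] X)).mkQ) = finrank ℂ (errN T Z) ∧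
    (FiniteDimensional ℂ (errN T Z) → FiniteDimensional ℂ (Z.map (Z ⊓ Z.comap (T : X →ₗ[ℂ] X)).mkQ)) := by
  have h := finrank_range_eq_of_ker_eq (qmap Z (Z ⊓ Z.comap (T : X →ₗ[ℂ] X))) (tmap T Z Z)
    (ker_qmap_eq_ker_tmap T Z)
  have h' := finrank_range_eq_of_ker_eq (tmap T Z Z) (qmap Z (Z ⊓ Z.comap (T : X →ₗ[ℂ] X)))
    (ker_qmap_eq_ker_tmap T Z).symm
  rw [qmap_range, tmap_range] at h h'
  exact ⟨h.1, h'.2⟩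

lemma map_U_mkQ (Z : Submodule ℂ X) : (Z ⊔ Z.map (T : X →ₗ[ℂ] X)).map Z.mkQ = errN T Z := by
  rw [Submodule.map_sup, map_mkQ_self, bot_sup_eq]
  rfl

lemma errN_D_le (Z : Submodule ℂ X) (h : FiniteDimensional ℂ (errN T Z)) :
    FiniteDimensional ℂ (errN T (Z ⊓ Z.comap (T : X →ₗ[ℂ] X))) ∧
    finrank ℂ (errN T (Z ⊓ Z.comap (T : X →ₗ[ℂ] X))) ≤ finrank ℂ (errN T Z) := by
  set D := Z ⊓ Z.comap (T : X →ₗ[ℂ] X) with hD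
  have hDle : D.map (T : X →ₗ[ℂ] X) ≤ Z := Submodule.map_le_iff_le_comap.2 inf_le_right
  have hle : errN T D ≤ Z.map D.mkQ := Submodule.map_mono hDle
  haveI hfd : FiniteDimensional ℂ (Z.map D.mkQ) := (codim_D T Z).2 h
  refine ⟨Submodule.finiteDimensional_of_le hle, ?_⟩
  exact (Submodule.finrank_mono hle).trans (le_of_eq (codim_D T Z).1)

lemma errN_U_le (Z : Submodule ℂ X) (h : FiniteDimensional ℂ (errN T Z)) :
    FiniteDimensional ℂ (errN T (Z ⊔ Z.map (T : X →ₗ[ℂ] X))) ∧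
    finrank ℂ (errN T (Z ⊔ Z.map (T : X →ₗ[ℂ] X))) ≤ finrank ℂ (errN T Z) := by
  obtain ⟨F, hFfd, hFr, hFP, hFW⟩ :=
    exists_lift (Z := Z) (W := errN T Z) (P := Z.map (T : X →ₗ[ℂ] X)) le_rfl
  haveI := hFfd
  have hZT : Z.map (T : X →ₗ[ℂ] X) ≤ Z ⊔ F := le_sup_of_map_mkQ_le hFW
  set U := Z ⊔ Z.map (T : X →ₗ[ℂ] X) with hU
  have hmain : U.map (T : X →ₗ[ℂ] X) ≤ U ⊔ (F.map (T : X →ₗ[ℂ] X)) := by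
    rw [hU, Submodule.map_sup]
    refine sup_le (le_trans le_sup_right le_sup_left) ?_
    have h1 : (Z.map (T : X →ₗ[ℂ] X)).map (T : X →ₗ[ℂ] X) ≤ (Z ⊔ F).map (T : X →ₗ[ℂ] X) := Submodule.map_mono hZT
    rw [Submodule.map_sup] at h1
    exact h1.trans (sup_le (le_trans le_sup_right le_sup_left) le_sup_right)
  have hFT : FiniteDimensional ℂ ((F.map (T : X →ₗ[ℂ] X) : Submodule ℂ X)) := by
    have : F.map (T : X →ₗ[ℂ] X) = F.map (T : X →ₗ[ℂ] X) := rfl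
    rw [this]
    infer_instance
  refine ⟨good_of_exists T ⟨F.map (T : X →ₗ[ℂ] X), hFT, hmain⟩, ?_⟩
  haveI : FiniteDimensional ℂ ((F.map (T : X →ₗ[ℂ] X)).map U.mkQ) := by
    haveI := hFT
    infer_instance
  have h1 : finrank ℂ (errN T U) ≤ finrank ℂ ((F.map (T : X →ₗ[ℂ] X)).map U.mkQ) :=
    Submodule.finrank_mono (errN_le_map_mkQ T hmain)
  have h2 : finrank ℂ ((F.map (T : X →ₗ[ℂ] X)).map U.mkQ) ≤ finrank ℂ ((F.map (T : X →ₗ[ℂ] X) : Submodule ℂ X)) :=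
    Submodule.finrank_map_le _ _
  have h3 : finrank ℂ ((F.map (T : X →ₗ[ℂ] X) : Submodule ℂ X)) ≤ finrank ℂ F := by
    have : F.map (T : X →ₗ[ℂ] X) = F.map (T : X →ₗ[ℂ] X) := rfl
    rw [this]
    exact Submodule.finrank_map_le _ _
  exact ((h1.trans h2).trans h3).trans hFr

lemma U_step_inj (P : Submodule ℂ X) (h1 : FiniteDimensional ℂ (errN T P))
    (heq : finrank ℂ (errN T (P ⊔ P.map (T : X →ₗ[ℂ] X))) = finrank ℂ (errN T P)) :
    ∀ x : X, x ∈ P ⊔ P.map (T : X →ₗ[ℂ] X) → T x ∈ P ⊔ P.map (T : X →ₗ[ℂ] X) → x ∈ P := by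
  set Q := P ⊔ P.map (T : X →ₗ[ℂ] X) with hQdef
  have hker : P ≤ LinearMap.ker (Q.mkQ ∘ₗ (T : X →ₗ[ℂ] X)) := by
    intro x hx
    simp only [LinearMap.mem_ker, LinearMap.comp_apply, Submodule.mkQ_apply,
      Submodule.Quotient.mk_eq_zero]
    exact le_sup_right (a := P) ⟨x, hx, rfl⟩
  set Tbar : (X ⧸ P) →ₗ[ℂ] (X ⧸ Q) := Submodule.liftQ P (Q.mkQ ∘ₗ (T : X →ₗ[ℂ] X)) hker
    with hTbar
  set S₁ := Q.map P.mkQ with hS₁def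
  have hS₁ : S₁ = errN T P := map_U_mkQ T P
  haveI hS₁fd : FiniteDimensional ℂ S₁ := hS₁ ▸ h1
  set f := Tbar.domRestrict S₁ with hf
  have hrange : LinearMap.range f = errN T Q := by
    rw [hf, LinearMap.range_domRestrict]
    have e1 : S₁.map Tbar = Q.map (Tbar ∘ₗ P.mkQ) := by
      rw [hS₁def, Submodule.map_comp]
    have e2 : Tbar ∘ₗ P.mkQ = Q.mkQ ∘ₗ (T : X →ₗ[ℂ] X) := Submodule.liftQ_mkQ _ _ _
    rw [e1, e2, Submodule.map_comp]
    rfl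
  have hrn := LinearMap.finrank_range_add_finrank_ker f
  rw [hrange, heq, ← hS₁] at hrn
  have hker0 : finrank ℂ (LinearMap.ker f) = 0 := by omega
  have hkerbot : LinearMap.ker f = ⊥ := by
    haveI : FiniteDimensional ℂ (LinearMap.ker f) :=
      Submodule.finiteDimensional_of_le (le_top)
    exact Submodule.finrank_eq_zero.1 hker0
  intro x hxQ hTxQ
  set s : S₁ := ⟨P.mkQ x, ⟨x, hxQ, rfl⟩⟩ with hs
  have hfs : f s = 0 := by
    have : f s = Tbar (P.mkQ x) := rfl
    rw [this]
    have : Tbar (P.mkQ x) = Q.mkQ (T x) := by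
      rw [hTbar]
      exact Submodule.liftQ_apply _ _ _
    rw [this]
    simpa [Submodule.Quotient.mk_eq_zero] using hTxQ
  have : s ∈ LinearMap.ker f := hfs
  rw [hkerbot, Submodule.mem_bot] at this
  have : P.mkQ x = 0 := by
    have := congrArg (Subtype.val) this
    exact this
  simpa [Submodule.Quotient.mk_eq_zero] using this

lemma mkQ_mem_map_iff {A B : Submodule ℂ X} (h : A ≤ B) (x : X) :
    A.mkQ x ∈ B.map A.mkQ ↔ x ∈ B := by
  constructor
  · rintro ⟨b, hb, hbe⟩
    have : x - b ∈ A := by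
      have := (Submodule.Quotient.eq A).1 hbe
      simpa using (Submodule.Quotient.eq A).1 hbe.symm
    have : x = (x - b) + b := by abel
    rw [this]
    exact B.add_mem (h ‹x - b ∈ A›) hb
  · intro hx
    exact ⟨x, hx, rfl⟩

lemma tower {A B C : Submodule ℂ X} (hAB : A ≤ B) (hBC : B ≤ C)
    (h1 : FiniteDimensional ℂ (B.map A.mkQ)) (h2 : FiniteDimensional ℂ (C.map B.mkQ)) :
    FiniteDimensional ℂ (C.map A.mkQ) ∧
      finrank ℂ (C.map A.mkQ) = finrank ℂ (B.map A.mkQ) + finrank ℂ (C.map B.mkQ) := by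
  have hcomap : A ≤ B.comap (LinearMap.id (R := ℂ) (M := X)) := by simpa using hAB
  set φ : (X ⧸ A) →ₗ[ℂ] (X ⧸ B) := Submodule.mapQ A B LinearMap.id hcomap with hφ
  have hφmk : φ ∘ₗ A.mkQ = B.mkQ := by
    rw [hφ, Submodule.mapQ_mkQ]
    rfl
  have hφapp : ∀ x : X, φ (A.mkQ x) = B.mkQ x := fun x => by
    have := congrArg (fun g => g x) hφmk
    simpa using this
  have hkerφ : LinearMap.ker φ = B.map A.mkQ := by
    apply le_antisymm
    · intro y hy
      obtain ⟨x, rfl⟩ := A.mkQ_surjective y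
      rw [LinearMap.mem_ker, hφapp] at hy
      rw [(mkQ_mem_map_iff hAB x)]
      simpa [Submodule.Quotient.mk_eq_zero] using hy
    · intro y hy
      obtain ⟨x, rfl⟩ := A.mkQ_surjective y
      rw [LinearMap.mem_ker, hφapp]
      have : x ∈ B := (mkQ_mem_map_iff hAB x).1 hy
      simpa [Submodule.Quotient.mk_eq_zero] using this
  set S := C.map A.mkQ with hS
  set f := φ.domRestrict S with hf
  have hrange : LinearMap.range f = C.map B.mkQ := by
    rw [hf, LinearMap.range_domRestrict, hS, ← Submodule.map_comp, hφmk]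
  have hkerf : LinearMap.ker f = (B.map A.mkQ).comap S.subtype := by
    rw [hf, LinearMap.ker_domRestrict, hkerφ]
  have hBS : B.map A.mkQ ≤ S := Submodule.map_mono hBC
  have ekere := Submodule.comapSubtypeEquivOfLe hBS
  have hkerfd : FiniteDimensional ℂ (LinearMap.ker f) := by
    rw [hkerf]
    exact Module.Finite.equiv ekere.symm
  have hkerrank : finrank ℂ (LinearMap.ker f) = finrank ℂ (B.map A.mkQ) := by
    rw [hkerf]
    exact ekere.finrank_eq
  have hSfd : FiniteDimensional ℂ S := by
    refine Module.finite_def.mpr ?_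
    apply Submodule.fg_of_fg_map_of_fg_inf_ker f
    · rw [Submodule.map_top, hrange]
      exact (Submodule.fg_iff_finiteDimensional _).2 h2
    · rw [top_inf_eq]
      have : (LinearMap.ker f).FG := (Submodule.fg_iff_finiteDimensional _).2 hkerfd
      simpa [Submodule.fg_top] using this
  haveI := hSfd
  have hrn := LinearMap.finrank_range_add_finrank_ker f
  rw [hrange, hkerrank] at hrn
  exact ⟨hSfd, by omega⟩

variable {Y : Submodule ℂ X}

/-- iterated `D` operation -/
noncomputable def Dit (Y : Submodule ℂ X) (k : ℕ) : Submodule ℂ X :=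
  (fun Z : Submodule ℂ X => Z ⊓ Z.comap (T : X →ₗ[ℂ] X))^[k] Y

/-- iterated `U` operation -/
noncomputable def Uit (Y : Submodule ℂ X) (k : ℕ) : Submodule ℂ X :=
  (fun Z : Submodule ℂ X => Z ⊔ Z.map (T : X →ₗ[ℂ] X))^[k] Y

lemma Dit_zero : Dit T Y 0 = Y := rfl
lemma Uit_zero : Uit T Y 0 = Y := rfl

lemma Dit_succ (k : ℕ) : Dit T Y (k + 1) = Dit T Y k ⊓ (Dit T Y k).comap (T : X →ₗ[ℂ] X) := by
  unfold Dit
  rw [Function.iterate_succ_apply']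

lemma Uit_succ (k : ℕ) : Uit T Y (k + 1) = Uit T Y k ⊔ (Uit T Y k).map (T : X →ₗ[ℂ] X) := by
  unfold Uit
  rw [Function.iterate_succ_apply']

lemma pow_apply_succ (i : ℕ) (x : X) : (T ^ (i + 1)) x = (T ^ i) (T x) := by
  rw [pow_succ]
  rfl

lemma pow_apply_succ' (i : ℕ) (x : X) : (T ^ (i + 1)) x = T ((T ^ i) x) := by
  rw [pow_succ']
  rfl

lemma mem_Dit (m : ℕ) (x : X) : x ∈ Dit T Y m ↔ ∀ i ≤ m, (T ^ i) x ∈ Y := by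
  induction m generalizing x with
  | zero =>
    simp only [Dit_zero]
    constructor
    · intro hx i hi
      interval_cases i
      simpa using hx
    · intro h
      simpa using h 0 le_rfl
  | succ m ih =>
    rw [Dit_succ, Submodule.mem_inf, Submodule.mem_comap, ih, ih]
    constructor
    · rintro ⟨h1, h2⟩ i hi
      rcases Nat.lt_or_ge i 1 with h | h
      · interval_cases i
        exact h1 0 (Nat.zero_le _)
      · obtain ⟨j, rfl⟩ := Nat.exists_eq_add_of_le h
        rw [add_comm, pow_apply_succ]
        exact h2 j (by omega)
    · intro h
      refine ⟨fun i hi => h i (by omega), fun i hi => ?_⟩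
      change (T ^ i) (T x) ∈ Y
      rw [← pow_apply_succ]
      exact h (i + 1) (by omega)

lemma le_Uit (k : ℕ) : Y ≤ Uit T Y k := by
  induction k with
  | zero => exact le_rfl
  | succ k ih => rw [Uit_succ]; exact ih.trans le_sup_left

lemma Uit_mono {j k : ℕ} (h : j ≤ k) : Uit T Y j ≤ Uit T Y k := by
  induction k with
  | zero => simpa [Nat.le_zero.1 h] using le_rfl
  | succ k ih =>
    rcases Nat.lt_or_ge j (k+1) with h' | h'
    · rw [Uit_succ]
      exact (ih (by omega)).trans le_sup_left
    · have : j = k + 1 := by omega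
      rw [this]

lemma pow_mem_Uit (i : ℕ) {y : X} (hy : y ∈ Y) : (T ^ i) y ∈ Uit T Y i := by
  induction i with
  | zero => simpa [Uit_zero] using hy
  | succ i ih =>
    rw [pow_apply_succ', Uit_succ]
    exact (le_sup_right : (Uit T Y i).map (T : X →ₗ[ℂ] X) ≤ _) ⟨(T ^ i) y, ih, rfl⟩

section Chains

variable (hfdY : FiniteDimensional ℂ (errN T Y))

include hfdY in
lemma Dchain (k : ℕ) : FiniteDimensional ℂ (errN T (Dit T Y k)) ∧
    finrank ℂ (errN T (Dit T Y k)) ≤ finrank ℂ (errN T Y) := by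
  induction k with
  | zero => exact ⟨hfdY, le_rfl⟩
  | succ k ih =>
    rw [Dit_succ]
    obtain ⟨h1, h2⟩ := ih
    obtain ⟨h3, h4⟩ := errN_D_le T (Dit T Y k) h1
    exact ⟨h3, h4.trans h2⟩

include hfdY in
lemma Uchain (k : ℕ) : FiniteDimensional ℂ (errN T (Uit T Y k)) ∧
    finrank ℂ (errN T (Uit T Y k)) ≤ finrank ℂ (errN T Y) := by
  induction k with
  | zero => exact ⟨hfdY, le_rfl⟩
  | succ k ih =>
    rw [Uit_succ]
    obtain ⟨h1, h2⟩ := ih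
    obtain ⟨h3, h4⟩ := errN_U_le T (Uit T Y k) h1
    exact ⟨h3, h4.trans h2⟩

end Chains

section Equal

variable {d : ℕ}
variable (hUfd : ∀ k, FiniteDimensional ℂ (errN T (Uit T Y k)))
variable (hUeq : ∀ k, finrank ℂ (errN T (Uit T Y k)) = d)

include hUfd hUeq in
lemma down_to_Y : ∀ i, ∀ x : X, x ∈ Uit T Y i → T x ∈ Y → x ∈ Y := by
  intro i
  induction i with
  | zero => exact fun x hx _ => hx
  | succ i ih =>
    intro x hx hTx
    have hstep := U_step_inj T (Uit T Y i) (hUfd i) ?_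
    · refine ih x ?_ hTx
      refine hstep x ?_ ?_
      · rwa [Uit_succ] at hx
      · exact (le_sup_left : Uit T Y i ≤ _) ((le_Uit T i) hTx)
    · rw [← Uit_succ, hUeq i, hUeq (i+1)]

include hUfd hUeq in
lemma return_implies : ∀ m, ∀ y : X, y ∈ Y → (T ^ m) y ∈ Y → ∀ i ≤ m, (T ^ i) y ∈ Y := by
  intro m
  induction m with
  | zero =>
    intro y hy _ i hi
    interval_cases i
    simpa using hy
  | succ m ih =>
    intro y hy hTm i hi
    have hmem : (T ^ m) y ∈ Y := by
      refine down_to_Y T hUfd hUeq m ((T ^ m) y) (pow_mem_Uit T m hy) ?_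
      rw [← pow_apply_succ']
      exact hTm
    rcases Nat.lt_or_ge i (m + 1) with h | h
    · exact ih y hy hmem i (by omega)
    · have : i = m + 1 := by omega
      rw [this]
      exact hTm

end Equal

section Tower

variable {d : ℕ}

lemma Dit_le_Y (k : ℕ) : Dit T Y k ≤ Y := by
  induction k with
  | zero => exact le_rfl
  | succ k ih => rw [Dit_succ]; exact inf_le_left.trans ih

variable (hDfd : ∀ k, FiniteDimensional ℂ (errN T (Dit T Y k)))
variable (hDeq : ∀ k, finrank ℂ (errN T (Dit T Y k)) = d)

include hDfd hDeq in
lemma codim_Dit (k : ℕ) : FiniteDimensional ℂ (Y.map (Dit T Y k).mkQ) ∧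
    finrank ℂ (Y.map (Dit T Y k).mkQ) = k * d := by
  induction k with
  | zero =>
    rw [Dit_zero, map_mkQ_self]
    refine ⟨by infer_instance, by simp⟩
  | succ k ih =>
    obtain ⟨ihfd, ihr⟩ := ih
    have hAB : Dit T Y (k+1) ≤ Dit T Y k := by
      rw [Dit_succ]; exact inf_le_left
    have hBC : Dit T Y k ≤ Y := Dit_le_Y T k
    have h1fd : FiniteDimensional ℂ ((Dit T Y k).map (Dit T Y (k+1)).mkQ) := by
      rw [Dit_succ]
      exact (codim_D T (Dit T Y k)).2 (hDfd k)
    have h1r : finrank ℂ ((Dit T Y k).map (Dit T Y (k+1)).mkQ) = d := by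
      rw [Dit_succ]
      rw [(codim_D T (Dit T Y k)).1]
      exact hDeq k
    obtain ⟨hfd, hr⟩ := tower hAB hBC h1fd ihfd
    refine ⟨hfd, ?_⟩
    rw [hr, h1r, ihr]
    ring

variable (hUfd : ∀ k, FiniteDimensional ℂ (errN T (Uit T Y k)))
variable (hUeq : ∀ k, finrank ℂ (errN T (Uit T Y k)) = d)

include hDfd hDeq hUfd hUeq in
lemma rank_pow (m : ℕ) :
    finrank ℂ ((Y.map ((T ^ m : X →L[ℂ] X) : X →ₗ[ℂ] X)).map Y.mkQ) = m * d := by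
  have hker : LinearMap.ker (qmap Y (Dit T Y m)) = LinearMap.ker (tmap (T ^ m) Y Y) := by
    rw [qmap_ker, tmap_ker]
    ext x
    simp only [Submodule.mem_comap]
    constructor
    · intro hx
      exact (mem_Dit T m (x : X)).1 hx m le_rfl
    · intro hx
      exact (mem_Dit T m (x : X)).2
        (return_implies T hUfd hUeq m (x : X) x.2 hx)
  have h := finrank_range_eq_of_ker_eq _ _ hker
  rw [qmap_range, tmap_range] at h
  rw [← h.1]
  exact (codim_Dit T hDfd hDeq m).2

end Tower

section Baire

variable [CompleteSpace X]

/-- polynomials in `T` without constant term, as a submodule of operators. -/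
noncomputable def polySub (T : X →L[ℂ] X) : Submodule ℂ (X →L[ℂ] X) where
  carrier := {S | ∃ p : Polynomial ℂ, p.coeff 0 = 0 ∧ S = Polynomial.aeval T p}
  add_mem' := by
    rintro a b ⟨p, hp, rfl⟩ ⟨q, hq, rfl⟩
    exact ⟨p + q, by simp [hp, hq], by simp⟩
  zero_mem' := ⟨0, by simp, by simp⟩
  smul_mem' := by
    rintro c a ⟨p, hp, rfl⟩
    exact ⟨c • p, by simp [hp], by simp⟩

lemma closedAlgGen_eq (T : X →L[ℂ] X) :
    closedAlgGen T = ((polySub T).topologicalClosure : Set (X →L[ℂ] X)) := by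
  rw [Submodule.topologicalClosure_coe]
  rfl

lemma mem_closedAlgGen_pow (T : X →L[ℂ] X) (m : ℕ) (hm : 1 ≤ m) :
    (T ^ m) ∈ closedAlgGen T := by
  apply subset_closure
  have hm0 : (0 : ℕ) ≠ m := by omega
  exact ⟨Polynomial.X ^ m, by rw [Polynomial.coeff_X_pow]; simp [hm0], by simp⟩

variable (hYc : IsClosed (Y : Set X))

include hYc in
lemma uniform_bound
    (hai : ∀ S ∈ closedAlgGen T, ∃ F : Submodule ℂ X,
      FiniteDimensional ℂ F ∧ Y.map (S : X →ₗ[ℂ] X) ≤ Y ⊔ F) :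
    ∃ c : ℕ, ∀ S ∈ closedAlgGen T,
      FiniteDimensional ℂ ((Y.map (S : X →ₗ[ℂ] X)).map Y.mkQ) ∧ finrank ℂ ((Y.map (S : X →ₗ[ℂ] X)).map Y.mkQ) ≤ c := by
  classical
  haveI : IsClosed (Y : Set X) := hYc
  -- continuity of the quotient map
  have hmkQcont : Continuous (Y.mkQ : X → X ⧸ Y) := by
    apply AddMonoidHomClass.continuous_of_bound Y.mkQ 1
    intro x
    simpa using Submodule.Quotient.norm_mk_le Y x
  -- finite-dimensionality of all the images
  have hfd : ∀ S ∈ closedAlgGen T, FiniteDimensional ℂ ((Y.map (S : X →ₗ[ℂ] X)).map Y.mkQ) := by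
    intro S hS
    obtain ⟨F, hFfd, hFle⟩ := hai S hS
    haveI := hFfd
    exact Submodule.finiteDimensional_of_le (errN_le_map_mkQ S hFle)
  set A : Set (X →L[ℂ] X) := closedAlgGen T with hA
  have hAclosed : IsClosed A := isClosed_closure
  haveI : CompleteSpace A := hAclosed.completeSpace_coe
  haveI : Nonempty A := ⟨⟨0, subset_closure ⟨0, by simp, by simp⟩⟩⟩
  -- the closed pieces
  set C : ℕ → Set A := fun n => {S : A | ∀ v : Fin (n+1) → Y,
    ¬ LinearIndependent ℂ (fun i => Y.mkQ ((S : X →L[ℂ] X) (v i : X)))} with hC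
  have hCclosed : ∀ n, IsClosed (C n) := by
    intro n
    have : C n = ⋂ v : Fin (n+1) → Y,
        (fun S : A => fun i => Y.mkQ ((S : X →L[ℂ] X) (v i : X))) ⁻¹'
          {w : Fin (n+1) → X ⧸ Y | LinearIndependent ℂ w}ᶜ := by
      ext S
      simp [hC, Set.mem_iInter]
    rw [this]
    refine isClosed_iInter fun v => IsClosed.preimage ?_ ?_
    · refine continuous_pi fun i => ?_
      exact hmkQcont.comp
        (((ContinuousLinearMap.apply ℂ X ((v i : X))).continuous).comp continuous_subtype_val)
    · exact (isOpen_setOf_linearIndependent).isClosed_compl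
  -- a dependence criterion for rank
  have rank_le_of_dep : ∀ (S : X →L[ℂ] X), FiniteDimensional ℂ ((Y.map (S : X →ₗ[ℂ] X)).map Y.mkQ) →
      ∀ n : ℕ, (∀ v : Fin (n+1) → Y,
        ¬ LinearIndependent ℂ (fun i => Y.mkQ (S (v i : X)))) →
      finrank ℂ ((Y.map (S : X →ₗ[ℂ] X)).map Y.mkQ) ≤ n := by
    intro S hSfd n hdep
    by_contra hlt
    push_neg at hlt
    haveI := hSfd
    set R := (Y.map (S : X →ₗ[ℂ] X)).map Y.mkQ with hR
    let b := finBasis ℂ R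
    have hcast : ∀ i : Fin (n+1), (i : ℕ) < finrank ℂ R := fun i => lt_of_lt_of_le i.2 hlt
    set w : Fin (n+1) → R := fun i => b ⟨i, hcast i⟩ with hw
    have hwli : LinearIndependent ℂ w := by
      apply b.linearIndependent.comp
      intro i j hij
      have : (i : ℕ) = (j : ℕ) := by
        simpa using congrArg (fun t : Fin (finrank ℂ R) => (t : ℕ)) hij
      exact Fin.ext this
    have hwli' : LinearIndependent ℂ (fun i => (w i : X ⧸ Y)) :=
      hwli.map' R.subtype (Submodule.ker_subtype R)
    have hpre : ∀ i : Fin (n+1), ∃ y : Y, Y.mkQ (S (y : X)) = (w i : X ⧸ Y) := by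
      intro i
      obtain ⟨x, hx, hxe⟩ := Submodule.mem_map.1 ((w i).2 : (w i : X ⧸ Y) ∈ R)
      obtain ⟨y, hy, hye⟩ := hx
      exact ⟨⟨y, hy⟩, by rw [← hxe, ← hye]; rfl⟩
    choose v hv using hpre
    exact hdep v (by
      have : (fun i => Y.mkQ (S (v i : X))) = fun i => (w i : X ⧸ Y) := funext hv
      rw [this]
      exact hwli')
  -- the pieces cover
  have hCcover : ⋃ n, C n = Set.univ := by
    ext S
    simp only [Set.mem_iUnion, Set.mem_univ, iff_true]
    obtain ⟨F, hFfd, hFle⟩ := hai S.1 S.2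
    haveI := hFfd
    set W := F.map Y.mkQ with hW
    haveI : FiniteDimensional ℂ W := by infer_instance
    refine ⟨finrank ℂ W, ?_⟩
    intro v hli
    have hmem : ∀ i, Y.mkQ ((S : X →L[ℂ] X) (v i : X)) ∈ W := by
      intro i
      apply errN_le_map_mkQ (S : X →L[ℂ] X) hFle
      exact ⟨(S : X →L[ℂ] X) (v i : X), ⟨(v i : X), (v i).2, rfl⟩, rfl⟩
    set w : Fin (finrank ℂ W + 1) → W := fun i => ⟨_, hmem i⟩ with hw
    have hwli : LinearIndependent ℂ w := by
      have : (fun i => (w i : X ⧸ Y)) = fun i => Y.mkQ ((S : X →L[ℂ] X) (v i : X)) := rfl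
      exact (LinearIndependent.of_comp W.subtype (by rw [← this] at hli; exact hli))
    have := hwli.fintype_card_le_finrank
    simp at this
  -- Baire category
  obtain ⟨N, hN⟩ := nonempty_interior_of_iUnion_of_closed hCclosed hCcover
  obtain ⟨S₀, hS₀⟩ := hN
  rw [mem_interior_iff_mem_nhds, Metric.mem_nhds_iff] at hS₀
  obtain ⟨ε, hε, hball⟩ := hS₀
  -- uniform bound c = 2 N
  refine ⟨N + N, fun S hS => ?_⟩
  refine ⟨hfd S hS, ?_⟩
  -- scale S to be tiny
  set t : ℂ := ((ε / (2 * (‖S‖ + 1)) : ℝ) : ℂ) with ht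
  have htpos : (0:ℝ) < ε / (2 * (‖S‖ + 1)) := by
    apply div_pos hε
    positivity
  have htne : t ≠ 0 := by
    rw [ht]
    exact_mod_cast htpos.ne'
  -- S' = S₀ + t • S  is within ε of S₀
  have hmem2 : ∀ {W : X →L[ℂ] X}, W ∈ A → W ∈ (polySub T).topologicalClosure := by
    intro W hW
    have hW' : W ∈ closedAlgGen T := hW
    rw [closedAlgGen_eq] at hW'
    exact hW'
  have hS'mem0 : (S₀ : X →L[ℂ] X) + t • S ∈ (polySub T).topologicalClosure :=
    Submodule.add_mem _ (hmem2 S₀.2) (Submodule.smul_mem _ t (hmem2 hS))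
  have hS'mem : (S₀ : X →L[ℂ] X) + t • S ∈ A := by
    show _ ∈ closedAlgGen T
    rw [closedAlgGen_eq]
    exact hS'mem0
  set S' : A := ⟨(S₀ : X →L[ℂ] X) + t • S, hS'mem⟩ with hS'
  have hS'ball : S' ∈ Metric.ball S₀ ε := by
    rw [Metric.mem_ball, Subtype.dist_eq, dist_eq_norm]
    have he : (S' : X →L[ℂ] X) - (S₀ : X →L[ℂ] X) = t • S := by
      rw [hS']
      exact add_sub_cancel_left _ _
    rw [he]
    have hnorm : ‖t • S‖ ≤ (ε / (2 * (‖S‖ + 1))) * ‖S‖ := by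
      have h1 : ‖t • S‖ = ‖t‖ * ‖S‖ := norm_smul t S
      have h2 : ‖t‖ = ε / (2 * (‖S‖ + 1)) := by
        rw [ht, Complex.norm_real, Real.norm_eq_abs]
        exact abs_of_pos htpos
      rw [h1, h2]
    refine lt_of_le_of_lt hnorm ?_
    rw [div_mul_eq_mul_div]
    rw [div_lt_iff₀ (by positivity)]
    have h0 : (0:ℝ) ≤ ‖S‖ := norm_nonneg S
    nlinarith
  have hS₀ball : S₀ ∈ Metric.ball S₀ ε := Metric.mem_ball_self hε
  have hS'CN : S' ∈ C N := hball hS'ball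
  have hS₀CN : S₀ ∈ C N := hball hS₀ball
  -- ranks of S' and S₀ are at most N
  have hrankS' : finrank ℂ ((Y.map (((S' : X →L[ℂ] X)) : X →ₗ[ℂ] X)).map Y.mkQ) ≤ N :=
    rank_le_of_dep _ (hfd _ S'.2) N hS'CN
  have hrankS₀ : finrank ℂ ((Y.map (((S₀ : X →L[ℂ] X)) : X →ₗ[ℂ] X)).map Y.mkQ) ≤ N :=
    rank_le_of_dep _ (hfd _ S₀.2) N hS₀CN
  haveI := hfd _ S'.2
  haveI := hfd _ S₀.2
  -- the image of t • S is inside the sup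
  set R' := (Y.map (((S' : X →L[ℂ] X)) : X →ₗ[ℂ] X)).map Y.mkQ with hR'
  set R₀ := (Y.map (((S₀ : X →L[ℂ] X)) : X →ₗ[ℂ] X)).map Y.mkQ with hR₀
  have hsub : (Y.map (S : X →ₗ[ℂ] X)).map Y.mkQ ≤ R' ⊔ R₀ := by
    rintro x ⟨u, ⟨y, hy, rfl⟩, rfl⟩
    have hexp : Y.mkQ (S y) = (t⁻¹ • (Y.mkQ ((S' : X →L[ℂ] X) y) - Y.mkQ ((S₀ : X →L[ℂ] X) y))) := by
      have h1 : (S' : X →L[ℂ] X) y = (S₀ : X →L[ℂ] X) y + t • S y := by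
        rw [hS']
        simp
      rw [h1]
      rw [map_add, map_smul]
      rw [add_sub_cancel_left]
      rw [smul_smul, inv_mul_cancel₀ htne, one_smul]
    show Y.mkQ (S y) ∈ R' ⊔ R₀
    rw [hexp]
    refine Submodule.smul_mem _ _ (Submodule.sub_mem _ ?_ ?_)
    · exact Submodule.mem_sup_left ⟨(S' : X →L[ℂ] X) y, ⟨y, hy, rfl⟩, rfl⟩
    · exact Submodule.mem_sup_right ⟨(S₀ : X →L[ℂ] X) y, ⟨y, hy, rfl⟩, rfl⟩
  haveI : FiniteDimensional ℂ (R' ⊔ R₀ : Submodule ℂ (X ⧸ Y)) := by infer_instance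
  have hfin : finrank ℂ ((Y.map (S : X →ₗ[ℂ] X)).map Y.mkQ) ≤ finrank ℂ (R' ⊔ R₀ : Submodule ℂ (X ⧸ Y)) :=
    Submodule.finrank_mono hsub
  refine hfin.trans ((Submodule.finrank_add_le_finrank_add_finrank R' R₀).trans ?_)
  omega

end Baire

end AIHS

theorem exists_iterate_decreasing_error_dim
    {X : Type*} [NormedAddCommGroup X] [NormedSpace ℂ X] [CompleteSpace X]
    (T : X →L[ℂ] X) (Y : Submodule ℂ X) (hY : IsHalfSpace Y)
    (hai : ∀ S ∈ closedAlgGen T, ∃ F : Submodule ℂ X,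
      FiniteDimensional ℂ F ∧ Y.map (S : X →ₗ[ℂ] X) ≤ Y ⊔ F)
    (hpos : 0 < errDim Y T) :
    ∃ k : ℕ,
      errDim ((fun Z : Submodule ℂ X => Z ⊓ Z.comap (T : X →ₗ[ℂ] X))^[k] Y) T < errDim Y T ∨
      errDim ((fun Z : Submodule ℂ X => Z ⊔ Z.map (T : X →ₗ[ℂ] X))^[k] Y) T < errDim Y T := by
  classical
  have hTA : T ∈ closedAlgGen T := subset_closure ⟨Polynomial.X, by simp, by simp⟩
  have hfdY : FiniteDimensional ℂ (AIHS.errN T Y) := AIHS.good_of_exists T (hai T hTA)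
  set d := finrank ℂ (AIHS.errN T Y) with hd
  have herr : errDim Y T = (d : ℕ∞) := AIHS.errDim_eq T Y hfdY
  have hd1 : 1 ≤ d := by
    by_contra h
    push_neg at h
    interval_cases d
    rw [herr] at hpos
    simp at hpos
  by_contra hcon
  push_neg at hcon
  have hconD : ∀ k, errDim Y T ≤ errDim (AIHS.Dit T Y k) T := fun k => (hcon k).1
  have hconU : ∀ k, errDim Y T ≤ errDim (AIHS.Uit T Y k) T := fun k => (hcon k).2
  have hDfd : ∀ k, FiniteDimensional ℂ (AIHS.errN T (AIHS.Dit T Y k)) :=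
    fun k => (AIHS.Dchain T hfdY k).1
  have hUfd : ∀ k, FiniteDimensional ℂ (AIHS.errN T (AIHS.Uit T Y k)) :=
    fun k => (AIHS.Uchain T hfdY k).1
  have hDeq : ∀ k, finrank ℂ (AIHS.errN T (AIHS.Dit T Y k)) = d := by
    intro k
    refine le_antisymm (AIHS.Dchain T hfdY k).2 ?_
    have h2 := hconD k
    rw [herr, AIHS.errDim_eq T _ (hDfd k)] at h2
    exact_mod_cast h2
  have hUeq : ∀ k, finrank ℂ (AIHS.errN T (AIHS.Uit T Y k)) = d := by
    intro k
    refine le_antisymm (AIHS.Uchain T hfdY k).2 ?_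
    have h2 := hconU k
    rw [herr, AIHS.errDim_eq T _ (hUfd k)] at h2
    exact_mod_cast h2
  obtain ⟨c, hc⟩ := AIHS.uniform_bound T hY.1 hai
  set m := c + 1 with hm
  have hrank := AIHS.rank_pow T hDfd hDeq hUfd hUeq m
  have hcm := hc (T ^ m) (AIHS.mem_closedAlgGen_pow T m (by omega))
  have h1 : m * d ≤ c := by
    rw [← hrank]
    exact hcm.2
  have h2 : m ≤ m * d := Nat.le_mul_of_pos_right _ (by omega)
  omega
end

section
/- Let A be a norm-closed algebra of bounded operators on a Banach space X generated by finitely many pairwise commuting operators T₁,…,T_n. If A has an almost invariant half-space, then A has an invariant half-space. -/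
set_option maxHeartbeats 1000000

open Submodule Module Set

namespace AIHSAux

variable {X : Type*} [NormedAddCommGroup X] [NormedSpace ℂ X]

/-- The "defect space" of `S` relative to `Y`: the image of `S Y` in `X ⧸ Y`. -/
noncomputable def DD (Y : Submodule ℂ X) (S : X →L[ℂ] X) : Submodule ℂ (X ⧸ Y) :=
  (Y.map (S : X →ₗ[ℂ] X)).map Y.mkQ

lemma mem_DD {Y : Submodule ℂ X} {S : X →L[ℂ] X} {v : X ⧸ Y} :
    v ∈ DD Y S ↔ ∃ y, y ∈ Y ∧ Y.mkQ (S y) = v := by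
  constructor
  · rintro ⟨z, ⟨y, hy, rfl⟩, rfl⟩
    exact ⟨y, hy, rfl⟩
  · rintro ⟨y, hy, rfl⟩
    exact ⟨S y, ⟨y, hy, rfl⟩, rfl⟩

lemma DD_add_le (Y : Submodule ℂ X) (S T : X →L[ℂ] X) :
    DD Y (S + T) ≤ DD Y S ⊔ DD Y T := by
  rintro v hv
  obtain ⟨y, hy, rfl⟩ := mem_DD.1 hv
  have : Y.mkQ ((S + T) y) = Y.mkQ (S y) + Y.mkQ (T y) := by
    simp [ContinuousLinearMap.add_apply]
  rw [this]
  exact add_mem_sup (mem_DD.2 ⟨y, hy, rfl⟩) (mem_DD.2 ⟨y, hy, rfl⟩)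

lemma DD_smul_le (Y : Submodule ℂ X) (c : ℂ) (S : X →L[ℂ] X) :
    DD Y (c • S) ≤ DD Y S := by
  rintro v hv
  obtain ⟨y, hy, rfl⟩ := mem_DD.1 hv
  have : Y.mkQ ((c • S) y) = c • Y.mkQ (S y) := by
    simp [ContinuousLinearMap.smul_apply]
  rw [this]
  exact smul_mem _ _ (mem_DD.2 ⟨y, hy, rfl⟩)

lemma DD_smul_eq (Y : Submodule ℂ X) {c : ℂ} (hc : c ≠ 0) (S : X →L[ℂ] X) :
    DD Y (c • S) = DD Y S := by
  refine le_antisymm (DD_smul_le Y c S) ?_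
  have : S = c⁻¹ • (c • S) := by
    rw [smul_smul, inv_mul_cancel₀ hc, one_smul]
  conv_lhs => rw [this]
  exact DD_smul_le Y c⁻¹ (c • S)

lemma DD_sub_le (Y : Submodule ℂ X) (S T : X →L[ℂ] X) :
    DD Y (S - T) ≤ DD Y S ⊔ DD Y T := by
  have h : S - T = S + (-1 : ℂ) • T := by
    ext x; simp [sub_eq_add_neg]
  rw [h]
  refine (DD_add_le Y S ((-1 : ℂ) • T)).trans ?_
  exact sup_le_sup_left (DD_smul_le Y (-1) T) _

/-- "Defect rank at most `k`": every `k+1` images of elements of `Y` under `S` admit a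
nontrivial linear relation modulo `Y`. -/
def Pd (Y : Submodule ℂ X) (k : ℕ) (S : X →L[ℂ] X) : Prop :=
  ∀ x : Fin (k + 1) → Y, ∃ c : Fin (k + 1) → ℂ, c ≠ 0 ∧ (∑ i, c i • S (x i : X)) ∈ Y

lemma Pd_of_findim {Y : Submodule ℂ X} {k : ℕ} {S : X →L[ℂ] X}
    [FiniteDimensional ℂ (DD Y S)] (hk : finrank ℂ (DD Y S) ≤ k) : Pd Y k S := by
  intro x
  set w : Fin (k + 1) → DD Y S := fun i => ⟨Y.mkQ (S (x i : X)), mem_DD.2 ⟨x i, (x i).2, rfl⟩⟩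
  have hnli : ¬ LinearIndependent ℂ w := by
    intro hli
    have := hli.fintype_card_le_finrank
    rw [Fintype.card_fin] at this
    omega
  obtain ⟨g, hg, i, hgi⟩ := Fintype.not_linearIndependent_iff.1 hnli
  refine ⟨g, fun h => hgi (by rw [h]; rfl), ?_⟩
  rw [← Submodule.Quotient.mk_eq_zero, ← Y.mkQ_apply, map_sum]
  have : ∀ j, Y.mkQ (g j • S (x j : X)) = g j • (w j : X ⧸ Y) := by
    intro j; simp [w]
  rw [Finset.sum_congr rfl fun j _ => this j]
  have := congrArg (Subtype.val) hg
  simpa using this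

lemma findim_of_Pd {Y : Submodule ℂ X} {k : ℕ} {S : X →L[ℂ] X} (h : Pd Y k S) :
    ∃ _ : FiniteDimensional ℂ (DD Y S), finrank ℂ (DD Y S) ≤ k := by
  classical
  set J : Set ℕ := {j | ∃ x : Fin j → Y, LinearIndependent ℂ (fun i => Y.mkQ (S (x i : X)))}
  have hJ0 : 0 ∈ J := ⟨fun i => Fin.elim0 i, linearIndependent_empty_type⟩
  have hJbdd : ∀ j ∈ J, j ≤ k := by
    rintro j ⟨x, hx⟩
    by_contra hj
    push_neg at hj
    have hle : k + 1 ≤ j := hj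
    obtain ⟨c, hc, hmem⟩ := h (x ∘ Fin.castLE hle)
    have hx' : LinearIndependent ℂ ((fun i => Y.mkQ (S (x i : X))) ∘ Fin.castLE hle) :=
      hx.comp _ (Fin.castLE_injective hle)
    have h0 : ∑ i, c i • Y.mkQ (S ((x ∘ Fin.castLE hle) i : X)) = 0 := by
      have heq : ∑ i, c i • Y.mkQ (S ((x ∘ Fin.castLE hle) i : X))
          = Y.mkQ (∑ i, c i • S ((x ∘ Fin.castLE hle) i : X)) := by
        rw [map_sum]; exact Finset.sum_congr rfl fun j _ => by simp
      rw [heq, Y.mkQ_apply, Submodule.Quotient.mk_eq_zero]; exact hmem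
    have := Fintype.linearIndependent_iff.1 hx' c h0
    exact hc (funext fun i => this i)
  have hJB : BddAbove J := ⟨k, fun j hj => hJbdd j hj⟩
  have hJne : J.Nonempty := ⟨0, hJ0⟩
  obtain ⟨x, hx⟩ := Nat.sSup_mem hJne hJB
  have hjk : sSup J ≤ k := hJbdd _ (Nat.sSup_mem hJne hJB)
  -- maximality: every mkQ (S y) lies in the span
  have hmax : ∀ y : Y, Y.mkQ (S (y : X)) ∈ span ℂ (Set.range fun i => Y.mkQ (S (x i : X))) := by
    intro y
    by_contra hy
    have : LinearIndependent ℂ (Fin.snoc (fun i => Y.mkQ (S (x i : X))) (Y.mkQ (S (y : X)))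
        : Fin (sSup J + 1) → X ⧸ Y) :=
      linearIndependent_fin_snoc.2 ⟨hx, hy⟩
    have : sSup J + 1 ∈ J := ⟨Fin.snoc x y, by
      convert this using 1
      funext i
      refine Fin.lastCases ?_ (fun i => ?_) i <;> simp⟩
    have := le_csSup hJB this
    omega
  have hspan : DD Y S ≤ span ℂ (Set.range fun i => Y.mkQ (S (x i : X))) := by
    rintro v hv
    obtain ⟨y, hy, rfl⟩ := mem_DD.1 hv
    exact hmax ⟨y, hy⟩
  haveI hfinspan : FiniteDimensional ℂ (span ℂ (Set.range fun i => Y.mkQ (S (x i : X)))) :=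
    FiniteDimensional.span_of_finite ℂ (Set.finite_range _)
  haveI hfin : FiniteDimensional ℂ (DD Y S) := Submodule.finiteDimensional_of_le hspan
  refine ⟨hfin, ?_⟩
  have h1 : finrank ℂ (DD Y S) ≤ finrank ℂ (span ℂ (Set.range fun i => Y.mkQ (S (x i : X)))) :=
    Submodule.finrank_mono hspan
  have h2 : finrank ℂ (span ℂ (Set.range fun i => Y.mkQ (S (x i : X)))) = sSup J :=
    by rw [finrank_span_eq_card hx, Fintype.card_fin]
  omega


lemma isClosed_Pd (Y : Submodule ℂ X) (hY : IsClosed (Y : Set X)) (k : ℕ) :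
    IsClosed {S : X →L[ℂ] X | Pd Y k S} := by
  refine IsSeqClosed.isClosed ?_
  intro Sn S hSn hS
  intro x
  have H : ∀ n, ∃ c : Fin (k + 1) → ℂ, ‖c‖ = 1 ∧ (∑ i, c i • Sn n (x i : X)) ∈ Y := by
    intro n
    obtain ⟨c, hc, hmem⟩ := hSn n x
    have hcn : ‖c‖ ≠ 0 := norm_ne_zero_iff.2 hc
    refine ⟨(‖c‖⁻¹ : ℂ) • c, ?_, ?_⟩
    · rw [norm_smul]
      simp [norm_inv, inv_mul_cancel₀ hcn]
    · have : ∑ i, ((‖c‖⁻¹ : ℂ) • c) i • Sn n (x i : X)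
          = (‖c‖⁻¹ : ℂ) • ∑ i, c i • Sn n (x i : X) := by
        rw [Finset.smul_sum]
        exact Finset.sum_congr rfl fun j _ => by simp [smul_smul]
      rw [this]
      exact smul_mem _ _ hmem
  choose c hc1 hc2 using H
  have hcmem : ∀ n, c n ∈ Metric.sphere (0 : Fin (k + 1) → ℂ) 1 := by
    intro n; rw [mem_sphere_zero_iff_norm]; exact hc1 n
  obtain ⟨c₀, hc₀mem, φ, hφ, hcφ⟩ := (isCompact_sphere (0 : Fin (k + 1) → ℂ) 1).tendsto_subseq hcmem
  have hc₀ : c₀ ≠ 0 := by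
    rw [mem_sphere_zero_iff_norm] at hc₀mem
    intro h; rw [h] at hc₀mem; simp at hc₀mem
  refine ⟨c₀, hc₀, ?_⟩
  have htend : Filter.Tendsto (fun j => ∑ i, c (φ j) i • Sn (φ j) (x i : X))
      Filter.atTop (nhds (∑ i, c₀ i • S (x i : X))) := by
    refine tendsto_finset_sum _ fun i _ => ?_
    refine Filter.Tendsto.smul ?_ ?_
    · exact ((continuous_apply i).tendsto c₀).comp hcφ
    · have h1 : Filter.Tendsto (fun j => Sn (φ j)) Filter.atTop (nhds S) :=
        hS.comp (hφ.tendsto_atTop)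
      exact ((ContinuousLinearMap.apply ℂ X (x i : X)).continuous.tendsto S).comp h1
  exact hY.mem_of_tendsto htend (Filter.Eventually.of_forall fun j => hc2 (φ j))

lemma uniform_bound [CompleteSpace X] (Y : Submodule ℂ X) (hY : IsClosed (Y : Set X))
    (A : NonUnitalSubalgebra ℂ (X →L[ℂ] X)) (hAc : IsClosed (A : Set (X →L[ℂ] X)))
    (hfin : ∀ S ∈ A, FiniteDimensional ℂ (DD Y S)) :
    ∃ m : ℕ, ∀ S ∈ A, FiniteDimensional ℂ (DD Y S) ∧ finrank ℂ (DD Y S) ≤ m := by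
  haveI : CompleteSpace (A : Set (X →L[ℂ] X)) := hAc.completeSpace_coe
  haveI : Nonempty (A : Set (X →L[ℂ] X)) := ⟨⟨0, A.zero_mem⟩⟩
  haveI : BaireSpace (A : Set (X →L[ℂ] X)) := by
    haveI := TopologicalSpace.IsCompletelyPseudoMetrizableSpace.of_completeSpace_pseudometrizable
      (X := (A : Set (X →L[ℂ] X)))
    exact BaireSpace.of_completelyPseudoMetrizable
  set f : ℕ → Set (A : Set (X →L[ℂ] X)) := fun k => {S | Pd Y k S.1}
  have hfc : ∀ k, IsClosed (f k) := fun k =>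
    (isClosed_Pd Y hY k).preimage continuous_subtype_val
  have hfu : ⋃ k, f k = Set.univ := by
    refine Set.eq_univ_of_forall fun S => ?_
    haveI := hfin S.1 S.2
    exact Set.mem_iUnion.2 ⟨finrank ℂ (DD Y S.1), Pd_of_findim le_rfl⟩
  obtain ⟨k, S₀, hS₀⟩ := nonempty_interior_of_iUnion_of_closed hfc hfu
  obtain ⟨ε, hε, hball⟩ := Metric.isOpen_iff.1 isOpen_interior S₀ hS₀
  have hball' : ∀ S' : (A : Set (X →L[ℂ] X)), dist S' S₀ < ε → Pd Y k S'.1 :=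
    fun S' h => interior_subset (hball h)
  have hS₀k : Pd Y k S₀.1 := hball' S₀ (by simpa using hε)
  refine ⟨k + k, fun S hS => ?_⟩
  set t : ℝ := ε / (2 * (‖S‖ + 1)) with ht_def
  have hSpos : (0:ℝ) < ‖S‖ + 1 := by positivity
  have ht : 0 < t := by positivity
  have htne : (t : ℂ) ≠ 0 := by
    simp only [ne_eq, Complex.ofReal_eq_zero]
    exact ne_of_gt ht
  set S' : X →L[ℂ] X := S₀.1 + (t : ℂ) • S with hS'_def
  have hS'A : S' ∈ A := A.add_mem S₀.2 (SMulMemClass.smul_mem _ hS)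
  have hdist : dist (⟨S', hS'A⟩ : (A : Set (X →L[ℂ] X))) S₀ < ε := by
    rw [Subtype.dist_eq, dist_eq_norm]
    have : S' - S₀.1 = (t : ℂ) • S := by rw [hS'_def]; abel
    rw [this, norm_smul ((t:ℝ):ℂ) S]
    have hnt : ‖(t : ℂ)‖ = t := by
      rw [Complex.norm_real, Real.norm_eq_abs, abs_of_pos ht]
    rw [hnt, ht_def]
    rw [div_mul_eq_mul_div, div_lt_iff₀ (by positivity)]
    nlinarith [norm_nonneg S]
  have hS'k : Pd Y k S' := hball' _ hdist
  obtain ⟨h1fin, h1⟩ := findim_of_Pd hS'k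
  obtain ⟨h0fin, h0⟩ := findim_of_Pd hS₀k
  have hsub : DD Y ((t : ℂ) • S) ≤ DD Y S' ⊔ DD Y S₀.1 := by
    have : (t : ℂ) • S = S' - S₀.1 := by rw [hS'_def]; abel
    rw [this]
    exact DD_sub_le Y S' S₀.1
  haveI := h1fin; haveI := h0fin
  haveI hsupfin : FiniteDimensional ℂ (DD Y S' ⊔ DD Y S₀.1 : Submodule ℂ (X ⧸ Y)) :=
    Submodule.finiteDimensional_sup _ _
  have h2 : finrank ℂ (DD Y ((t : ℂ) • S)) ≤ finrank ℂ (DD Y S' ⊔ DD Y S₀.1 : Submodule ℂ (X ⧸ Y)) :=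
    Submodule.finrank_mono hsub
  have h3 : finrank ℂ (DD Y S' ⊔ DD Y S₀.1 : Submodule ℂ (X ⧸ Y)) ≤ k + k := by
    have := Submodule.finrank_sup_add_finrank_inf_eq (DD Y S') (DD Y S₀.1)
    omega
  have hDDeq : DD Y ((t : ℂ) • S) = DD Y S := DD_smul_eq Y htne S
  rw [hDDeq] at h2
  exact ⟨hfin S hS, by omega⟩

lemma tendsto_tseq : Filter.Tendsto (fun n : ℕ => ((n : ℂ) + 1)⁻¹) Filter.atTop (nhds 0) := by
  have h0 : Filter.Tendsto (fun n : ℕ => (((n : ℝ) + 1)⁻¹ : ℝ)) Filter.atTop (nhds 0) := by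
    simpa [one_div] using tendsto_one_div_add_atTop_nhds_zero_nat (𝕜 := ℝ)
  have h1 := (Complex.continuous_ofReal.tendsto 0).comp h0
  rw [Complex.ofReal_zero] at h1
  refine h1.congr fun n => ?_
  show ((((n : ℝ) + 1)⁻¹ : ℝ) : ℂ) = ((n : ℂ) + 1)⁻¹
  push_cast
  ring

lemma key_lemma (Y : Submodule ℂ X) (hY : IsClosed (Y : Set X))
    (A : NonUnitalSubalgebra ℂ (X →L[ℂ] X))
    (hfin : ∀ S ∈ A, FiniteDimensional ℂ (DD Y S))
    (Sstar : X →L[ℂ] X) (hSstarA : Sstar ∈ A)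
    (hmax : ∀ S ∈ A, finrank ℂ (DD Y S) ≤ finrank ℂ (DD Y Sstar))
    (S : X →L[ℂ] X) (hS : S ∈ A) (y₀ : X) (hy₀Y : y₀ ∈ Y) (hy₀ : Sstar y₀ ∈ Y) :
    Y.mkQ (S y₀) ∈ DD Y Sstar := by
  classical
  haveI := hfin Sstar hSstarA
  set r := finrank ℂ (DD Y Sstar) with hr_def
  set v : Basis (Fin r) ℂ (DD Y Sstar) := finBasis ℂ (DD Y Sstar) with hv_def
  have hvmem : ∀ i, ((v i : X ⧸ Y)) ∈ DD Y Sstar := fun i => (v i).2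
  have hv : ∀ i, ∃ z, z ∈ Y ∧ Y.mkQ (Sstar z) = (v i : X ⧸ Y) := fun i => mem_DD.1 (v i).2
  choose y hyY hyv using hv
  have hvind : LinearIndependent ℂ (fun i => (v i : X ⧸ Y)) :=
    v.linearIndependent.map' (DD Y Sstar).subtype (ker_subtype _)
  by_contra hu₀
  -- Step 1: find a good parameter t = 1/(n+1)
  have hgood : ∃ n : ℕ, ∀ c : Fin (r + 1) → ℂ, ‖c‖ = 1 →
      (∑ i : Fin r, c i.castSucc • (Sstar (y i) + ((n : ℂ) + 1)⁻¹ • S (y i)))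
        + c (Fin.last r) • S y₀ ∉ Y := by
    by_contra hbad
    push_neg at hbad
    choose c hc1 hc2 using hbad
    have hcmem : ∀ n, c n ∈ Metric.sphere (0 : Fin (r + 1) → ℂ) 1 := by
      intro n; rw [mem_sphere_zero_iff_norm]; exact hc1 n
    obtain ⟨c₀, hc₀mem, φ, hφ, hcφ⟩ :=
      (isCompact_sphere (0 : Fin (r + 1) → ℂ) 1).tendsto_subseq hcmem
    have htzero : Filter.Tendsto (fun j => ((φ j : ℂ) + 1)⁻¹) Filter.atTop (nhds 0) :=
      tendsto_tseq.comp hφ.tendsto_atTop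
    have hLmem : (∑ i : Fin r, c₀ i.castSucc • Sstar (y i)) + c₀ (Fin.last r) • S y₀ ∈ Y := by
      have htendL : Filter.Tendsto
          (fun j => (∑ i : Fin r, c (φ j) i.castSucc • (Sstar (y i) + ((φ j : ℂ) + 1)⁻¹ • S (y i)))
            + c (φ j) (Fin.last r) • S y₀) Filter.atTop
          (nhds ((∑ i : Fin r, c₀ i.castSucc • Sstar (y i)) + c₀ (Fin.last r) • S y₀)) := by
        refine Filter.Tendsto.add ?_ ?_
        · refine tendsto_finset_sum _ fun i _ => ?_
          refine Filter.Tendsto.smul ?_ ?_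
          · exact ((continuous_apply i.castSucc).tendsto c₀).comp hcφ
          · have h5 : Filter.Tendsto (fun j => Sstar (y i) + ((φ j : ℂ) + 1)⁻¹ • S (y i))
                Filter.atTop (nhds (Sstar (y i) + (0 : ℂ) • S (y i))) :=
              (tendsto_const_nhds.add (htzero.smul tendsto_const_nhds))
            simpa using h5
        · exact Filter.Tendsto.smul (((continuous_apply (Fin.last r)).tendsto c₀).comp hcφ)
            tendsto_const_nhds
      exact hY.mem_of_tendsto htendL (Filter.Eventually.of_forall fun j => hc2 (φ j))
    have hmk : (∑ i : Fin r, c₀ i.castSucc • (v i : X ⧸ Y))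
        + c₀ (Fin.last r) • Y.mkQ (S y₀) = 0 := by
      have h1 : Y.mkQ ((∑ i : Fin r, c₀ i.castSucc • Sstar (y i)) + c₀ (Fin.last r) • S y₀)
          = (∑ i : Fin r, c₀ i.castSucc • (v i : X ⧸ Y)) + c₀ (Fin.last r) • Y.mkQ (S y₀) := by
        rw [map_add, map_sum, map_smul]
        congr 1
        exact Finset.sum_congr rfl fun i _ => by rw [map_smul, hyv]
      rw [← h1, Y.mkQ_apply, Submodule.Quotient.mk_eq_zero]
      exact hLmem
    rcases eq_or_ne (c₀ (Fin.last r)) 0 with hlast | hlast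
    · rw [hlast, zero_smul, add_zero] at hmk
      have hall := Fintype.linearIndependent_iff.1 hvind (fun i => c₀ i.castSucc) hmk
      have : c₀ = 0 := by
        funext i
        refine Fin.lastCases ?_ (fun i => ?_) i
        · exact hlast
        · exact hall i
      rw [mem_sphere_zero_iff_norm, this] at hc₀mem
      simp at hc₀mem
    · apply hu₀
      have : Y.mkQ (S y₀) = (c₀ (Fin.last r))⁻¹ •
          (-(∑ i : Fin r, c₀ i.castSucc • (v i : X ⧸ Y))) := by
        rw [eq_inv_smul_iff₀ hlast]
        linear_combination (norm := module) hmk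
      rw [this]
      exact smul_mem _ _ (neg_mem (sum_mem fun i _ => smul_mem _ _ (hvmem i)))
  obtain ⟨n, hn⟩ := hgood
  set t : ℂ := ((n : ℂ) + 1)⁻¹ with ht_def
  have htne : t ≠ 0 := by
    rw [ht_def]
    exact inv_ne_zero (by exact_mod_cast Nat.succ_ne_zero n)
  set St : X →L[ℂ] X := Sstar + t • S with hSt_def
  have hStA : St ∈ A := A.add_mem hSstarA (SMulMemClass.smul_mem _ hS)
  set g : Fin (r + 1) → X ⧸ Y :=
    Fin.snoc (fun i => Y.mkQ (St (y i))) (Y.mkQ (S y₀)) with hg_def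
  have hgind : LinearIndependent ℂ g := by
    rw [Fintype.linearIndependent_iff]
    intro d hd
    have hdzero : d = 0 := by
      by_contra hd0
      have hnorm : ‖d‖ ≠ 0 := norm_ne_zero_iff.2 hd0
      set e : Fin (r + 1) → ℂ := (‖d‖⁻¹ : ℂ) • d with he_def
      have he1 : ‖e‖ = 1 := by
        rw [he_def, norm_smul]
        simp [norm_inv, inv_mul_cancel₀ hnorm]
      have hbigd : (∑ i : Fin r, d i.castSucc • (Sstar (y i) + t • S (y i)))
          + d (Fin.last r) • S y₀ ∈ Y := by
        rw [← Submodule.Quotient.mk_eq_zero Y, ← Y.mkQ_apply]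
        rw [map_add, map_sum]
        have hterm : ∀ i : Fin r, Y.mkQ (d i.castSucc • (Sstar (y i) + t • S (y i)))
            = d i.castSucc • g i.castSucc := by
          intro i
          rw [map_smul]
          congr 1
          rw [hg_def, Fin.snoc_castSucc, hSt_def]
          simp
        have hlastterm : Y.mkQ (d (Fin.last r) • S y₀) = d (Fin.last r) • g (Fin.last r) := by
          rw [map_smul, hg_def, Fin.snoc_last]
        rw [Finset.sum_congr rfl fun i _ => hterm i, hlastterm]
        rw [← Fin.sum_univ_castSucc (f := fun i => d i • g i)]
        exact hd
      apply hn e he1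
      have : (∑ i : Fin r, e i.castSucc • (Sstar (y i) + t • S (y i)))
          + e (Fin.last r) • S y₀ = (‖d‖⁻¹ : ℂ) •
          ((∑ i : Fin r, d i.castSucc • (Sstar (y i) + t • S (y i)))
            + d (Fin.last r) • S y₀) := by
        rw [smul_add, Finset.smul_sum]
        congr 1
        · exact Finset.sum_congr rfl fun i _ => by rw [he_def]; simp [smul_smul, mul_assoc]
        · rw [he_def]; simp [smul_smul]
      rw [ht_def] at this
      rw [this]
      exact smul_mem _ _ hbigd
    intro i; rw [hdzero]; rfl
  have hgmem : ∀ i, g i ∈ DD Y St := by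
    intro i
    refine Fin.lastCases ?_ (fun i => ?_) i
    · have h1 : Y.mkQ (St y₀) = t • Y.mkQ (S y₀) := by
        rw [hSt_def]
        have h3 : (Sstar + t • S) y₀ = Sstar y₀ + t • S y₀ := by simp
        rw [h3, map_add, map_smul]
        have h4 : Y.mkQ (Sstar y₀) = 0 := by
          rw [Y.mkQ_apply, Submodule.Quotient.mk_eq_zero]; exact hy₀
        rw [h4, zero_add]
      have h2 : Y.mkQ (S y₀) = t⁻¹ • Y.mkQ (St y₀) := by
        rw [h1, smul_smul, inv_mul_cancel₀ htne, one_smul]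
      rw [hg_def, Fin.snoc_last, h2]
      exact smul_mem _ _ (mem_DD.2 ⟨y₀, hy₀Y, rfl⟩)
    · rw [hg_def, Fin.snoc_castSucc]
      exact mem_DD.2 ⟨y i, hyY i, rfl⟩
  haveI := hfin St hStA
  set g' : Fin (r + 1) → (DD Y St) := fun i => ⟨g i, hgmem i⟩ with hg'_def
  have hg'ind : LinearIndependent ℂ g' := by
    apply LinearIndependent.of_comp (DD Y St).subtype
    exact hgind
  have hcard := hg'ind.fintype_card_le_finrank
  rw [Fintype.card_fin] at hcard
  have := hmax St hStA
  omega

end AIHSAux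

theorem finitely_generated_commutative_almost_invariant_implies_invariant
    {X : Type*} [NormedAddCommGroup X] [NormedSpace ℂ X] [CompleteSpace X]
    (n : ℕ) (T : Fin n → (X →L[ℂ] X))
    (hcomm : ∀ i j, Commute (T i) (T j))
    (A : NonUnitalSubalgebra ℂ (X →L[ℂ] X))
    (hAc : IsClosed (A : Set (X →L[ℂ] X)))
    (hTA : ∀ i, T i ∈ A)
    (hAmin : ∀ B : NonUnitalSubalgebra ℂ (X →L[ℂ] X),
      IsClosed (B : Set (X →L[ℂ] X)) → (∀ i, T i ∈ B) → A ≤ B)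
    (h : ∃ Y : Submodule ℂ X, IsHalfSpace Y ∧
      ∀ S ∈ A, ∃ F : Submodule ℂ X, FiniteDimensional ℂ F ∧ Y.map (S : X →ₗ[ℂ] X) ≤ Y ⊔ F) :
    ∃ Z : Submodule ℂ X, IsHalfSpace Z ∧ ∀ S ∈ A, Z.map (S : X →ₗ[ℂ] X) ≤ Z := by
  classical
  open AIHSAux Submodule Module in
  obtain ⟨Y, ⟨hYc, hYdim, hYcod⟩, hai⟩ := h
  -- every element of A has finite-dimensional defect space
  have hfinDD : ∀ S ∈ A, FiniteDimensional ℂ (DD Y S) := by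
    intro S hS
    obtain ⟨F, hF, hmap⟩ := hai S hS
    have hle : DD Y S ≤ F.map Y.mkQ := by
      rintro v hv
      obtain ⟨y, hy, rfl⟩ := mem_DD.1 hv
      have hmem : S y ∈ Y ⊔ F := hmap (Submodule.mem_map_of_mem hy)
      obtain ⟨a, ha, b, hb, hab⟩ := Submodule.mem_sup.1 hmem
      refine ⟨b, hb, ?_⟩
      have h1 : Y.mkQ (S y) = Y.mkQ a + Y.mkQ b := by rw [← map_add, hab]
      have hza : Y.mkQ a = 0 := by
        rw [Y.mkQ_apply, Submodule.Quotient.mk_eq_zero]; exact ha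
      rw [h1, hza, zero_add]
    haveI : FiniteDimensional ℂ (F.map Y.mkQ) := Module.Finite.map F Y.mkQ
    exact Submodule.finiteDimensional_of_le hle
  -- uniform bound via Baire
  obtain ⟨m, hm⟩ := uniform_bound Y hYc A hAc hfinDD
  -- maximal defect rank element
  obtain ⟨Sstar, hSstarA, hSstarmax⟩ : ∃ Sstar ∈ A, ∀ S ∈ A,
      finrank ℂ (DD Y S) ≤ finrank ℂ (DD Y Sstar) := by
    set Jv : Set ℕ := {j | ∃ S ∈ A, finrank ℂ (DD Y S) = j} with hJv_def
    have hJvne : Jv.Nonempty := ⟨finrank ℂ (DD Y (0 : X →L[ℂ] X)), ⟨0, A.zero_mem, rfl⟩⟩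
    have hJvbdd : BddAbove Jv := ⟨m, by rintro j ⟨S, hS, rfl⟩; exact (hm S hS).2⟩
    obtain ⟨S0, hS0, hS0eq⟩ := Nat.sSup_mem hJvne hJvbdd
    exact ⟨S0, hS0, fun S hS => by rw [hS0eq]; exact le_csSup hJvbdd ⟨S, hS, rfl⟩⟩
  have key := fun (S : X →L[ℂ] X) (hS : S ∈ A) =>
    key_lemma Y hYc A hfinDD Sstar hSstarA hSstarmax S hS
  haveI hfinDDstar : FiniteDimensional ℂ (DD Y Sstar) := hfinDD Sstar hSstarA
  set M : Submodule ℂ X := (DD Y Sstar).comap Y.mkQ with hM_def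
  have hYM : Y ≤ M := by
    intro y hy
    show Y.mkQ y ∈ DD Y Sstar
    have : Y.mkQ y = 0 := by rw [Y.mkQ_apply, Submodule.Quotient.mk_eq_zero]; exact hy
    rw [this]; exact zero_mem _
  haveI : IsClosed (Y : Set X) := hYc
  have hMclosed : IsClosed (M : Set X) := by
    have hDDclosed : IsClosed ((DD Y Sstar : Set (X ⧸ Y))) :=
      Submodule.closed_of_finiteDimensional _
    have hcont : Continuous Y.mkQ := by
      refine AddMonoidHomClass.continuous_of_bound Y.mkQ 1 fun x => ?_
      rw [one_mul, Y.mkQ_apply]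
      exact Submodule.Quotient.norm_mk_le Y x
    have hset : (M : Set X) = Y.mkQ ⁻¹' (DD Y Sstar : Set (X ⧸ Y)) := rfl
    rw [hset]
    exact hDDclosed.preimage hcont
  set Z : Submodule ℂ X := M ⊓ ⨅ (S : {S : X →L[ℂ] X // S ∈ A}),
    (M.comap ((S.1 : X →L[ℂ] X) : X →ₗ[ℂ] X)) with hZ_def
  have hZmem : ∀ x : X, x ∈ Z ↔ x ∈ M ∧ ∀ S : {S : X →L[ℂ] X // S ∈ A}, S.1 x ∈ M := by
    intro x
    rw [hZ_def, Submodule.mem_inf, Submodule.mem_iInf]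
    exact Iff.rfl
  refine ⟨Z, ⟨?_, ?_, ?_⟩, ?_⟩
  · -- closed
    have hset : (Z : Set X) = (M : Set X) ∩
        ⋂ (S : {S : X →L[ℂ] X // S ∈ A}), ((S.1 : X →L[ℂ] X) ⁻¹' (M : Set X)) := by
      ext x
      simp only [SetLike.mem_coe, hZmem, Set.mem_inter_iff, Set.mem_iInter, Set.mem_preimage]
    rw [hset]
    exact hMclosed.inter (isClosed_iInter fun S => hMclosed.preimage S.1.continuous)
  · -- infinite dimension
    intro hZfin
    set Y₁ : Submodule ℂ X := Y ⊓ Y.comap ((Sstar : X →L[ℂ] X) : X →ₗ[ℂ] X) with hY₁_def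
    have hY₁Z : Y₁ ≤ Z := by
      intro x hx
      obtain ⟨hxY, hxS⟩ := Submodule.mem_inf.1 hx
      rw [hZmem]
      exact ⟨hYM hxY, fun S => key S.1 S.2 x hxY hxS⟩
    haveI : FiniteDimensional ℂ Y₁ := Submodule.finiteDimensional_of_le hY₁Z
    set f : Y →ₗ[ℂ] X ⧸ Y := Y.mkQ.comp ((Sstar : X →ₗ[ℂ] X).comp Y.subtype) with hf_def
    have hker : LinearMap.ker f = Y₁.comap Y.subtype := by
      ext x
      constructor
      · intro hx
        have : Y.mkQ (Sstar (x : X)) = 0 := hx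
        rw [Y.mkQ_apply, Submodule.Quotient.mk_eq_zero] at this
        exact Submodule.mem_comap.2 (Submodule.mem_inf.2 ⟨x.2, this⟩)
      · intro hx
        have h2 := (Submodule.mem_inf.1 (Submodule.mem_comap.1 hx)).2
        show Y.mkQ (Sstar (x : X)) = 0
        rw [Y.mkQ_apply, Submodule.Quotient.mk_eq_zero]
        exact h2
    haveI : FiniteDimensional ℂ (LinearMap.ker f) := by
      rw [hker]
      exact (Submodule.comapSubtypeEquivOfLe (inf_le_left :
        Y₁ ≤ Y)).symm.finiteDimensional
    haveI : FiniteDimensional ℂ (LinearMap.range f) := by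
      refine Submodule.finiteDimensional_of_le (show LinearMap.range f ≤ DD Y Sstar from ?_)
      rintro _ ⟨x, rfl⟩
      exact mem_DD.2 ⟨(x : X), x.2, rfl⟩
    have hrank : Module.rank ℂ Y < Cardinal.aleph0 := by
      rw [← Submodule.rank_quotient_add_rank (LinearMap.ker f)]
      exact Cardinal.add_lt_aleph0
        (by rw [f.quotKerEquivRange.rank_eq]; exact Module.rank_lt_aleph0 ℂ _)
        (Module.rank_lt_aleph0 ℂ _)
    exact hYdim (Module.rank_lt_aleph0_iff.1 hrank)
  · -- infinite codimension
    intro hq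
    have hZM : Z ≤ M := inf_le_left
    set f2 : (X ⧸ Z) →ₗ[ℂ] X ⧸ M := Submodule.mapQ Z M LinearMap.id (fun x hx => hZM hx)
      with hf2_def
    have hf2surj : Function.Surjective f2 := by
      intro w
      obtain ⟨x, rfl⟩ := M.mkQ_surjective w
      exact ⟨Z.mkQ x, by simp [hf2_def, Submodule.mkQ_apply, Submodule.mapQ_apply]⟩
    haveI : FiniteDimensional ℂ (X ⧸ M) := Module.Finite.of_surjective f2 hf2surj
    have hmapM : Submodule.map Y.mkQ M = DD Y Sstar := by
      rw [hM_def, Submodule.map_comap_eq, Submodule.range_mkQ, top_inf_eq]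
    haveI : FiniteDimensional ℂ ((X ⧸ Y) ⧸ Submodule.map Y.mkQ M) :=
      (Submodule.quotientQuotientEquivQuotient Y M hYM).symm.finiteDimensional
    haveI : FiniteDimensional ℂ (Submodule.map Y.mkQ M) := by
      rw [hmapM]; exact hfinDDstar
    have hrank2 : Module.rank ℂ (X ⧸ Y) < Cardinal.aleph0 := by
      rw [← Submodule.rank_quotient_add_rank (Submodule.map Y.mkQ M)]
      exact Cardinal.add_lt_aleph0 (Module.rank_lt_aleph0 ℂ _) (Module.rank_lt_aleph0 ℂ _)
    exact hYcod (Module.rank_lt_aleph0_iff.1 hrank2)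
  · -- invariance
    intro S hS
    rw [Submodule.map_le_iff_le_comap]
    intro x hx
    rw [hZmem] at hx
    obtain ⟨hxM, hxall⟩ := hx
    show S x ∈ Z
    rw [hZmem]
    refine ⟨hxall ⟨S, hS⟩, fun S' => ?_⟩
    have hmul := hxall ⟨(S'.1 * S : X →L[ℂ] X), A.mul_mem S'.2 hS⟩
    rwa [ContinuousLinearMap.mul_apply] at hmul
end
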